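/- arXiv:2401.00264 — 12 statements merged into one kernel-verified Lean document; each statement's English description precedes it below -/
import Mathlib

section
/- Under the panel binary choice model Y_t = 1{v_t ≤ z_t·β₀ + X_t·γ₀} (t = 1, …, T) together with partial stationarity of the composite errors, the true parameter θ₀ satisfies, for every c ∈ ℝ and all t, s ∈ {1, …, T}, the inequality P(Y_t = 1 and z_t·β₀ + X_t·γ₀ ≤ c) ≤ 1 − P(Y_s = 0 and z_s·β₀ + X_s·γ₀ ≥ c); equivalently, max_{t≤T} L_t(c; θ₀) ≤ min_{s≤T} U_s(c; θ₀) for every c ∈ ℝ, so that θ₀ belongs to the identified set Θ_I defined by these conditional moment inequalities. -/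
open MeasureTheory Matrix

/-- In the panel binary choice model `Y_t = 1{v_t ≤ z_t·β₀ + X_t·γ₀}`,
under partial stationarity of the composite errors `v_t` (conditional on the fixed
covariate realization `z`), the true parameter `θ₀ = (β₀, γ₀)` satisfies, for every
`c ∈ ℝ` and all periods `t, s`,
`P(Y_t = 1 ∧ z_t·β₀ + X_t·γ₀ ≤ c) ≤ 1 − P(Y_s = 0 ∧ z_s·β₀ + X_s·γ₀ ≥ c)`,
i.e. `θ₀` lies in the identified set defined by these moment inequalities. -/
theorem stmt_0
    {Ω : Type*} [MeasurableSpace Ω] (P : Measure Ω) [IsProbabilityMeasure P]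
    {T dz dx : ℕ}
    (z : Fin T → (Fin dz → ℝ))
    (v : Fin T → Ω → ℝ) (X : Fin T → Ω → (Fin dx → ℝ))
    (hv : ∀ t, Measurable (v t)) (hX : ∀ t, Measurable (X t))
    (β₀ : Fin dz → ℝ) (γ₀ : Fin dx → ℝ)
    (Y : Fin T → Ω → ℝ)
    (hY : ∀ t ω, Y t ω = if v t ω ≤ z t ⬝ᵥ β₀ + X t ω ⬝ᵥ γ₀ then 1 else 0)
    (hstat : ∀ t s : Fin T, P.map (v t) = P.map (v s)) :
    ∀ (c : ℝ) (t s : Fin T),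
      (P {ω | Y t ω = 1 ∧ z t ⬝ᵥ β₀ + X t ω ⬝ᵥ γ₀ ≤ c}).toReal
        ≤ 1 - (P {ω | Y s ω = 0 ∧ c ≤ z s ⬝ᵥ β₀ + X s ω ⬝ᵥ γ₀}).toReal := by
  intro c t s
  set A := {ω | Y t ω = 1 ∧ z t ⬝ᵥ β₀ + X t ω ⬝ᵥ γ₀ ≤ c}
  set B := {ω | Y s ω = 0 ∧ c ≤ z s ⬝ᵥ β₀ + X s ω ⬝ᵥ γ₀}
  have hA : A ⊆ {ω | v t ω ≤ c} := by
    intro ω hω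
    obtain ⟨h1, h2⟩ := hω
    have := hY t ω
    rw [h1] at this
    by_cases hc : v t ω ≤ z t ⬝ᵥ β₀ + X t ω ⬝ᵥ γ₀
    · exact le_trans hc h2
    · simp [hc] at this
  have hB : B ⊆ {ω | c < v s ω} := by
    intro ω hω
    obtain ⟨h1, h2⟩ := hω
    have := hY s ω
    rw [h1] at this
    by_cases hc : v s ω ≤ z s ⬝ᵥ β₀ + X s ω ⬝ᵥ γ₀
    · simp [hc] at this
    · exact lt_of_le_of_lt h2 (not_le.mp hc)
  have hmeas : MeasurableSet {ω | v s ω ≤ c} := (hv s) measurableSet_Iic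
  have heq : P {ω | v t ω ≤ c} = P {ω | v s ω ≤ c} := by
    have h1 : P {ω | v t ω ≤ c} = (P.map (v t)) (Set.Iic c) := by
      rw [Measure.map_apply (hv t) measurableSet_Iic]; rfl
    have h2 : P {ω | v s ω ≤ c} = (P.map (v s)) (Set.Iic c) := by
      rw [Measure.map_apply (hv s) measurableSet_Iic]; rfl
    rw [h1, h2, hstat t s]
  have hsum : P {ω | v s ω ≤ c} + P {ω | c < v s ω} = 1 := by
    have hc : {ω | c < v s ω} = {ω | v s ω ≤ c}ᶜ := by
      ext ω; simp [not_le]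
    rw [hc]
    rw [measure_add_measure_compl hmeas]; exact measure_univ
  have hPA : P A ≤ P {ω | v s ω ≤ c} := heq ▸ measure_mono hA
  have hPB : P B ≤ P {ω | c < v s ω} := measure_mono hB
  have hle : P A + P B ≤ 1 := by
    calc P A + P B ≤ P {ω | v s ω ≤ c} + P {ω | c < v s ω} := add_le_add hPA hPB
    _ = 1 := hsum
  have hAne : P A ≠ ⊤ := (measure_ne_top P A)
  have hBne : P B ≠ ⊤ := (measure_ne_top P B)
  have := ENNReal.toReal_mono (by norm_num) hle
  rw [ENNReal.toReal_add hAne hBne, ENNReal.toReal_one] at this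
  linarith
end

section
/- Suppose each endogenous covariate X_t takes values only in the finite set {x̄_1, …, x̄_K} ⊂ ℝ^{d_x}. If a parameter θ = (β, γ) satisfies max_{t≤T} L_t(c; θ) ≤ min_{s≤T} U_s(c; θ) for every c in the finite set 𝒞(θ) := {z_t·β + x̄_k·γ : t = 1, …, T, k = 1, …, K}, then it satisfies max_{t≤T} L_t(c; θ) ≤ min_{s≤T} U_s(c; θ) for every c ∈ ℝ; hence the identified set Θ_I coincides with the set Θ_I^disc defined by the finitely many restrictions at c ∈ 𝒞(θ). -/
open MeasureTheory Matrix

/-- When the endogenous covariates `X_t` take values only in the finite set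
`{x̄_1, …, x̄_K}`, a parameter `θ = (β, γ)` satisfying the moment inequalities
`max_t L_t(c; θ) ≤ min_s U_s(c; θ)` (stated pairwise in `t, s`) at every `c` in the finite
set `𝒞(θ) = {z_t·β + x̄_k·γ}` also satisfies them at every `c ∈ ℝ`; hence the identified
set coincides with the one defined by the finitely many restrictions. -/
theorem stmt_1
    {Ω : Type*} [MeasurableSpace Ω] (P : Measure Ω) [IsProbabilityMeasure P]
    {T dz dx K : ℕ}
    (z : Fin T → (Fin dz → ℝ))
    (Y : Fin T → Ω → ℝ) (X : Fin T → Ω → (Fin dx → ℝ))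
    (hYbin : ∀ t ω, Y t ω = 0 ∨ Y t ω = 1)
    (hYm : ∀ t, Measurable (Y t)) (hXm : ∀ t, Measurable (X t))
    (xbar : Fin K → (Fin dx → ℝ))
    (hsupp : ∀ t ω, ∃ k, X t ω = xbar k)
    (β : Fin dz → ℝ) (γ : Fin dx → ℝ)
    (hdisc : ∀ c : ℝ, (∃ (t : Fin T) (k : Fin K), c = z t ⬝ᵥ β + xbar k ⬝ᵥ γ) →
      ∀ t s : Fin T,
        (P {ω | Y t ω = 1 ∧ z t ⬝ᵥ β + X t ω ⬝ᵥ γ ≤ c}).toReal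
          ≤ 1 - (P {ω | Y s ω = 0 ∧ c ≤ z s ⬝ᵥ β + X s ω ⬝ᵥ γ}).toReal) :
    ∀ (c : ℝ) (t s : Fin T),
      (P {ω | Y t ω = 1 ∧ z t ⬝ᵥ β + X t ω ⬝ᵥ γ ≤ c}).toReal
        ≤ 1 - (P {ω | Y s ω = 0 ∧ c ≤ z s ⬝ᵥ β + X s ω ⬝ᵥ γ}).toReal := by
  intro c t s
  classical
  -- finite set of possible index values
  set S : Finset ℝ :=
    (Finset.univ : Finset (Fin T × Fin K)).image
      (fun p => z p.1 ⬝ᵥ β + xbar p.2 ⬝ᵥ γ) with hS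
  set S' : Finset ℝ := S.filter (fun a => a ≤ c) with hS'
  have hmemS : ∀ (t : Fin T) (ω : Ω), z t ⬝ᵥ β + X t ω ⬝ᵥ γ ∈ S := by
    intro t ω
    obtain ⟨k, hk⟩ := hsupp t ω
    simp only [hS, Finset.mem_image, Finset.mem_univ, true_and, hk]
    exact ⟨(t, k), rfl⟩
  by_cases hne : S'.Nonempty
  · set c' := S'.max' hne with hc'
    have hc'S : c' ∈ S' := S'.max'_mem hne
    have hc'c : c' ≤ c := (Finset.mem_filter.mp hc'S).2
    have hc'inS : c' ∈ S := (Finset.mem_filter.mp hc'S).1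
    obtain ⟨t₀, k₀, h₀⟩ := by
      simpa [hS] using hc'inS
    have hmem : ∃ (t : Fin T) (k : Fin K), c' = z t ⬝ᵥ β + xbar k ⬝ᵥ γ :=
      ⟨t₀, k₀, h₀.symm⟩
    have key := hdisc c' hmem t s
    have hseteq : {ω | Y t ω = 1 ∧ z t ⬝ᵥ β + X t ω ⬝ᵥ γ ≤ c}
        = {ω | Y t ω = 1 ∧ z t ⬝ᵥ β + X t ω ⬝ᵥ γ ≤ c'} := by
      ext ω
      constructor
      · rintro ⟨h1, h2⟩
        refine ⟨h1, ?_⟩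
        have : z t ⬝ᵥ β + X t ω ⬝ᵥ γ ∈ S' :=
          Finset.mem_filter.mpr ⟨hmemS t ω, h2⟩
        exact S'.le_max' _ this
      · rintro ⟨h1, h2⟩
        exact ⟨h1, h2.trans hc'c⟩
    have hsub : {ω | Y s ω = 0 ∧ c ≤ z s ⬝ᵥ β + X s ω ⬝ᵥ γ}
        ⊆ {ω | Y s ω = 0 ∧ c' ≤ z s ⬝ᵥ β + X s ω ⬝ᵥ γ} := by
      rintro ω ⟨h1, h2⟩
      exact ⟨h1, hc'c.trans h2⟩
    have hmono : (P {ω | Y s ω = 0 ∧ c ≤ z s ⬝ᵥ β + X s ω ⬝ᵥ γ}).toReal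
        ≤ (P {ω | Y s ω = 0 ∧ c' ≤ z s ⬝ᵥ β + X s ω ⬝ᵥ γ}).toReal :=
      ENNReal.toReal_mono (measure_ne_top P _) (measure_mono hsub)
    rw [hseteq]
    linarith
  · -- no index value is ≤ c, so LHS set is empty
    have hempty : {ω | Y t ω = 1 ∧ z t ⬝ᵥ β + X t ω ⬝ᵥ γ ≤ c} = (∅ : Set Ω) := by
      ext ω
      simp only [Set.mem_setOf_eq, Set.mem_empty_iff_false, iff_false]
      rintro ⟨_, h2⟩
      exact hne ⟨_, Finset.mem_filter.mpr ⟨hmemS t ω, h2⟩⟩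
    rw [hempty]
    simp only [measure_empty, ENNReal.toReal_zero]
    have h1 : (P {ω | Y s ω = 0 ∧ c ≤ z s ⬝ᵥ β + X s ω ⬝ᵥ γ}).toReal ≤ 1 := by
      have h2 := ENNReal.toReal_mono ENNReal.one_ne_top
        (prob_le_one (μ := P) (s := {ω | Y s ω = 0 ∧ c ≤ z s ⬝ᵥ β + X s ω ⬝ᵥ γ}))
      simpa using h2
    linarith
end

section
/- Sharpness of the identified set in the discrete case: suppose each X_t takes only finitely many values, and let θ = (β, γ) be any parameter satisfying max_{t≤T} L_t(c; θ) ≤ min_{s≤T} U_s(c; θ) for every c ∈ ℝ. Then there exist a probability space (Ω*, 𝓕*, P*) and random variables X* = (X*_1, …, X*_T) and v* = (v*_1, …, v*_T) on it such that: (i) X* has the same joint distribution as X = (X_1, …, X_T); (ii) the marginal distribution of v*_t under P* is the same for every t (so partial stationarity holds, with fixed effect α* ≡ 0); and (iii) for every x = (x_1, …, x_T) in the support of X (i.e. with P(X = x) > 0) and every y ∈ {0,1}^T, P*( 1{v*_t ≤ z_t·β + x_t·γ} = y_t for all t = 1, …, T │ X* = x ) = P( Y = y │ X = x ). In other words, the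 model with parameter θ and errors v* is observationally equivalent to the true data-generating process, so the identified set Θ_I^disc is sharp. -/
open MeasureTheory Matrix

section Stmt2AuxSection
open Set
noncomputable section

namespace Stmt2Aux

/-- uniform measure on (0,1) -/
def unif : Measure ℝ := volume.restrict (Set.Ioo 0 1)

instance : IsProbabilityMeasure unif := ⟨by simp [unif, Real.volume_Ioo]⟩

lemma unif_Iic (t : ℝ) : unif (Set.Iic t) = ENNReal.ofReal (min 1 (max 0 t)) := by
  rw [unif, Measure.restrict_apply measurableSet_Iic]
  rcases le_or_gt t 0 with h | h
  · have he : Set.Iic t ∩ Set.Ioo 0 1 = (∅ : Set ℝ) := by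
      ext u
      simp only [mem_inter_iff, mem_Iic, mem_Ioo, mem_empty_iff_false, iff_false, not_and]
      intro h1 h2 h3; linarith
    rw [he, measure_empty, max_eq_left h, min_comm, min_eq_left (by norm_num : (0:ℝ) ≤ 1)]
    simp
  · rcases le_or_gt 1 t with h1 | h1
    · have he : Set.Iic t ∩ Set.Ioo 0 1 = Set.Ioo 0 1 := by
        refine inter_eq_right.mpr ?_
        intro u hu; exact le_trans (le_of_lt hu.2) h1
      rw [he, Real.volume_Ioo]
      have : min 1 (max 0 t) = 1 := min_eq_left (le_max_of_le_right h1)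
      rw [this]; norm_num
    · have he : Set.Iic t ∩ Set.Ioo 0 1 = Set.Ioc 0 t := by
        ext u
        simp only [mem_inter_iff, mem_Iic, mem_Ioo, mem_Ioc]
        constructor
        · rintro ⟨hu, h0, _⟩; exact ⟨h0, hu⟩
        · rintro ⟨h0, hu⟩; exact ⟨hu, h0, lt_of_le_of_lt hu h1⟩
      rw [he, Real.volume_Ioc]
      have : min 1 (max 0 t) = t := by
        rw [max_eq_right h.le]; exact min_eq_right h1.le
      rw [this]; norm_num

/-- key finite tiling identity -/
lemma key_sum (s : Finset ℝ) (q : ℝ → ℝ) (hq : ∀ r, 0 ≤ q r) (a : ℝ) :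
    ∑ r ∈ s, min (q r) (max 0 (a - ∑ r' ∈ s.filter (· < r), q r'))
      = min (∑ r ∈ s, q r) (max 0 a) := by
  induction s using Finset.induction_on_max with
  | empty => simp
  | insert b s hb ih =>
      have hbs : b ∉ s := fun h => lt_irrefl b (hb b h)
      have hfb : (insert b s).filter (· < b) = s := by
        ext r
        simp only [Finset.mem_filter, Finset.mem_insert]
        constructor
        · rintro ⟨h1 | h1, h2⟩
          · exact absurd h2 (by simp [h1])
          · exact h1
        · intro h; exact ⟨Or.inr h, hb r h⟩
      have hfr : ∀ r ∈ s, (insert b s).filter (· < r) = s.filter (· < r) := by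
        intro r hr
        ext r'
        simp only [Finset.mem_filter, Finset.mem_insert]
        constructor
        · rintro ⟨h1 | h1, h2⟩
          · exact absurd (h2.trans (hb r hr)) (by simp [h1])
          · exact ⟨h1, h2⟩
        · rintro ⟨h1, h2⟩; exact ⟨Or.inr h1, h2⟩
      have h1 : ∑ r ∈ s, min (q r) (max 0 (a - ∑ r' ∈ (insert b s).filter (· < r), q r'))
          = ∑ r ∈ s, min (q r) (max 0 (a - ∑ r' ∈ s.filter (· < r), q r')) :=
        Finset.sum_congr rfl (fun r hr => by rw [hfr r hr])
      rw [Finset.sum_insert hbs, Finset.sum_insert hbs, hfb, h1, ih]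
      have hS : 0 ≤ ∑ r ∈ s, q r := Finset.sum_nonneg fun r _ => hq r
      have hqb := hq b
      generalize hSdef : (∑ r ∈ s, q r) = S at *
      rcases le_or_gt a S with hc | hc
      · have hx1 : max 0 (a - S) = 0 := max_eq_left (by linarith)
        rw [hx1, min_comm (q b) 0, min_eq_left hqb]
        rcases le_or_gt a 0 with h2 | h2
        · rw [max_eq_left h2]
          rw [min_eq_right hS, min_eq_right (by linarith)]
          try ring
        · rw [max_eq_right h2.le]
          rw [min_eq_right hc, min_eq_right (by linarith)]
          try ring
      · have h0a : 0 < a := lt_of_le_of_lt hS hc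
        rw [max_eq_right h0a.le, max_eq_right (by linarith : (0:ℝ) ≤ a - S)]
        rw [min_eq_left hc.le]
        rcases le_or_gt (q b) (a - S) with h3 | h3
        · rw [min_eq_left h3, min_eq_left (by linarith)]
          try ring
        · rw [min_eq_right h3.le, min_eq_right (by linarith)]
          try ring



lemma real_min_id (q l a : ℝ) (hq : 0 < q) :
    q * min 1 (max 0 ((a - l) / q)) = min q (max 0 (a - l)) := by
  rcases le_or_gt (a - l) 0 with hc | hc
  · rw [max_eq_left (div_nonpos_of_nonpos_of_nonneg hc hq.le), max_eq_left hc,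
      min_eq_right zero_le_one, min_eq_right hq.le]
    ring
  · rw [max_eq_right (div_pos hc hq).le, max_eq_right hc.le]
    rcases le_or_gt (a - l) q with h2 | h2
    · rw [min_eq_right ((div_le_one hq).mpr h2), min_eq_right h2]
      field_simp
    · rw [min_eq_left ((one_le_div hq).mpr h2.le), min_eq_left h2.le]
      ring

section DT

variable {Ω : Type*} [MeasurableSpace Ω] (P : Measure Ω) (Z : Ω → ℝ)

/-- lower CDF value `P(Z < r)` -/
def fL (r : ℝ) : ℝ := (P {ω | Z ω < r}).toReal

/-- atom mass `P(Z = r)` -/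
def fQ (r : ℝ) : ℝ := (P {ω | Z ω = r}).toReal

/-- the (randomized) distributional transform -/
def DT (p : Ω × ℝ) : ℝ := fL P Z (Z p.1) + p.2 * fQ P Z (Z p.1)

lemma fL_nonneg (r : ℝ) : 0 ≤ fL P Z r := ENNReal.toReal_nonneg

lemma fQ_nonneg (r : ℝ) : 0 ≤ fQ P Z r := ENNReal.toReal_nonneg

variable [IsFiniteMeasure P]

lemma fL_mono : Monotone (fL P Z) := by
  intro r r' h
  exact ENNReal.toReal_mono (measure_ne_top P _)
    (measure_mono (fun ω (hω : Z ω < r) => lt_of_lt_of_le hω h))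

lemma fUb_mono : Monotone (fun r => (P {ω | Z ω ≤ r}).toReal) := by
  intro r r' h
  exact ENNReal.toReal_mono (measure_ne_top P _)
    (measure_mono (fun ω (hω : Z ω ≤ r) => le_trans hω h))

lemma fL_add_fQ (hZ : Measurable Z) (r : ℝ) :
    fL P Z r + fQ P Z r = (P {ω | Z ω ≤ r}).toReal := by
  have hu : {ω | Z ω ≤ r} = {ω | Z ω < r} ∪ {ω | Z ω = r} := by
    ext ω; simp only [mem_setOf_eq, mem_union]; exact le_iff_lt_or_eq
  have hd : Disjoint {ω | Z ω < r} {ω | Z ω = r} := by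
    rw [Set.disjoint_left]; intro ω h1 h2; exact absurd h2 (ne_of_lt h1)
  rw [hu, measure_union hd (hZ (measurableSet_singleton r)),
    ENNReal.toReal_add (measure_ne_top P _) (measure_ne_top P _)]
  rfl

lemma DT_measurable (hZ : Measurable Z) : Measurable (DT P Z) := by
  have h1 : Measurable (fun ω => fL P Z (Z ω)) := (fL_mono P Z).measurable.comp hZ
  have h2 : Measurable (fun ω => fQ P Z (Z ω)) := by
    have : (fun ω => fQ P Z (Z ω))
        = fun ω => (P {ω' | Z ω' ≤ Z ω}).toReal - fL P Z (Z ω) := by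
      funext ω; rw [← fL_add_fQ P Z hZ (Z ω)]; ring
    rw [this]
    exact ((fUb_mono P Z).measurable.comp hZ).sub h1
  exact (h1.comp measurable_fst).add (measurable_snd.mul (h2.comp measurable_fst))

lemma DT_map [IsProbabilityMeasure P] (hZ : Measurable Z) (hfin : (Set.range Z).Finite) :
    (P.prod unif).map (DT P Z) = unif := by
  classical
  have hDTm : Measurable (DT P Z) := DT_measurable P Z hZ
  haveI : IsProbabilityMeasure ((P.prod unif).map (DT P Z)) :=
    Measure.isProbabilityMeasure_map hDTm.aemeasurable
  refine Measure.ext_of_Iic _ _ (fun a => ?_)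
  rw [Measure.map_apply hDTm measurableSet_Iic]
  set R : Finset ℝ := hfin.toFinset with hR
  have hmem : ∀ ω, Z ω ∈ R := fun ω => by
    rw [hR, Set.Finite.mem_toFinset]; exact mem_range_self ω
  have hpre : ∀ r : ℝ, Z ⁻¹' {r} = {ω | Z ω = r} := fun r => by ext ω; simp
  -- decomposition of the preimage
  have hdecomp : DT P Z ⁻¹' (Iic a)
      = ⋃ r ∈ R, (Z ⁻¹' {r}) ×ˢ {u : ℝ | fL P Z r + u * fQ P Z r ≤ a} := by
    ext p
    simp only [mem_preimage, mem_Iic, mem_iUnion, Set.mem_prod, mem_preimage,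
      mem_singleton_iff, mem_setOf_eq, exists_prop]
    constructor
    · intro h; exact ⟨Z p.1, hmem p.1, rfl, h⟩
    · rintro ⟨r, _, hzr, h⟩
      show DT P Z p ≤ a
      rw [DT, hzr]; exact h
  have hBmeas : ∀ r : ℝ, MeasurableSet {u : ℝ | fL P Z r + u * fQ P Z r ≤ a} := by
    intro r
    exact measurableSet_le (((measurable_id.mul_const _).const_add _)) measurable_const
  rw [hdecomp, measure_biUnion_finset ?_ (fun r _ => (hZ (measurableSet_singleton r)).prod (hBmeas r))]
  swap
  · intro r _ r' _ hne
    rw [Function.onFun]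
    rw [Set.disjoint_left]
    rintro ⟨ω, u⟩ ⟨h1, _⟩ ⟨h3, _⟩
    exact hne ((mem_singleton_iff.mp h1).symm.trans (mem_singleton_iff.mp h3))
  -- each term
  have hterm : ∀ r ∈ R, (P.prod unif) ((Z ⁻¹' {r}) ×ˢ {u : ℝ | fL P Z r + u * fQ P Z r ≤ a})
      = ENNReal.ofReal (min (fQ P Z r) (max 0 (a - fL P Z r))) := by
    intro r _
    rw [Measure.prod_prod]
    have hPz : P (Z ⁻¹' {r}) = ENNReal.ofReal (fQ P Z r) := by
      rw [hpre r, fQ, ENNReal.ofReal_toReal (measure_ne_top P _)]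
    rcases eq_or_lt_of_le (fQ_nonneg P Z r) with h0 | hpos
    · have hz : P (Z ⁻¹' {r}) = 0 := by
        rw [hPz, ← h0, ENNReal.ofReal_zero]
      rw [hz, zero_mul, min_eq_left (h0 ▸ le_max_left 0 (a - fL P Z r)), ← h0,
        ENNReal.ofReal_zero]
    · have hset : {u : ℝ | fL P Z r + u * fQ P Z r ≤ a} = Iic ((a - fL P Z r) / fQ P Z r) := by
        ext u
        simp only [mem_setOf_eq, mem_Iic, le_div_iff₀ hpos]
        constructor <;> intro h <;> linarith
      rw [hset, unif_Iic, hPz, ← ENNReal.ofReal_mul (fQ_nonneg P Z r)]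
      congr 1
      exact real_min_id (fQ P Z r) (fL P Z r) a hpos
  rw [Finset.sum_congr rfl hterm]
  -- rewrite fL as partial sums
  have hdisjZ : ∀ (s : Finset ℝ), (↑s : Set ℝ).PairwiseDisjoint (fun r' => Z ⁻¹' {r'}) := by
    intro s r1 _ r2 _ hne
    rw [Function.onFun, Set.disjoint_left]
    intro ω h1 h2
    exact hne ((mem_singleton_iff.mp h1).symm.trans (mem_singleton_iff.mp h2))
  have hfLsum : ∀ r ∈ R, fL P Z r = ∑ r' ∈ R.filter (· < r), fQ P Z r' := by
    intro r _
    have hu : {ω | Z ω < r} = ⋃ r' ∈ R.filter (· < r), Z ⁻¹' {r'} := by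
      ext ω
      simp only [mem_setOf_eq, mem_iUnion, Finset.mem_filter, mem_preimage,
        mem_singleton_iff, exists_prop]
      constructor
      · intro h; exact ⟨Z ω, ⟨hmem ω, h⟩, rfl⟩
      · rintro ⟨r', ⟨_, hr'⟩, hz⟩; rw [hz]; exact hr'
    rw [fL, hu, measure_biUnion_finset (hdisjZ _) (fun r' _ => hZ (measurableSet_singleton r')),
      ENNReal.toReal_sum (fun r' _ => measure_ne_top P _)]
    exact Finset.sum_congr rfl (fun r' _ => by rw [fQ, hpre r'])
  have hsum1 : ∑ r ∈ R, fQ P Z r = 1 := by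
    have hu : (univ : Set Ω) = ⋃ r ∈ R, Z ⁻¹' {r} := by
      ext ω
      simp only [mem_univ, mem_iUnion, mem_preimage, mem_singleton_iff, exists_prop, true_iff]
      exact ⟨Z ω, hmem ω, rfl⟩
    have := measure_biUnion_finset (μ := P) (hdisjZ R)
      (fun r _ => hZ (measurableSet_singleton r))
    rw [← hu, measure_univ] at this
    have h2 : ∑ r ∈ R, fQ P Z r = (∑ r ∈ R, P (Z ⁻¹' {r})).toReal := by
      rw [ENNReal.toReal_sum (fun r _ => measure_ne_top P _)]
      exact Finset.sum_congr rfl (fun r _ => by rw [fQ, hpre r])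
    rw [h2, ← this]
    simp
  calc ∑ r ∈ R, ENNReal.ofReal (min (fQ P Z r) (max 0 (a - fL P Z r)))
      = ∑ r ∈ R, ENNReal.ofReal
          (min (fQ P Z r) (max 0 (a - ∑ r' ∈ R.filter (· < r), fQ P Z r'))) := by
        exact Finset.sum_congr rfl (fun r hr => by rw [hfLsum r hr])
    _ = ENNReal.ofReal (∑ r ∈ R,
          min (fQ P Z r) (max 0 (a - ∑ r' ∈ R.filter (· < r), fQ P Z r'))) := by
        rw [ENNReal.ofReal_sum_of_nonneg]
        intro r _
        exact le_min (fQ_nonneg P Z r) (le_max_left _ _)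
    _ = ENNReal.ofReal (min (∑ r ∈ R, fQ P Z r) (max 0 a)) := by
        rw [key_sum R (fQ P Z) (fQ_nonneg P Z) a]
    _ = unif (Iic a) := by rw [hsum1, unif_Iic, min_comm]

end DT

section Construction

variable {Ω : Type*} [MeasurableSpace Ω]

lemma construction (P : Measure Ω) [IsProbabilityMeasure P]
    {T dz dx : ℕ} (hT : 0 < T)
    (z : Fin T → (Fin dz → ℝ))
    (Y : Fin T → Ω → Bool) (X : Fin T → Ω → (Fin dx → ℝ))
    (hYm : ∀ t, Measurable (Y t)) (hXm : ∀ t, Measurable (X t))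
    (hfin : ∀ t, (Set.range (X t)).Finite)
    (β : Fin dz → ℝ) (γ : Fin dx → ℝ)
    (hineq : ∀ (c : ℝ) (t s : Fin T),
      (P {ω | Y t ω = true ∧ z t ⬝ᵥ β + X t ω ⬝ᵥ γ ≤ c}).toReal
        ≤ 1 - (P {ω | Y s ω = false ∧ c ≤ z s ⬝ᵥ β + X s ω ⬝ᵥ γ}).toReal) :
    ∃ (v' : Fin T → Ω × ℝ → ℝ),
      (∀ t, Measurable (v' t)) ∧
      (∀ t s : Fin T, (P.prod unif).map (v' t) = (P.prod unif).map (v' s)) ∧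
      (∀ (x : Fin T → (Fin dx → ℝ)) (y : Fin T → Bool),
        (P.prod unif) {p : Ω × ℝ |
            (∀ t, (v' t p ≤ z t ⬝ᵥ β + x t ⬝ᵥ γ ↔ y t = true)) ∧ (fun t => X t p.1) = x}
          = P {ω | (∀ t, Y t ω = y t) ∧ (fun t => X t ω) = x}) := by
  classical
  haveI hTne : Nonempty (Fin T) := ⟨⟨0, hT⟩⟩
  have hΩne : Nonempty Ω := by
    by_contra h
    rw [not_nonempty_iff] at h
    have h0 : P univ = 0 := by
      rw [Set.univ_eq_empty_iff.mpr h, measure_empty]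
    rw [measure_univ] at h0
    exact one_ne_zero h0
  -- the index process
  set idx : Fin T → Ω → ℝ := fun t ω => z t ⬝ᵥ β + X t ω ⬝ᵥ γ with hidx
  have hidxm : ∀ t, Measurable (idx t) := by
    intro t
    apply Measurable.const_add
    have : (fun ω => X t ω ⬝ᵥ γ) = fun ω => ∑ i, X t ω i * γ i := by
      funext ω; rfl
    rw [this]
    exact Finset.measurable_sum _ (fun i _ => ((measurable_pi_apply i).comp (hXm t)).mul_const (γ i))
  have hfinidx : ∀ t, (Set.range (idx t)).Finite := by
    intro t
    apply ((hfin t).image (fun v => z t ⬝ᵥ β + v ⬝ᵥ γ)).subset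
    rintro _ ⟨ω, rfl⟩
    exact Set.mem_image_of_mem _ (Set.mem_range_self ω)
  -- the finite set of possible index values
  set D : Finset ℝ := Finset.univ.biUnion (fun t => (hfinidx t).toFinset) with hD
  have hidxD : ∀ t ω, idx t ω ∈ D := by
    intro t ω
    rw [hD]
    exact Finset.mem_biUnion.mpr ⟨t, Finset.mem_univ t,
      (hfinidx t).mem_toFinset.mpr (Set.mem_range_self ω)⟩
  have hDne : D.Nonempty :=
    ⟨idx (Classical.arbitrary _) (Classical.arbitrary _), hidxD _ _⟩
  set minD := D.min' hDne with hminD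
  set maxD := D.max' hDne with hmaxD
  set M := maxD + 2 with hM
  have hminmax : minD ≤ maxD := D.min'_le _ (D.max'_mem hDne)
  -- the encoded process
  set Z : Fin T → Ω → ℝ := fun t ω =>
    if Y t ω = true then Real.arctan (idx t ω) else Real.pi + Real.arctan (idx t ω) with hZ
  have hZm : ∀ t, Measurable (Z t) := by
    intro t
    apply Measurable.ite ((hYm t) (by trivial : MeasurableSet {true}))
    · exact Real.continuous_arctan.measurable.comp (hidxm t)
    · exact (Real.continuous_arctan.measurable.comp (hidxm t)).const_add Real.pi
  have hZfin : ∀ t, (Set.range (Z t)).Finite := by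
    intro t
    apply Set.Finite.subset (((hfinidx t).image Real.arctan).union
      ((hfinidx t).image (fun c => Real.pi + Real.arctan c)))
    rintro _ ⟨ω, rfl⟩
    by_cases h : Y t ω = true
    · exact Or.inl ⟨idx t ω, Set.mem_range_self ω, by rw [hZ]; simp [h]⟩
    · exact Or.inr ⟨idx t ω, Set.mem_range_self ω, by rw [hZ]; simp [h]⟩
  -- L and U functions
  set Lt : Fin T → ℝ → ℝ := fun t c => (P {ω | Y t ω = true ∧ idx t ω ≤ c}).toReal with hLt
  set Ut : Fin T → ℝ → ℝ := fun t c => 1 - (P {ω | Y t ω = false ∧ c ≤ idx t ω}).toReal with hUt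
  set Lb : ℝ → ℝ := fun c => Finset.univ.sup' Finset.univ_nonempty (fun t => Lt t c) with hLb
  have hLtmono : ∀ t, Monotone (Lt t) := by
    intro t c c' h
    exact ENNReal.toReal_mono (measure_ne_top P _)
      (measure_mono (fun ω hω => ⟨hω.1, hω.2.trans h⟩))
  have hLbmono : Monotone Lb := by
    intro c c' h
    exact Finset.sup'_le _ _ (fun t _ =>
      (hLtmono t h).trans (Finset.le_sup' (fun t => Lt t c') (Finset.mem_univ t)))
  have hLtLb : ∀ t c, Lt t c ≤ Lb c := fun t c => Finset.le_sup' (fun t => Lt t c) (Finset.mem_univ t)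
  have hLbUt : ∀ c t, Lb c ≤ Ut t c := fun c t => Finset.sup'_le _ _ (fun t' _ => hineq c t' t)
  -- the quantile-type function
  set G : ℝ → ℝ := fun w => sInf {x | (w ≤ Lb x ∨ M ≤ x) ∧ minD ≤ x} with hG
  have hGsetne : ∀ w : ℝ, {x | (w ≤ Lb x ∨ M ≤ x) ∧ minD ≤ x}.Nonempty := by
    intro w
    exact ⟨M, Or.inr le_rfl, by rw [hM]; linarith⟩
  have hGbdd : ∀ w : ℝ, BddBelow {x | (w ≤ Lb x ∨ M ≤ x) ∧ minD ≤ x} :=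
    fun w => ⟨minD, fun x hx => hx.2⟩
  have hGmono : Monotone G := by
    intro w w' h
    apply csInf_le_csInf (hGbdd w) (hGsetne w')
    rintro x ⟨h1 | h1, h2⟩
    · exact ⟨Or.inl (h.trans h1), h2⟩
    · exact ⟨Or.inr h1, h2⟩
  have hGm : Measurable G := hGmono.measurable
  -- the constructed errors
  refine ⟨fun t p => G (DT P (Z t) p), fun t => hGm.comp (DT_measurable P (Z t) (hZm t)), ?_, ?_⟩
  · intro t s
    show Measure.map (G ∘ DT P (Z t)) (P.prod unif)
        = Measure.map (G ∘ DT P (Z s)) (P.prod unif)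
    rw [← Measure.map_map hGm (DT_measurable P (Z t) (hZm t)),
      ← Measure.map_map hGm (DT_measurable P (Z s) (hZm s)),
      DT_map P (Z t) (hZm t) (hZfin t), DT_map P (Z s) (hZm s) (hZfin s)]
  · intro x y
    show (P.prod unif) {p : Ω × ℝ |
        (∀ t, (G (DT P (Z t) p) ≤ z t ⬝ᵥ β + x t ⬝ᵥ γ ↔ y t = true)) ∧ (fun t => X t p.1) = x}
      = P {ω | (∀ t, Y t ω = y t) ∧ (fun t => X t ω) = x}
    -- pointwise correctness off a null set
    have hpoint : ∀ (t : Fin T) (ω : Ω) (u : ℝ), 0 < u → u < 1 →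
        P {ω' | Z t ω' = Z t ω} ≠ 0 →
        (G (DT P (Z t) (ω, u)) ≤ idx t ω ↔ Y t ω = true) := by
      intro t ω u hu0 hu1 hq0
      have hfQeq : fQ P (Z t) (Z t ω) = (P {ω' | Z t ω' = Z t ω}).toReal := rfl
      have hqpos : 0 < fQ P (Z t) (Z t ω) := by
        rw [hfQeq]; exact ENNReal.toReal_pos hq0 (measure_ne_top P _)
      have hDTeq : DT P (Z t) (ω, u) = fL P (Z t) (Z t ω) + u * fQ P (Z t) (Z t ω) := rfl
      cases hY : Y t ω with
      | true =>
        have hZω : Z t ω = Real.arctan (idx t ω) := by rw [hZ]; simp [hY]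
        have hsets : {ω' | Z t ω' ≤ Z t ω} = {ω' | Y t ω' = true ∧ idx t ω' ≤ idx t ω} := by
          ext ω'
          simp only [mem_setOf_eq]
          cases hY' : Y t ω' with
          | true =>
            have hZω' : Z t ω' = Real.arctan (idx t ω') := by rw [hZ]; simp [hY']
            rw [hZω', hZω, Real.arctan_strictMono.le_iff_le]
            simp
          | false =>
            have hZω' : Z t ω' = Real.pi + Real.arctan (idx t ω') := by rw [hZ]; simp [hY']
            rw [hZω', hZω]
            have h1 := Real.arctan_lt_pi_div_two (idx t ω)
            have h2 := Real.neg_pi_div_two_lt_arctan (idx t ω')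
            have h3 := Real.pi_pos
            constructor
            · intro h; linarith
            · rintro ⟨h, -⟩; exact absurd h (by simp)
        have hWle : DT P (Z t) (ω, u) ≤ Lt t (idx t ω) := by
          have hmul : u * fQ P (Z t) (Z t ω) ≤ fQ P (Z t) (Z t ω) :=
            mul_le_of_le_one_left hqpos.le hu1.le
          have h1 : DT P (Z t) (ω, u) ≤ fL P (Z t) (Z t ω) + fQ P (Z t) (Z t ω) := by
            rw [hDTeq]; linarith
          rw [fL_add_fQ P (Z t) (hZm t) (Z t ω), hsets] at h1
          exact h1
        have hmem : idx t ω ∈ {x' | (DT P (Z t) (ω, u) ≤ Lb x' ∨ M ≤ x') ∧ minD ≤ x'} :=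
          ⟨Or.inl (hWle.trans (hLtLb t (idx t ω))), D.min'_le _ (hidxD t ω)⟩
        exact ⟨fun _ => rfl, fun _ => csInf_le (hGbdd _) hmem⟩
      | false =>
        have hZω : Z t ω = Real.pi + Real.arctan (idx t ω) := by rw [hZ]; simp [hY]
        have hsets : {ω' | Z t ω' < Z t ω}
            = {ω' | Y t ω' = false ∧ idx t ω ≤ idx t ω'}ᶜ := by
          ext ω'
          simp only [mem_setOf_eq, mem_compl_iff, not_and, not_le]
          cases hY' : Y t ω' with
          | true =>
            have hZω' : Z t ω' = Real.arctan (idx t ω') := by rw [hZ]; simp [hY']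
            rw [hZω', hZω]
            have h1 := Real.arctan_lt_pi_div_two (idx t ω')
            have h2 := Real.neg_pi_div_two_lt_arctan (idx t ω)
            constructor
            · intro _ h; exact absurd h (by simp)
            · intro _; linarith
          | false =>
            have hZω' : Z t ω' = Real.pi + Real.arctan (idx t ω') := by rw [hZ]; simp [hY']
            rw [hZω', hZω]
            constructor
            · intro h _
              exact Real.arctan_strictMono.lt_iff_lt.mp (by linarith)
            · intro h
              have := Real.arctan_strictMono (h rfl)
              linarith
        have hSmeas : MeasurableSet {ω' | Y t ω' = false ∧ idx t ω ≤ idx t ω'} := by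
          have : {ω' | Y t ω' = false ∧ idx t ω ≤ idx t ω'}
              = (Y t ⁻¹' {false}) ∩ {ω' | idx t ω ≤ idx t ω'} := by
            ext ω'; simp [Set.mem_inter_iff]
          rw [this]
          exact ((hYm t) (by trivial : MeasurableSet {false})).inter
            (measurableSet_le measurable_const (hidxm t))
        have hfLeq : fL P (Z t) (Z t ω) = Ut t (idx t ω) := by
          have h1 : fL P (Z t) (Z t ω) = (P {ω' | Z t ω' < Z t ω}).toReal := rfl
          rw [h1, hsets, measure_compl hSmeas (measure_ne_top P _), measure_univ,
            ENNReal.toReal_sub_of_le prob_le_one ENNReal.one_ne_top, ENNReal.toReal_one]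
        obtain ⟨δ, hδ0, hδ1, hgap⟩ : ∃ δ : ℝ, 0 < δ ∧ δ ≤ 1 ∧
            ∀ d ∈ D, d ≤ idx t ω ∨ idx t ω + δ < d := by
          by_cases hS : (D.filter (fun d => idx t ω < d)).Nonempty
          · set m' := (D.filter (fun d => idx t ω < d)).min' hS with hm'
            have hmmem := Finset.min'_mem _ hS
            have hmgt : idx t ω < m' := (Finset.mem_filter.mp hmmem).2
            set δ := min 1 ((m' - idx t ω)/2) with hδ
            have hδle : δ ≤ (m' - idx t ω)/2 := min_le_right _ _
            have hδle1 : δ ≤ 1 := min_le_left _ _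
            refine ⟨δ, lt_min one_pos (half_pos (by linarith)), hδle1, ?_⟩
            intro d hd
            by_cases hdc : d ≤ idx t ω
            · exact Or.inl hdc
            · right
              have hdm : m' ≤ d :=
                Finset.min'_le _ _ (Finset.mem_filter.mpr ⟨hd, lt_of_not_ge hdc⟩)
              clear_value δ m'
              have h1 : idx t ω + δ ≤ idx t ω + (m' - idx t ω) / 2 :=
                add_le_add_right hδle _
              have h2 : idx t ω + (m' - idx t ω) / 2 < m' := by
                generalize hgen : idx t ω = c at hmgt ⊢
                linarith only [hmgt]
              exact lt_of_le_of_lt h1 (lt_of_lt_of_le h2 hdm)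
          · refine ⟨1, one_pos, le_rfl, fun d hd => Or.inl ?_⟩
            by_contra hlt
            exact hS ⟨d, Finset.mem_filter.mpr ⟨hd, lt_of_not_ge hlt⟩⟩
        have hLbgap : Lb (idx t ω + δ) ≤ Ut t (idx t ω) := by
          apply Finset.sup'_le
          intro t' _
          have heq : Lt t' (idx t ω + δ) = Lt t' (idx t ω) := by
            have hseq : {ω' | Y t' ω' = true ∧ idx t' ω' ≤ idx t ω + δ}
                = {ω' | Y t' ω' = true ∧ idx t' ω' ≤ idx t ω} := by
              ext ω'
              simp only [mem_setOf_eq, and_congr_right_iff]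
              intro _
              constructor
              · intro h
                rcases hgap (idx t' ω') (hidxD t' ω') with h' | h'
                · exact h'
                · linarith
              · intro h; linarith
            show (P {ω' | Y t' ω' = true ∧ idx t' ω' ≤ idx t ω + δ}).toReal
              = (P {ω' | Y t' ω' = true ∧ idx t' ω' ≤ idx t ω}).toReal
            rw [hseq]
          rw [heq]
          exact hineq (idx t ω) t' t
        have hWgt : Ut t (idx t ω) < DT P (Z t) (ω, u) := by
          rw [hDTeq, ← hfLeq]
          have : 0 < u * fQ P (Z t) (Z t ω) := mul_pos hu0 hqpos
          linarith
        have hlow : ∀ x' ∈ {x' | (DT P (Z t) (ω, u) ≤ Lb x' ∨ M ≤ x') ∧ minD ≤ x'},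
            idx t ω + δ ≤ x' := by
          rintro x' ⟨h1 | h1, -⟩
          · by_contra hlt
            push_neg at hlt
            have h2 : Lb x' ≤ Lb (idx t ω + δ) := hLbmono hlt.le
            linarith
          · have hc0 : idx t ω ≤ maxD := D.le_max' _ (hidxD t ω)
            rw [hM] at h1
            linarith
        have hGge : idx t ω + δ ≤ G (DT P (Z t) (ω, u)) := le_csInf (hGsetne _) hlow
        constructor
        · intro h; exact absurd h (not_le.mpr (by linarith))
        · intro h; exact absurd h (by simp)
    -- the bad (null) set
    have hbadΩ : ∀ t : Fin T, P {ω | P {ω' | Z t ω' = Z t ω} = 0} = 0 := by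
      intro t
      have hsub : {ω | P {ω' | Z t ω' = Z t ω} = 0}
          ⊆ ⋃ r ∈ (hZfin t).toFinset.filter (fun r => P (Z t ⁻¹' {r}) = 0), Z t ⁻¹' {r} := by
        intro ω hω
        refine Set.mem_iUnion₂.mpr ⟨Z t ω, Finset.mem_filter.mpr
          ⟨(hZfin t).mem_toFinset.mpr (Set.mem_range_self ω), ?_⟩, rfl⟩
        have hpre : Z t ⁻¹' {Z t ω} = {ω' | Z t ω' = Z t ω} := by ext ω'; simp
        rw [hpre]
        exact hω
      refine measure_mono_null hsub (le_antisymm ((measure_biUnion_finset_le _ _).trans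
        (le_of_eq (Finset.sum_eq_zero (fun r hr => (Finset.mem_filter.mp hr).2)))) (zero_le))
    set bad : Set (Ω × ℝ) :=
      (({ω | ∃ t, P {ω' | Z t ω' = Z t ω} = 0} : Set Ω) ×ˢ (univ : Set ℝ))
        ∪ ((univ : Set Ω) ×ˢ (Ioo (0:ℝ) 1)ᶜ) with hbadset
    have hbadnull : (P.prod unif) bad = 0 := by
      apply measure_union_null
      · have h0 : P {ω | ∃ t, P {ω' | Z t ω' = Z t ω} = 0} = 0 := by
          have hu : {ω | ∃ t, P {ω' | Z t ω' = Z t ω} = 0}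
              = ⋃ t, {ω | P {ω' | Z t ω' = Z t ω} = 0} := by
            ext ω; simp only [mem_setOf_eq, mem_iUnion]
          rw [hu]
          exact measure_iUnion_null (fun t => hbadΩ t)
        rw [Measure.prod_prod, h0, zero_mul]
      · have h1 : unif (Ioo (0:ℝ) 1)ᶜ = 0 := by
          rw [unif, Measure.restrict_apply measurableSet_Ioo.compl, compl_inter_self]
          exact measure_empty
        rw [Measure.prod_prod, h1, mul_zero]
    have hseteq : {p : Ω × ℝ |
          (∀ t, (G (DT P (Z t) p) ≤ z t ⬝ᵥ β + x t ⬝ᵥ γ ↔ y t = true)) ∧ (fun t => X t p.1) = x}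
        =ᵐ[P.prod unif]
          (({ω | (∀ t, Y t ω = y t) ∧ (fun t => X t ω) = x} : Set Ω) ×ˢ (univ : Set ℝ)) := by
      rw [Filter.eventuallyEq_set]
      refine Filter.eventually_of_mem (compl_mem_ae_iff.mpr hbadnull) ?_
      rintro ⟨ω, u⟩ hp
      simp only [hbadset, mem_compl_iff, mem_union, Set.mem_prod, mem_setOf_eq, mem_univ,
        and_true, true_and, not_or, not_exists, not_not] at hp
      obtain ⟨hp1, hu⟩ := hp
      simp only [Set.mem_setOf_eq, Set.mem_prod, mem_univ, and_true]
      by_cases hx : (fun t => X t ω) = x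
      · simp only [hx, and_true]
        have hiff : ∀ t, (G (DT P (Z t) (ω, u)) ≤ z t ⬝ᵥ β + x t ⬝ᵥ γ ↔ Y t ω = true) := by
          intro t
          have hth : z t ⬝ᵥ β + x t ⬝ᵥ γ = idx t ω := by
            rw [← congrFun hx t]
          rw [hth]
          exact hpoint t ω u hu.1 hu.2 (hp1 t)
        have hbool : ∀ a b : Bool, ((a = true) ↔ (b = true)) → a = b := by decide
        constructor
        · intro h t
          exact hbool _ _ ((hiff t).symm.trans (h t))
        · intro h t
          rw [hiff t, h t]
      · simp only [hx, and_false]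
    rw [measure_congr hseteq, Measure.prod_prod, measure_univ, mul_one]


end Construction

lemma subsingleton_measure_eq {α : Type*} [MeasurableSpace α] [Subsingleton α]
    (μ ν : Measure α) (hμ : IsProbabilityMeasure μ) (hν : IsProbabilityMeasure ν) : μ = ν := by
  ext s _
  rcases s.eq_empty_or_nonempty with rfl | hne
  · simp
  · have hsu : s = univ := by
      apply Set.eq_univ_iff_forall.mpr
      intro a
      obtain ⟨b, hb⟩ := hne
      rwa [Subsingleton.elim a b]
    rw [hsu, hμ.measure_univ, hν.measure_univ]

end Stmt2Aux
end
end Stmt2AuxSection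

open Stmt2Aux

/-- Sharpness of the identified set in the discrete case. If each `X_t`
takes only finitely many values and `θ = (β, γ)` satisfies all the conditional moment
inequalities, then there exist a probability space `(Ω', P')` and random variables
`X'`, `v'` such that: (i) `X' = (X'_1, …, X'_T)` has the same joint distribution as
`X`; (ii) every `v'_t` has the same marginal distribution (partial stationarity, with
fixed effect `α* ≡ 0`); (iii) for every `x` in the support of `X` and every
`y ∈ {0,1}^T`, `P'(1{v'_t ≤ z_t·β + x_t·γ} = y_t ∀t │ X' = x) = P(Y = y │ X = x)`. -/
theorem stmt_2
    {Ω : Type*} [MeasurableSpace Ω] (P : Measure Ω) [IsProbabilityMeasure P]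
    {T dz dx : ℕ}
    (z : Fin T → (Fin dz → ℝ))
    (Y : Fin T → Ω → Bool) (X : Fin T → Ω → (Fin dx → ℝ))
    (hYm : ∀ t, Measurable (Y t)) (hXm : ∀ t, Measurable (X t))
    (hfin : ∀ t, (Set.range (X t)).Finite)
    (β : Fin dz → ℝ) (γ : Fin dx → ℝ)
    (hineq : ∀ (c : ℝ) (t s : Fin T),
      (P {ω | Y t ω = true ∧ z t ⬝ᵥ β + X t ω ⬝ᵥ γ ≤ c}).toReal
        ≤ 1 - (P {ω | Y s ω = false ∧ c ≤ z s ⬝ᵥ β + X s ω ⬝ᵥ γ}).toReal) :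
    ∃ (Ω' : Type) (_ : MeasurableSpace Ω') (P' : Measure Ω')
      (X' : Fin T → Ω' → (Fin dx → ℝ)) (v' : Fin T → Ω' → ℝ),
      IsProbabilityMeasure P' ∧
      (∀ t, Measurable (X' t)) ∧ (∀ t, Measurable (v' t)) ∧
      -- (i) X' has the same joint distribution as X
      P'.map (fun ω t => X' t ω) = P.map (fun ω t => X t ω) ∧
      -- (ii) partial stationarity: the marginal law of v'_t is the same for all t
      (∀ t s : Fin T, P'.map (v' t) = P'.map (v' s)) ∧
      -- (iii) observational equivalence of the conditional choice probabilities
      (∀ x : Fin T → (Fin dx → ℝ), 0 < P {ω | (fun t => X t ω) = x} →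
        ∀ y : Fin T → Bool,
          (P' {ω | (∀ t, (v' t ω ≤ z t ⬝ᵥ β + x t ⬝ᵥ γ ↔ y t = true)) ∧
              (fun t => X' t ω) = x}).toReal
            / (P' {ω | (fun t => X' t ω) = x}).toReal
          = (P {ω | (∀ t, Y t ω = y t) ∧ (fun t => X t ω) = x}).toReal
            / (P {ω | (fun t => X t ω) = x}).toReal) := by
  classical
  rcases Nat.eq_zero_or_pos T with hT0 | hT
  · -- degenerate case T = 0
    subst hT0
    haveI hsub : Subsingleton (Fin 0 → Fin dx → ℝ) := ⟨fun a b => funext fun i => i.elim0⟩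
    refine ⟨PUnit, inferInstance, Measure.dirac PUnit.unit,
      fun t => t.elim0, fun t => t.elim0, inferInstance,
      fun t => t.elim0, fun t => t.elim0, ?_, fun t => t.elim0, ?_⟩
    · exact subsingleton_measure_eq _ _
        (Measure.isProbabilityMeasure_map ((measurable_pi_lambda _ (fun t => t.elim0)).aemeasurable))
        (Measure.isProbabilityMeasure_map ((measurable_pi_lambda _ (fun t => t.elim0)).aemeasurable))
    · intro x _ y
      have h1 : {ω' : PUnit | (∀ t : Fin 0, ((t.elim0 : PUnit → ℝ) ω' ≤ z t ⬝ᵥ β + x t ⬝ᵥ γ ↔ y t = true)) ∧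
          (fun t : Fin 0 => (t.elim0 : PUnit → Fin dx → ℝ) ω') = x} = Set.univ := by
        apply Set.eq_univ_iff_forall.mpr
        intro a
        exact ⟨fun t => t.elim0, Subsingleton.elim _ _⟩
      have h2 : {ω' : PUnit | (fun t : Fin 0 => (t.elim0 : PUnit → Fin dx → ℝ) ω') = x} = Set.univ := by
        apply Set.eq_univ_iff_forall.mpr
        intro a
        exact Subsingleton.elim _ _
      have h3 : {ω | (∀ t : Fin 0, Y t ω = y t) ∧ (fun t : Fin 0 => X t ω) = x} = Set.univ := by
        apply Set.eq_univ_iff_forall.mpr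
        intro a
        exact ⟨fun t => t.elim0, Subsingleton.elim _ _⟩
      have h4 : {ω | (fun t : Fin 0 => X t ω) = x} = Set.univ := by
        apply Set.eq_univ_iff_forall.mpr
        intro a
        exact Subsingleton.elim _ _
      rw [h1, h2, h3, h4, measure_univ, measure_univ]
  · -- main case
    have hΩne : Nonempty Ω := by
      by_contra h
      rw [not_nonempty_iff] at h
      have h0 : P Set.univ = 0 := by
        rw [Set.univ_eq_empty_iff.mpr h, measure_empty]
      rw [measure_univ] at h0
      exact one_ne_zero h0
    -- canonical small sample space
    set Ω₀ : Type := (Fin T → Bool) × (Fin T → (Fin dx → ℝ)) with hΩ₀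
    set enc : Ω → Ω₀ := fun ω => (fun t => Y t ω, fun t => X t ω) with henc
    have hencm : Measurable enc :=
      Measurable.prod (measurable_pi_lambda _ (fun t => hYm t))
        (measurable_pi_lambda _ (fun t => hXm t))
    set Q : Measure Ω₀ := P.map enc with hQ
    haveI hQP : IsProbabilityMeasure Q := Measure.isProbabilityMeasure_map hencm.aemeasurable
    set Y₀ : Fin T → Ω₀ → Bool := fun t ω₀ => ω₀.1 t with hY₀
    have hY₀m : ∀ t, Measurable (Y₀ t) := fun t => (measurable_pi_apply t).comp measurable_fst
    set ret : Fin T → (Fin dx → ℝ) → (Fin dx → ℝ) :=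
      fun t v => if v ∈ (hfin t).toFinset then v else X t (Classical.arbitrary Ω) with hret
    have hretm : ∀ t, Measurable (ret t) := by
      intro t
      apply Measurable.ite ?_ measurable_id measurable_const
      have : {v : Fin dx → ℝ | v ∈ (hfin t).toFinset} = ((hfin t).toFinset : Set (Fin dx → ℝ)) := by
        ext v; simp
      rw [this]
      exact ((hfin t).toFinset : Set (Fin dx → ℝ)).toFinite.measurableSet
    have hretX : ∀ t ω, ret t (X t ω) = X t ω := by
      intro t ω
      rw [hret]
      simp only []
      rw [if_pos ((hfin t).mem_toFinset.mpr (Set.mem_range_self ω))]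
    set X₀ : Fin T → Ω₀ → (Fin dx → ℝ) := fun t ω₀ => ret t (ω₀.2 t) with hX₀
    have hX₀m : ∀ t, Measurable (X₀ t) :=
      fun t => (hretm t).comp ((measurable_pi_apply t).comp measurable_snd)
    have hX₀fin : ∀ t, (Set.range (X₀ t)).Finite := by
      intro t
      apply ((hfin t).insert (X t (Classical.arbitrary Ω))).subset
      rintro _ ⟨ω₀, rfl⟩
      rw [hX₀]
      simp only []
      rw [hret]
      simp only []
      by_cases h : ω₀.2 t ∈ (hfin t).toFinset
      · rw [if_pos h]
        exact Set.mem_insert_of_mem _ ((hfin t).mem_toFinset.mp h)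
      · rw [if_neg h]
        exact Set.mem_insert _ _
    have hXenc : ∀ t ω, X₀ t (enc ω) = X t ω := fun t ω => hretX t ω
    -- measurability of basic Ω₀ sets
    have hidx₀m : ∀ t : Fin T, Measurable (fun ω₀ : Ω₀ => z t ⬝ᵥ β + X₀ t ω₀ ⬝ᵥ γ) := by
      intro t
      apply Measurable.const_add
      have h : (fun ω₀ : Ω₀ => X₀ t ω₀ ⬝ᵥ γ) = fun ω₀ => ∑ i, X₀ t ω₀ i * γ i := by
        funext ω₀; rfl
      rw [h]
      exact Finset.measurable_sum _
        (fun i _ => ((measurable_pi_apply i).comp (hX₀m t)).mul_const (γ i))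
    -- the moment inequalities transfer
    have hineq₀ : ∀ (c : ℝ) (t s : Fin T),
        (Q {ω₀ | Y₀ t ω₀ = true ∧ z t ⬝ᵥ β + X₀ t ω₀ ⬝ᵥ γ ≤ c}).toReal
          ≤ 1 - (Q {ω₀ | Y₀ s ω₀ = false ∧ c ≤ z s ⬝ᵥ β + X₀ s ω₀ ⬝ᵥ γ}).toReal := by
      intro c t s
      have hm1 : MeasurableSet {ω₀ : Ω₀ | Y₀ t ω₀ = true ∧ z t ⬝ᵥ β + X₀ t ω₀ ⬝ᵥ γ ≤ c} := by
        have : {ω₀ : Ω₀ | Y₀ t ω₀ = true ∧ z t ⬝ᵥ β + X₀ t ω₀ ⬝ᵥ γ ≤ c}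
            = (Y₀ t ⁻¹' {true}) ∩ {ω₀ | z t ⬝ᵥ β + X₀ t ω₀ ⬝ᵥ γ ≤ c} := by
          ext ω₀; simp [Set.mem_inter_iff]
        rw [this]
        exact ((hY₀m t) (by trivial)).inter (measurableSet_le (hidx₀m t) measurable_const)
      have hm2 : MeasurableSet {ω₀ : Ω₀ | Y₀ s ω₀ = false ∧ c ≤ z s ⬝ᵥ β + X₀ s ω₀ ⬝ᵥ γ} := by
        have : {ω₀ : Ω₀ | Y₀ s ω₀ = false ∧ c ≤ z s ⬝ᵥ β + X₀ s ω₀ ⬝ᵥ γ}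
            = (Y₀ s ⁻¹' {false}) ∩ {ω₀ | c ≤ z s ⬝ᵥ β + X₀ s ω₀ ⬝ᵥ γ} := by
          ext ω₀; simp [Set.mem_inter_iff]
        rw [this]
        exact ((hY₀m s) (by trivial)).inter (measurableSet_le measurable_const (hidx₀m s))
      rw [hQ, Measure.map_apply hencm hm1, Measure.map_apply hencm hm2]
      have he1 : enc ⁻¹' {ω₀ : Ω₀ | Y₀ t ω₀ = true ∧ z t ⬝ᵥ β + X₀ t ω₀ ⬝ᵥ γ ≤ c}
          = {ω | Y t ω = true ∧ z t ⬝ᵥ β + X t ω ⬝ᵥ γ ≤ c} := by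
        ext ω
        simp only [Set.mem_preimage, Set.mem_setOf_eq]
        rw [hXenc t ω]
      have he2 : enc ⁻¹' {ω₀ : Ω₀ | Y₀ s ω₀ = false ∧ c ≤ z s ⬝ᵥ β + X₀ s ω₀ ⬝ᵥ γ}
          = {ω | Y s ω = false ∧ c ≤ z s ⬝ᵥ β + X s ω ⬝ᵥ γ} := by
        ext ω
        simp only [Set.mem_preimage, Set.mem_setOf_eq]
        rw [hXenc s ω]
      rw [he1, he2]
      exact hineq c t s
    obtain ⟨v', hv'm, hv'law, hv'cond⟩ :=
      construction Q hT z Y₀ X₀ hY₀m hX₀m hX₀fin β γ hineq₀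
    have hgm : Measurable (fun ω₀ : Ω₀ => fun t => X₀ t ω₀) :=
      measurable_pi_lambda _ (fun t => hX₀m t)
    refine ⟨Ω₀ × ℝ, inferInstance, Q.prod unif, fun t p => X₀ t p.1, v',
      inferInstance, fun t => (hX₀m t).comp measurable_fst, hv'm, ?_, hv'law, ?_⟩
    · -- (i) equality of joint laws
      have h1 : (fun p : Ω₀ × ℝ => fun t => X₀ t p.1)
          = (fun ω₀ : Ω₀ => fun t => X₀ t ω₀) ∘ Prod.fst := rfl
      rw [h1, ← Measure.map_map hgm measurable_fst, Measure.map_fst_prod, measure_univ,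
        one_smul, hQ, Measure.map_map hgm hencm]
      have h2 : ((fun ω₀ : Ω₀ => fun t => X₀ t ω₀) ∘ enc) = fun ω t => X t ω := by
        funext ω
        funext t
        exact hXenc t ω
      rw [h2]
    · -- (iii)
      intro x _ y
      have hAmeas : MeasurableSet {ω₀ : Ω₀ | (fun t => X₀ t ω₀) = x} :=
        hgm (measurableSet_singleton x)
      have hBmeas : MeasurableSet {ω₀ : Ω₀ | (∀ t, Y₀ t ω₀ = y t) ∧ (fun t => X₀ t ω₀) = x} := by
        have : {ω₀ : Ω₀ | (∀ t, Y₀ t ω₀ = y t) ∧ (fun t => X₀ t ω₀) = x}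
            = (Prod.fst ⁻¹' {y}) ∩ {ω₀ : Ω₀ | (fun t => X₀ t ω₀) = x} := by
          ext ω₀
          simp only [Set.mem_inter_iff, Set.mem_preimage, Set.mem_singleton_iff, Set.mem_setOf_eq]
          constructor
          · rintro ⟨h1, h2⟩; exact ⟨funext h1, h2⟩
          · rintro ⟨h1, h2⟩; exact ⟨fun t => congrFun h1 t, h2⟩
        rw [this]
        exact (measurable_fst (measurableSet_singleton y)).inter hAmeas
      -- numerator
      have hnum : (Q.prod unif) {p : Ω₀ × ℝ |
            (∀ t, (v' t p ≤ z t ⬝ᵥ β + x t ⬝ᵥ γ ↔ y t = true)) ∧ (fun t => X₀ t p.1) = x}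
          = P {ω | (∀ t, Y t ω = y t) ∧ (fun t => X t ω) = x} := by
        rw [hv'cond x y, hQ, Measure.map_apply hencm hBmeas]
        congr 1
        ext ω
        simp only [Set.mem_preimage, Set.mem_setOf_eq]
        constructor
        · rintro ⟨h1, h2⟩
          refine ⟨fun t => h1 t, ?_⟩
          rw [← h2]
          funext t
          exact (hXenc t ω).symm
        · rintro ⟨h1, h2⟩
          refine ⟨fun t => h1 t, ?_⟩
          rw [← h2]
          funext t
          exact hXenc t ω
      -- denominator
      have hden : (Q.prod unif) {p : Ω₀ × ℝ | (fun t => X₀ t p.1) = x}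
          = P {ω | (fun t => X t ω) = x} := by
        have hprod : {p : Ω₀ × ℝ | (fun t => X₀ t p.1) = x}
            = ({ω₀ : Ω₀ | (fun t => X₀ t ω₀) = x} ×ˢ (Set.univ : Set ℝ)) := by
          ext p
          simp [Set.mem_prod]
        rw [hprod, Measure.prod_prod, measure_univ, mul_one, hQ,
          Measure.map_apply hencm hAmeas]
        congr 1
        ext ω
        simp only [Set.mem_preimage, Set.mem_setOf_eq]
        constructor
        · intro h
          rw [← h]
          funext t
          exact (hXenc t ω).symm
        · intro h
          rw [← h]
          funext t
          exact hXenc t ω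
      rw [hnum, hden]
end

section
/- Sharpness of the identified set in the continuous case: let θ = (β, γ) satisfy (i) max_{t≤T} L_t(c; θ) ≤ min_{s≤T} U_s(c; θ) for every c ∈ ℝ; (ii) for each t, the index I_t(θ) = z_t·β + X_t·γ has a distribution that is absolutely continuous with an everywhere strictly positive density on a bounded interval support; (iii) the conditional probabilities q_t(x) := Σ_{y : y_t = 1} q(y│x) satisfy 0 < q_t(x) < 1 for P_X-almost every x and each t; and (iv) the set {c ∈ ℝ : max_{t≤T} L_t(c; θ) = min_{s≤T} U_s(c; θ)} has Lebesgue measure zero. Then there exist a probability space (Ω*, 𝓕*, P*) and random variables X* = (X*_1, …, X*_T) and v* = (v*_1, …, v*_T) such that: X* has the same joint distribution as X; the marginal distribution of v*_t is the same for every t; and for P_X-almost every x and every y ∈ {0,1}^T, a regular conditional distribution of v* given X* = x assigns probability q(y│x) to the event { 1{v*_t ≤ z_t·β + x_t·γ} = y_t for all t }. Hence the identified set Θ_I^cts is sharp. -/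
open MeasureTheory Filter Set Matrix

namespace Stmt3Aux

lemma tendsto_finset_sup' {ι : Type*} (s : Finset ι) (hs : s.Nonempty)
    (f : ι → ℕ → ℝ) (g : ι → ℝ)
    (h : ∀ i, Tendsto (fun n => f i n) atTop (nhds (g i))) :
    Tendsto (fun n => s.sup' hs (fun i => f i n)) atTop (nhds (s.sup' hs g)) := by
  induction hs using Finset.Nonempty.cons_induction with
  | singleton a => simpa using h a
  | cons a s ha hs ih =>
      simp only [Finset.sup'_cons hs]
      exact (h a).max ih

lemma tendsto_finset_inf' {ι : Type*} (s : Finset ι) (hs : s.Nonempty)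
    (f : ι → ℕ → ℝ) (g : ι → ℝ)
    (h : ∀ i, Tendsto (fun n => f i n) atTop (nhds (g i))) :
    Tendsto (fun n => s.inf' hs (fun i => f i n)) atTop (nhds (s.inf' hs g)) := by
  induction hs using Finset.Nonempty.cons_induction with
  | singleton a => simpa using h a
  | cons a s ha hs ih =>
      simp only [Finset.inf'_cons hs]
      exact (h a).min ih

/-- generalized inverse used in the construction -/
noncomputable def finv (F : ℝ → ℝ) (A0 : ℝ) (u : ℝ) : ℝ :=
  sInf ({c | u ≤ F c} ∩ Ici A0)

lemma finv_le_iff {F : ℝ → ℝ} (hF : Monotone F) {A0 B0 : ℝ}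
    (hA0 : F A0 = 0) (hB0 : F B0 = 1)
    (hrc : ∀ x : ℝ, Tendsto (fun n : ℕ => F (x + 1/(n+1))) atTop (nhds (F x)))
    {u : ℝ} (hu0 : 0 < u) (hu1 : u ≤ 1) (c : ℝ) :
    finv F A0 u ≤ c ↔ u ≤ F c := by
  have hA0B0 : A0 ≤ B0 := by
    by_contra hc
    push_neg at hc
    have := hF hc.le
    rw [hB0, hA0] at this
    linarith
  set S : Set ℝ := {c | u ≤ F c} ∩ Ici A0 with hS
  have hne : S.Nonempty := ⟨B0, by simp [hS, hB0, hu1], hA0B0⟩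
  have hbdd : BddBelow S := ⟨A0, fun x hx => hx.2⟩
  constructor
  · intro hle
    have key : u ≤ F (sInf S) := by
      have hseq : ∀ n : ℕ, u ≤ F (sInf S + 1/(n+1)) := by
        intro n
        have hpos : (0:ℝ) < 1/(n+1) := by positivity
        obtain ⟨s, hsS, hslt⟩ := exists_lt_of_csInf_lt hne (by linarith : sInf S < sInf S + 1/(n+1))
        exact le_trans hsS.1 (hF hslt.le)
      exact ge_of_tendsto (hrc (sInf S)) (Eventually.of_forall hseq)
    exact le_trans key (hF hle)
  · intro hFc
    have hc : c ∈ S := by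
      refine ⟨hFc, ?_⟩
      by_contra hcc
      have hcc' : c < A0 := lt_of_not_ge hcc
      have := hF hcc'.le
      rw [hA0] at this
      linarith
    exact csInf_le hbdd hc

lemma finv_mono {F : ℝ → ℝ} {A0 B0 : ℝ} (hB0 : F B0 = 1) (hA0 : F A0 = 0)
    (hF : Monotone F) {u u' : ℝ} (huu : u ≤ u') (hu1 : u' ≤ 1) :
    finv F A0 u ≤ finv F A0 u' := by
  have hA0B0 : A0 ≤ B0 := by
    by_contra hc
    push_neg at hc
    have := hF hc.le
    rw [hB0, hA0] at this
    linarith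
  refine csInf_le_csInf ⟨A0, fun x hx => hx.2⟩ ⟨B0, by simp [hB0, hu1], hA0B0⟩ ?_
  intro x hx
  exact ⟨le_trans huu hx.1, hx.2⟩


/-- right-continuity of a sub-CDF, sequential form -/
lemma subcdf_tendsto_right {Ω : Type*} [MeasurableSpace Ω] (μ : Measure Ω) [IsFiniteMeasure μ]
    {A : Set Ω} (hA : MeasurableSet A) {I : Ω → ℝ} (hI : Measurable I) (c : ℝ) :
    Tendsto (fun n : ℕ => (μ (A ∩ {ω | I ω ≤ c + 1/(n+1)})).toReal) atTop
      (nhds ((μ (A ∩ {ω | I ω ≤ c})).toReal)) := by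
  have hanti : Antitone (fun n : ℕ => A ∩ {ω | I ω ≤ c + 1/(n+1)}) := by
    intro n m hnm
    intro ω hω
    have hω2 : I ω ≤ c + 1/(m+1) := hω.2
    have h1 : (1:ℝ)/(m+1) ≤ 1/(n+1) := by
      apply one_div_le_one_div_of_le (by positivity)
      exact_mod_cast by omega
    exact ⟨hω.1, (by linarith : I ω ≤ c + 1/(n+1))⟩
  have hiInter : (⋂ n : ℕ, A ∩ {ω | I ω ≤ c + 1/(n+1)}) = A ∩ {ω | I ω ≤ c} := by
    ext ω
    simp only [Set.mem_iInter, Set.mem_inter_iff, Set.mem_setOf_eq]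
    constructor
    · intro h
      refine ⟨(h 0).1, ?_⟩
      by_contra hc
      push_neg at hc
      obtain ⟨n, hn⟩ := exists_nat_one_div_lt (by linarith : (0:ℝ) < I ω - c)
      have := (h n).2
      linarith
    · intro h n
      have hpos : (0:ℝ) < 1/(n+1) := by positivity
      exact ⟨h.1, by linarith [h.2]⟩
  have htend := tendsto_measure_iInter_atTop (μ := μ)
    (s := fun n : ℕ => A ∩ {ω | I ω ≤ c + 1/(n+1)})
    (fun n => (hA.inter (hI measurableSet_Iic)).nullMeasurableSet) hanti
    ⟨0, measure_ne_top μ _⟩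
  rw [hiInter] at htend
  exact (ENNReal.tendsto_toReal (measure_ne_top μ _)).comp htend

/-- key lemma: probability integral transform for sub-CDFs -/
lemma claimA {Ω : Type*} [MeasurableSpace Ω] (μ : Measure Ω) [IsFiniteMeasure μ]
    {A : Set Ω} (hA : MeasurableSet A) {I : Ω → ℝ} (hI : Measurable I)
    (hatom : ∀ c : ℝ, μ {ω | I ω = c} = 0)
    {cl ch : ℝ} (hcl : μ (A ∩ {ω | I ω ≤ cl}) = 0)
    (hch : μ (A ∩ {ω | I ω ≤ ch}) = μ A)
    (Lf : ℝ → ℝ) (hLf : ∀ c, Lf c = (μ (A ∩ {ω' | I ω' ≤ c})).toReal)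
    (u : ℝ) (hu : 0 ≤ u) :
    (μ (A ∩ {ω | Lf (I ω) ≤ u})).toReal = min u (μ A).toReal := by
  set m := (μ A).toReal with hm
  have hLmono : Monotone Lf := by
    intro x y hxy
    rw [hLf, hLf]
    have hsub : A ∩ {ω' | I ω' ≤ x} ⊆ A ∩ {ω' | I ω' ≤ y} := by
      intro ω hω
      have h2 : I ω ≤ x := hω.2
      exact ⟨hω.1, (by linarith : I ω ≤ y)⟩
    exact ENNReal.toReal_mono (measure_ne_top μ _) (measure_mono hsub)
  have hLle : ∀ c, Lf c ≤ m := by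
    intro c
    rw [hLf]
    exact ENNReal.toReal_mono (measure_ne_top μ _) (measure_mono Set.inter_subset_left)
  rcases le_or_gt m u with hcase | hcase
  · have hset : A ∩ {ω | Lf (I ω) ≤ u} = A := by
      apply Set.inter_eq_left.mpr
      intro ω _
      exact le_trans (hLle _) hcase
    rw [hset, min_eq_right hcase]
  · set S : Set ℝ := {c | Lf c ≤ u} with hSdef
    have hclS : cl ∈ S := by
      simp only [hSdef, Set.mem_setOf_eq, hLf, hcl]
      simpa using hu
    have hSbdd : BddAbove S := by
      refine ⟨ch, fun c hc => ?_⟩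
      by_contra hcc
      have hcc' : ch < c := lt_of_not_ge hcc
      have h1 : m ≤ Lf c := by
        rw [hLf]
        have hsub : A ∩ {ω' | I ω' ≤ ch} ⊆ A ∩ {ω' | I ω' ≤ c} := by
          intro ω hω
          have h2 : I ω ≤ ch := hω.2
          exact ⟨hω.1, (by linarith : I ω ≤ c)⟩
        refine le_trans (le_of_eq ?_) (ENNReal.toReal_mono (measure_ne_top μ _)
          (measure_mono hsub))
        rw [hch]
      have := hc
      simp only [hSdef, Set.mem_setOf_eq] at this
      linarith
    set cstar := sSup S with hcstar
    -- step 1 : μ (A ∩ {I < cstar}) ≤ ofReal u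
    have h1 : μ (A ∩ {ω | I ω < cstar}) ≤ ENNReal.ofReal u := by
      have hUnion : (A ∩ {ω | I ω < cstar}) = ⋃ n : ℕ, A ∩ {ω | I ω ≤ cstar - 1/(n+1)} := by
        ext ω
        simp only [Set.mem_inter_iff, Set.mem_setOf_eq, Set.mem_iUnion]
        constructor
        · rintro ⟨hωA, hωI⟩
          obtain ⟨n, hn⟩ := exists_nat_one_div_lt (by linarith : (0:ℝ) < cstar - I ω)
          exact ⟨n, hωA, by linarith⟩
        · rintro ⟨n, hωA, hωI⟩
          have hpos : (0:ℝ) < 1/(n+1) := by positivity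
          exact ⟨hωA, by linarith⟩
      rw [hUnion]
      have hmono : Monotone (fun n : ℕ => A ∩ {ω | I ω ≤ cstar - 1/(n+1)}) := by
        intro n m' hnm
        intro ω hω
        have hω2 : I ω ≤ cstar - 1/(n+1) := hω.2
        have h1 : (1:ℝ)/(m'+1) ≤ 1/(n+1) := by
          apply one_div_le_one_div_of_le (by positivity)
          exact_mod_cast by omega
        exact ⟨hω.1, (by linarith : I ω ≤ cstar - 1/(m'+1))⟩
      rw [Monotone.measure_iUnion hmono]
      apply iSup_le
      intro n
      have hpos : (0:ℝ) < 1/(n+1) := by positivity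
      obtain ⟨s, hsS, hslt⟩ := exists_lt_of_lt_csSup ⟨cl, hclS⟩
        (by linarith : cstar - 1/(n+1) < cstar)
      have hsub : A ∩ {ω | I ω ≤ cstar - 1/(n+1)} ⊆ A ∩ {ω' | I ω' ≤ s} := by
        intro ω hω
        have h2 : I ω ≤ cstar - 1/(n+1) := hω.2
        exact ⟨hω.1, (by linarith : I ω ≤ s)⟩
      refine le_trans (measure_mono hsub) ?_
      rw [ENNReal.le_ofReal_iff_toReal_le (measure_ne_top μ _) hu, ← hLf]
      exact hsS
    have h2 : Lf cstar ≤ u := by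
      have hsplit : μ (A ∩ {ω | I ω ≤ cstar}) ≤ ENNReal.ofReal u := by
        have hsub : A ∩ {ω | I ω ≤ cstar} ⊆ (A ∩ {ω | I ω < cstar}) ∪ {ω | I ω = cstar} := by
          rintro ω ⟨hωA, hωI⟩
          have hωI' : I ω ≤ cstar := hωI
          rcases lt_or_eq_of_le hωI' with h | h
          · exact Or.inl ⟨hωA, h⟩
          · exact Or.inr h
        calc μ (A ∩ {ω | I ω ≤ cstar}) ≤ μ ((A ∩ {ω | I ω < cstar}) ∪ {ω | I ω = cstar}) :=
              measure_mono hsub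
          _ ≤ μ (A ∩ {ω | I ω < cstar}) + μ {ω | I ω = cstar} := measure_union_le _ _
          _ = μ (A ∩ {ω | I ω < cstar}) := by rw [hatom cstar, add_zero]
          _ ≤ ENNReal.ofReal u := h1
      rw [hLf]
      calc (μ (A ∩ {ω' | I ω' ≤ cstar})).toReal ≤ (ENNReal.ofReal u).toReal :=
            ENNReal.toReal_mono ENNReal.ofReal_ne_top hsplit
        _ = u := ENNReal.toReal_ofReal hu
    have h3 : u ≤ Lf cstar := by
      by_contra hlt
      push_neg at hlt
      have htend : Tendsto (fun n : ℕ => Lf (cstar + 1/(n+1))) atTop (nhds (Lf cstar)) := by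
        have := subcdf_tendsto_right μ hA hI cstar
        simp only [← hLf] at this
        exact this
      have hev : ∀ᶠ n : ℕ in atTop, Lf (cstar + 1/(n+1)) < u :=
        htend.eventually_lt_const hlt
      obtain ⟨n, hn⟩ := hev.exists
      have hmem : cstar + 1/(n+1) ∈ S := le_of_lt hn
      have := le_csSup hSbdd hmem
      have hpos : (0:ℝ) < 1/(n+1) := by positivity
      linarith
    have hLc : Lf cstar = u := le_antisymm h2 h3
    have hset : A ∩ {ω | Lf (I ω) ≤ u} = A ∩ {ω | I ω ≤ cstar} := by
      ext ω
      simp only [Set.mem_inter_iff, Set.mem_setOf_eq]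
      constructor
      · rintro ⟨hωA, hωL⟩
        exact ⟨hωA, le_csSup hSbdd hωL⟩
      · rintro ⟨hωA, hωI⟩
        exact ⟨hωA, le_trans (hLmono hωI) hLc.le⟩
    rw [hset, ← hLf, hLc, min_eq_left hcase.le]


lemma supcdf_tendsto_right {Ω : Type*} [MeasurableSpace Ω] (μ : Measure Ω) [IsFiniteMeasure μ]
    {A : Set Ω} (hA : MeasurableSet A) {I : Ω → ℝ} (hI : Measurable I)
    (x : ℝ) (hatom : μ {ω | I ω = x} = 0) :
    Tendsto (fun n : ℕ => (μ (A ∩ {ω | x + 1/(n+1) ≤ I ω})).toReal) atTop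
      (nhds ((μ (A ∩ {ω | x ≤ I ω})).toReal)) := by
  have hmono : Monotone (fun n : ℕ => A ∩ {ω | x + 1/(n+1) ≤ I ω}) := by
    intro n m hnm ω hω
    have hω2 : x + 1/(n+1) ≤ I ω := hω.2
    have h1 : (1:ℝ)/(m+1) ≤ 1/(n+1) := by
      apply one_div_le_one_div_of_le (by positivity)
      exact_mod_cast by omega
    exact ⟨hω.1, (by linarith : x + 1/(m+1) ≤ I ω)⟩
  have hUnion : (⋃ n : ℕ, A ∩ {ω | x + 1/(n+1) ≤ I ω}) = A ∩ {ω | x < I ω} := by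
    ext ω
    simp only [Set.mem_iUnion, Set.mem_inter_iff, Set.mem_setOf_eq]
    constructor
    · rintro ⟨n, hωA, hωI⟩
      have hpos : (0:ℝ) < 1/(n+1) := by positivity
      exact ⟨hωA, by linarith⟩
    · rintro ⟨hωA, hωI⟩
      obtain ⟨n, hn⟩ := exists_nat_one_div_lt (by linarith : (0:ℝ) < I ω - x)
      exact ⟨n, hωA, by linarith⟩
  have hmeq : μ (A ∩ {ω | x < I ω}) = μ (A ∩ {ω | x ≤ I ω}) := by
    apply le_antisymm
    · exact measure_mono (Set.inter_subset_inter_right _ (fun ω (h : x < I ω) => le_of_lt h))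
    · have hsub : A ∩ {ω | x ≤ I ω} ⊆ (A ∩ {ω | x < I ω}) ∪ {ω | I ω = x} := by
        rintro ω ⟨hωA, hωI⟩
        have hωI' : x ≤ I ω := hωI
        rcases lt_or_eq_of_le hωI' with h | h
        · exact Or.inl ⟨hωA, h⟩
        · exact Or.inr h.symm
      calc μ (A ∩ {ω | x ≤ I ω}) ≤ μ (A ∩ {ω | x < I ω}) + μ {ω | I ω = x} :=
            le_trans (measure_mono hsub) (measure_union_le _ _)
        _ = μ (A ∩ {ω | x < I ω}) := by rw [hatom, add_zero]
  have htend := tendsto_measure_iUnion_atTop (μ := μ)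
    (s := fun n : ℕ => A ∩ {ω | x + 1/(n+1) ≤ I ω}) hmono
  rw [hUnion, hmeq] at htend
  exact (ENNReal.tendsto_toReal (measure_ne_top μ _)).comp htend

end Stmt3Aux


/-- Sharpness of the identified set in the continuous case. Let
`θ = (β, γ)` satisfy (i) the conditional moment inequalities at every `c ∈ ℝ`;
(ii) each index `I_t(θ) = z_t·β + X_t·γ` is continuously distributed with a strictly
positive density on a bounded interval support; (iii) the conditional choice
probabilities `q_t(x) = Σ_{y : y_t = 1} q(y│x)` lie strictly in `(0,1)` for
`P_X`-a.e. `x`; (iv) the contact set `{c : max_t L_t(c;θ) = min_s U_s(c;θ)}` has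
Lebesgue measure zero. Then there exist `(Ω', P')`, `X'` with the same joint law as
`X`, and `v'` with identical marginals across `t`, such that the conditional law of
the choice pattern `(1{v'_t ≤ z_t·β + X'_t·γ})_t` given `X'` is `q` (stated through
its defining disintegration property against `P_X`). Here `q` is a regular
conditional probability of `Y` given `X`. -/
theorem stmt_3
    {Ω : Type*} [MeasurableSpace Ω] (P : Measure Ω) [IsProbabilityMeasure P]
    {T dz dx : ℕ} (hT : 0 < T)
    (z : Fin T → (Fin dz → ℝ))
    (Y : Fin T → Ω → Bool) (X : Fin T → Ω → (Fin dx → ℝ))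
    (hYm : ∀ t, Measurable (Y t)) (hXm : ∀ t, Measurable (X t))
    (β : Fin dz → ℝ) (γ : Fin dx → ℝ)
    -- q is a regular conditional probability of Y = (Y_1, …, Y_T) given X
    (q : (Fin T → Bool) → (Fin T → (Fin dx → ℝ)) → ℝ)
    (hq_meas : ∀ y, Measurable (q y))
    (hq_sum : ∀ᵐ x ∂(P.map fun ω t => X t ω), ∑ y : Fin T → Bool, q y x = 1)
    (hq_rcd : ∀ (y : Fin T → Bool) (B : Set (Fin T → (Fin dx → ℝ))), MeasurableSet B →
      (P {ω | (∀ t, Y t ω = y t) ∧ (fun t => X t ω) ∈ B}).toReal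
        = ∫ x in B, q y x ∂(P.map fun ω t => X t ω))
    -- (i) the conditional moment inequalities
    (hineq : ∀ (c : ℝ) (t s : Fin T),
      (P {ω | Y t ω = true ∧ z t ⬝ᵥ β + X t ω ⬝ᵥ γ ≤ c}).toReal
        ≤ 1 - (P {ω | Y s ω = false ∧ c ≤ z s ⬝ᵥ β + X s ω ⬝ᵥ γ}).toReal)
    -- (ii) each index has a strictly positive density on a bounded interval support
    (hdens : ∀ t : Fin T, ∃ (a b : ℝ), a < b ∧ ∃ f : ℝ → ℝ,
      (∀ c ∈ Set.Icc a b, 0 < f c) ∧ (∀ c ∉ Set.Icc a b, f c = 0) ∧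
      P.map (fun ω => z t ⬝ᵥ β + X t ω ⬝ᵥ γ)
        = volume.withDensity (fun c => ENNReal.ofReal (f c)))
    -- (iii) nondegenerate per-period conditional choice probabilities
    (hccp : ∀ t : Fin T, ∀ᵐ x ∂(P.map fun ω t => X t ω),
      0 < ∑ y ∈ Finset.univ.filter (fun y : Fin T → Bool => y t = true), q y x ∧
        ∑ y ∈ Finset.univ.filter (fun y : Fin T → Bool => y t = true), q y x < 1)
    -- (iv) the contact set has Lebesgue measure zero
    (hcontact : volume {c : ℝ |
        (Finset.univ.sup' ⟨⟨0, hT⟩, Finset.mem_univ _⟩ fun t : Fin T =>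
          (P {ω | Y t ω = true ∧ z t ⬝ᵥ β + X t ω ⬝ᵥ γ ≤ c}).toReal)
          = (Finset.univ.inf' ⟨⟨0, hT⟩, Finset.mem_univ _⟩ fun s : Fin T =>
            1 - (P {ω | Y s ω = false ∧ c ≤ z s ⬝ᵥ β + X s ω ⬝ᵥ γ}).toReal)} = 0) :
    ∃ (Ω' : Type) (_ : MeasurableSpace Ω') (P' : Measure Ω')
      (X' : Fin T → Ω' → (Fin dx → ℝ)) (v' : Fin T → Ω' → ℝ),
      IsProbabilityMeasure P' ∧
      (∀ t, Measurable (X' t)) ∧ (∀ t, Measurable (v' t)) ∧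
      -- X' has the same joint distribution as X
      P'.map (fun ω t => X' t ω) = P.map (fun ω t => X t ω) ∧
      -- partial stationarity of the marginals of v'
      (∀ t s : Fin T, P'.map (v' t) = P'.map (v' s)) ∧
      -- the conditional law of the choice pattern given X' = x is q(·│x), P_X-a.e. x
      (∀ (y : Fin T → Bool) (B : Set (Fin T → (Fin dx → ℝ))), MeasurableSet B →
        (P' {ω | (∀ t, (v' t ω ≤ z t ⬝ᵥ β + X' t ω ⬝ᵥ γ ↔ y t = true)) ∧
            (fun t => X' t ω) ∈ B}).toReal
          = ∫ x in B, q y x ∂(P.map fun ω t => X t ω)) := by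
  classical
  -- extract the densities
  choose a b hab f hf_pos hf_zero hmap using hdens
  -- the index functions
  let Iv : Fin T → Ω → ℝ := fun t ω => z t ⬝ᵥ β + X t ω ⬝ᵥ γ
  have hIvm : ∀ t, Measurable (Iv t) := by
    intro t
    have h1 : Measurable fun ω => X t ω ⬝ᵥ γ := by
      simp only [dotProduct]
      exact Finset.measurable_sum _ fun i _ => ((measurable_pi_apply i).comp (hXm t)).mul_const _
    exact measurable_const.add h1
  have hmap' : ∀ t, P.map (Iv t) = volume.withDensity (fun c => ENNReal.ofReal (f t c)) :=
    hmap
  -- atomlessness of the indices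
  have hatom : ∀ (t : Fin T) (c : ℝ), P {ω | Iv t ω = c} = 0 := by
    intro t c
    have h1 : P {ω | Iv t ω = c} = (P.map (Iv t)) {c} := by
      rw [Measure.map_apply (hIvm t) (measurableSet_singleton c)]
      rfl
    rw [h1, hmap' t, withDensity_apply _ (measurableSet_singleton c)]
    exact setLIntegral_measure_zero _ _ (measure_singleton c)
  -- bounded support of the indices
  have hlow : ∀ t : Fin T, P {ω | Iv t ω < a t} = 0 := by
    intro t
    have h1 : P {ω | Iv t ω < a t} = (P.map (Iv t)) (Set.Iio (a t)) := by
      rw [Measure.map_apply (hIvm t) measurableSet_Iio]; rfl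
    rw [h1, hmap' t, withDensity_apply _ measurableSet_Iio]
    have h2 : ∀ᵐ x ∂(volume.restrict (Set.Iio (a t))), ENNReal.ofReal (f t x) = 0 := by
      refine (ae_restrict_iff' measurableSet_Iio).2 (Eventually.of_forall fun x hx => ?_)
      have hx' : x < a t := hx
      have : f t x = 0 := hf_zero t x (fun hmem => absurd hmem.1 (not_le.mpr hx'))
      simp [this]
    rw [lintegral_congr_ae h2, lintegral_zero]
  have hhigh : ∀ t : Fin T, P {ω | b t < Iv t ω} = 0 := by
    intro t
    have h1 : P {ω | b t < Iv t ω} = (P.map (Iv t)) (Set.Ioi (b t)) := by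
      rw [Measure.map_apply (hIvm t) measurableSet_Ioi]; rfl
    rw [h1, hmap' t, withDensity_apply _ measurableSet_Ioi]
    have h2 : ∀ᵐ x ∂(volume.restrict (Set.Ioi (b t))), ENNReal.ofReal (f t x) = 0 := by
      refine (ae_restrict_iff' measurableSet_Ioi).2 (Eventually.of_forall fun x hx => ?_)
      have hx' : b t < x := hx
      have : f t x = 0 := hf_zero t x (fun hmem => absurd hmem.2 (not_le.mpr hx'))
      simp [this]
    rw [lintegral_congr_ae h2, lintegral_zero]
  -- the sub-distribution functions
  let L : Fin T → ℝ → ℝ := fun t c => (P {ω | Y t ω = true ∧ Iv t ω ≤ c}).toReal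
  let R : Fin T → ℝ → ℝ := fun s c => (P {ω | Y s ω = false ∧ c ≤ Iv s ω}).toReal
  let Mz : Fin T → ℝ → ℝ := fun t c => (P {ω | Y t ω = false ∧ Iv t ω ≤ c}).toReal
  let U : Fin T → ℝ → ℝ := fun s c => 1 - R s c
  let p : Fin T → ℝ := fun t => (P {ω | Y t ω = true}).toReal
  have hne : (Finset.univ : Finset (Fin T)).Nonempty := ⟨⟨0, hT⟩, Finset.mem_univ _⟩
  let G : ℝ → ℝ := fun c => Finset.univ.sup' hne fun t => L t c
  let H : ℝ → ℝ := fun c => Finset.univ.inf' hne fun s => U s c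
  let A0 : ℝ := (Finset.univ.inf' hne a) - 1
  let B0 : ℝ := (Finset.univ.sup' hne b) + 1
  let Phi : ℝ → ℝ := fun c => min 1 (max 0 ((c - A0)/(B0 - A0)))
  let F : ℝ → ℝ := fun c => min (H c) (max (G c) (H c * Phi c))
  let Fi : ℝ → ℝ := fun u => Stmt3Aux.finv F A0 u
  -- basic positivity / bounds
  have hA0B0 : A0 < B0 := by
    have h1 : Finset.univ.inf' hne a ≤ a ⟨0, hT⟩ := Finset.inf'_le _ (Finset.mem_univ _)
    have h2 : b ⟨0, hT⟩ ≤ Finset.univ.sup' hne b := Finset.le_sup' _ (Finset.mem_univ _)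
    have := hab ⟨0, hT⟩
    simp only [A0, B0]
    linarith
  have hp0 : ∀ t, 0 ≤ p t := fun t => ENNReal.toReal_nonneg
  have hp1 : ∀ t, p t ≤ 1 := by
    intro t
    have := prob_le_one (μ := P) (s := {ω | Y t ω = true})
    calc p t ≤ (1 : ENNReal).toReal := ENNReal.toReal_mono (by simp) this
      _ = 1 := by simp
  -- monotonicity
  have hLmono : ∀ t, Monotone (L t) := by
    intro t x y hxy
    apply ENNReal.toReal_mono (measure_ne_top P _)
    apply measure_mono
    rintro ω ⟨h1, h2⟩
    exact ⟨h1, le_trans h2 hxy⟩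
  have hMzmono : ∀ t, Monotone (Mz t) := by
    intro t x y hxy
    apply ENNReal.toReal_mono (measure_ne_top P _)
    apply measure_mono
    rintro ω ⟨h1, h2⟩
    exact ⟨h1, le_trans h2 hxy⟩
  have hUmono : ∀ s, Monotone (U s) := by
    intro s x y hxy
    have : R s y ≤ R s x := by
      apply ENNReal.toReal_mono (measure_ne_top P _)
      apply measure_mono
      rintro ω ⟨h1, h2⟩
      exact ⟨h1, le_trans hxy h2⟩
    simp only [U]
    linarith
  have hGmono : Monotone G := by
    intro x y hxy
    apply Finset.sup'_le
    intro t _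
    exact le_trans (hLmono t hxy) (Finset.le_sup' (fun t => L t y) (Finset.mem_univ t))
  have hHmono : Monotone H := by
    intro x y hxy
    apply Finset.le_inf'
    intro s _
    exact le_trans (Finset.inf'_le _ (Finset.mem_univ s)) (hUmono s hxy)
  have hG0 : ∀ c, 0 ≤ G c := by
    intro c
    refine le_trans (ENNReal.toReal_nonneg : (0:ℝ) ≤ L ⟨0, hT⟩ c) ?_
    exact Finset.le_sup' (fun t => L t c) (Finset.mem_univ _)
  have hR0 : ∀ s c, 0 ≤ R s c := fun s c => ENNReal.toReal_nonneg
  have hR1 : ∀ s c, R s c ≤ 1 := by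
    intro s c
    have := prob_le_one (μ := P) (s := {ω | Y s ω = false ∧ c ≤ Iv s ω})
    calc R s c ≤ (1 : ENNReal).toReal := ENNReal.toReal_mono (by simp) this
      _ = 1 := by simp
  have hH0 : ∀ c, 0 ≤ H c := by
    intro c
    apply Finset.le_inf'
    intro s _
    have := hR1 s c
    simp only [U]
    linarith
  have hH1 : ∀ c, H c ≤ 1 := by
    intro c
    refine le_trans (Finset.inf'_le _ (Finset.mem_univ ⟨0, hT⟩)) ?_
    have := hR0 ⟨0, hT⟩ c
    simp only [U]
    linarith
  have hPhi0 : ∀ c, 0 ≤ Phi c := fun c => le_min zero_le_one (le_max_left _ _)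
  have hPhi1 : ∀ c, Phi c ≤ 1 := fun c => min_le_left _ _
  have hPhimono : Monotone Phi := by
    intro x y hxy
    have hBA : (0:ℝ) < B0 - A0 := by linarith
    apply min_le_min le_rfl
    apply max_le_max le_rfl
    gcongr
  have hFmono : Monotone F := by
    intro x y hxy
    apply min_le_min (hHmono hxy)
    apply max_le_max (hGmono hxy)
    exact mul_le_mul (hHmono hxy) (hPhimono hxy) (hPhi0 x) (hH0 y)
  -- the conditional moment inequalities give G ≤ H
  have hGH : ∀ c, G c ≤ H c := by
    intro c
    apply Finset.sup'_le
    intro t _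
    apply Finset.le_inf'
    intro s _
    exact hineq c t s
  have hGleF : ∀ c, G c ≤ F c := fun c => le_min (hGH c) (le_max_left _ _)
  have hFleH : ∀ c, F c ≤ H c := fun c => min_le_left _ _
  have hF0 : ∀ c, 0 ≤ F c := fun c =>
    le_min (hH0 c) (le_trans (hG0 c) (le_max_left _ _))
  have hF1 : ∀ c, F c ≤ 1 := fun c => le_trans (hFleH c) (hH1 c)
  have hLleF : ∀ t c, L t c ≤ F c := by
    intro t c
    exact le_trans (Finset.le_sup' (fun t => L t c) (Finset.mem_univ t)) (hGleF c)
  -- boundary values of F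
  have hFA0 : F A0 = 0 := by
    have hGA0 : G A0 = 0 := by
      apply le_antisymm ?_ (hG0 A0)
      apply Finset.sup'_le
      intro t _
      have hA0at : A0 < a t := by
        have h := Finset.inf'_le (f := a) (Finset.mem_univ t)
        have : A0 = Finset.univ.inf' hne a - 1 := rfl
        linarith
      have hnull : P {ω | Y t ω = true ∧ Iv t ω ≤ A0} = 0 := by
        apply measure_mono_null ?_ (hlow t)
        rintro ω ⟨_, h2⟩
        have h2' : Iv t ω ≤ A0 := h2
        show Iv t ω < a t
        linarith
      show L t A0 ≤ 0
      simp only [L, hnull]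
      simp
    have hPhiA0 : Phi A0 = 0 := by
      show min 1 (max 0 ((A0 - A0)/(B0 - A0))) = 0
      rw [sub_self, zero_div, max_self]
      exact min_eq_right zero_le_one
    show min (H A0) (max (G A0) (H A0 * Phi A0)) = 0
    rw [hGA0, hPhiA0, mul_zero, max_self]
    exact min_eq_right (hH0 A0)
  have hFB0 : F B0 = 1 := by
    have hHB0 : H B0 = 1 := by
      apply le_antisymm (hH1 B0)
      apply Finset.le_inf'
      intro s _
      have hbsB0 : b s < B0 := by
        have h := Finset.le_sup' (f := b) (Finset.mem_univ s)
        have : B0 = Finset.univ.sup' hne b + 1 := rfl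
        linarith
      have hnull : P {ω | Y s ω = false ∧ B0 ≤ Iv s ω} = 0 := by
        apply measure_mono_null ?_ (hhigh s)
        rintro ω ⟨_, h2⟩
        have h2' : B0 ≤ Iv s ω := h2
        show b s < Iv s ω
        linarith
      show (1:ℝ) ≤ U s B0
      have : R s B0 = 0 := by simp only [R, hnull]; simp
      simp only [U, this]
      linarith
    have hPhiB0 : Phi B0 = 1 := by
      show min 1 (max 0 ((B0 - A0)/(B0 - A0))) = 1
      rw [div_self (by linarith : B0 - A0 ≠ 0)]
      rw [max_eq_right zero_le_one, min_self]
    show min (H B0) (max (G B0) (H B0 * Phi B0)) = 1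
    rw [hHB0, hPhiB0, one_mul, max_eq_right (le_trans (hGH B0) (le_of_eq hHB0)), min_self]
  -- right continuity of F
  have hFrc : ∀ x : ℝ, Tendsto (fun n : ℕ => F (x + 1/(n+1))) atTop (nhds (F x)) := by
    intro x
    have hseqL : ∀ t : Fin T, Tendsto (fun n : ℕ => L t (x + 1/(n+1))) atTop (nhds (L t x)) := by
      intro t
      exact Stmt3Aux.subcdf_tendsto_right P (hYm t (measurableSet_singleton true)) (hIvm t) x
    have hseqU : ∀ s : Fin T, Tendsto (fun n : ℕ => U s (x + 1/(n+1))) atTop (nhds (U s x)) := by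
      intro s
      have hR := Stmt3Aux.supcdf_tendsto_right P (hYm s (measurableSet_singleton false)) (hIvm s)
        x (hatom s x)
      exact Tendsto.const_sub 1 hR
    have hseqG : Tendsto (fun n : ℕ => G (x + 1/(n+1))) atTop (nhds (G x)) :=
      Stmt3Aux.tendsto_finset_sup' Finset.univ hne (fun t n => L t (x + 1/(n+1)))
        (fun t => L t x) hseqL
    have hseqH : Tendsto (fun n : ℕ => H (x + 1/(n+1))) atTop (nhds (H x)) :=
      Stmt3Aux.tendsto_finset_inf' Finset.univ hne (fun s n => U s (x + 1/(n+1)))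
        (fun s => U s x) hseqU
    have hPhicont : Continuous Phi := by
      apply continuous_const.min
      apply continuous_const.max
      exact (continuous_id.sub continuous_const).div_const _
    have hxseq : Tendsto (fun n : ℕ => x + 1/(n+1)) atTop (nhds x) := by
      have h0 := tendsto_one_div_add_atTop_nhds_zero_nat (𝕜 := ℝ)
      have := (tendsto_const_nhds (x := x) (f := atTop (α := ℕ))).add h0
      simpa using this
    have hseqPhi : Tendsto (fun n : ℕ => Phi (x + 1/(n+1))) atTop (nhds (Phi x)) :=
      (hPhicont.tendsto x).comp hxseq
    exact hseqH.min (hseqG.max (hseqH.mul hseqPhi))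
  -- how Fi interacts with F
  have hFi_le_iff : ∀ {u : ℝ}, 0 < u → u ≤ 1 → ∀ c, (Fi u ≤ c ↔ u ≤ F c) :=
    fun {u} hu0 hu1 c => Stmt3Aux.finv_le_iff hFmono hFA0 hFB0 hFrc hu0 hu1 c
  have hFi_mono : ∀ {u u' : ℝ}, u ≤ u' → u' ≤ 1 → Fi u ≤ Fi u' :=
    fun {u u'} h h1 => Stmt3Aux.finv_mono hFB0 hFA0 hFmono h h1
  -- bounds on L and Mz
  have hL0 : ∀ t c, 0 ≤ L t c := fun t c => ENNReal.toReal_nonneg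
  have hMz0 : ∀ t c, 0 ≤ Mz t c := fun t c => ENNReal.toReal_nonneg
  have hL1 : ∀ t c, L t c ≤ 1 := by
    intro t c
    have := prob_le_one (μ := P) (s := {ω | Y t ω = true ∧ Iv t ω ≤ c})
    calc L t c ≤ (1 : ENNReal).toReal := ENNReal.toReal_mono (by simp) this
      _ = 1 := by simp
  have hps : ∀ t, p t + (P {ω | Y t ω = false}).toReal = 1 := by
    intro t
    have hcompl : {ω | Y t ω = false} = {ω | Y t ω = true}ᶜ := by
      ext ω; simp
    have h1 : P {ω | Y t ω = true} + P ({ω | Y t ω = true}ᶜ) = 1 := by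
      have := measure_add_measure_compl (μ := P) (s := {ω | Y t ω = true})
        (hYm t (measurableSet_singleton true))
      rwa [measure_univ] at this
    have h2 := congrArg ENNReal.toReal h1
    rw [ENNReal.toReal_add (measure_ne_top P _) (measure_ne_top P _)] at h2
    rw [hcompl]
    simpa using h2
  have hMzp1 : ∀ t c, Mz t c + p t ≤ 1 := by
    intro t c
    have hMle : Mz t c ≤ (P {ω | Y t ω = false}).toReal := by
      apply ENNReal.toReal_mono (measure_ne_top P _)
      apply measure_mono
      rintro ω ⟨h1, _⟩
      exact h1
    have := hps t
    linarith
  -- the constructed latent utilities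
  let v0 : Fin T → Ω → ℝ := fun t ω =>
    if Y t ω = true then min (Iv t ω) (Fi (L t (Iv t ω)))
    else (if Iv t ω < Fi (Mz t (Iv t ω) + p t) then Fi (Mz t (Iv t ω) + p t) else Iv t ω + 1)
  have hv0m : ∀ t, Measurable (v0 t) := by
    intro t
    have hFiL : Monotone fun i => Fi (L t i) :=
      fun i j hij => hFi_mono (hLmono t hij) (hL1 t j)
    have hFiM : Monotone fun i => Fi (Mz t i + p t) :=
      fun i j hij => hFi_mono (add_le_add_left (hMzmono t hij) _) (hMzp1 t j)
    have hg1 : Measurable fun i : ℝ => min i (Fi (L t i)) :=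
      measurable_id.min hFiL.measurable
    have hφ : Measurable fun i : ℝ => Fi (Mz t i + p t) := hFiM.measurable
    have hg2 : Measurable fun i : ℝ =>
        if i < Fi (Mz t i + p t) then Fi (Mz t i + p t) else i + 1 :=
      Measurable.ite (measurableSet_lt measurable_id hφ) hφ (measurable_id.add_const 1)
    have hYt : MeasurableSet {ω | Y t ω = true} := hYm t (measurableSet_singleton true)
    exact Measurable.ite hYt (hg1.comp (hIvm t)) (hg2.comp (hIvm t))
  have hpoint : ∀ t ω, (v0 t ω ≤ Iv t ω ↔ Y t ω = true) := by
    intro t ω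
    by_cases hy : Y t ω = true
    · have hv : v0 t ω = min (Iv t ω) (Fi (L t (Iv t ω))) := if_pos hy
      rw [hv]
      simp [hy, min_le_left]
    · have hv : v0 t ω = if Iv t ω < Fi (Mz t (Iv t ω) + p t)
          then Fi (Mz t (Iv t ω) + p t) else Iv t ω + 1 := if_neg hy
      rw [hv]
      constructor
      · intro h
        exfalso
        by_cases hlt : Iv t ω < Fi (Mz t (Iv t ω) + p t)
        · rw [if_pos hlt] at h
          linarith
        · rw [if_neg hlt] at h
          linarith
      · intro h
        exact absurd h hy
  -- the marginal distribution of each v0 t has CDF F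
  have hmarg : ∀ (t : Fin T) (c : ℝ), (P {ω | v0 t ω ≤ c}).toReal = F c := by
    intro t c
    have hA1m : MeasurableSet {ω | Y t ω = true} := hYm t (measurableSet_singleton true)
    have hA2m : MeasurableSet {ω | Y t ω = false} := hYm t (measurableSet_singleton false)
    have hq2' : (P {ω | Y t ω = false}).toReal = 1 - p t := by
      have := hps t
      linarith
    -- support facts for claimA
    have hcl1 : P ({ω | Y t ω = true} ∩ {ω | Iv t ω ≤ a t - 1}) = 0 := by
      apply measure_mono_null ?_ (hlow t)
      rintro ω ⟨_, h2⟩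
      have h2' : Iv t ω ≤ a t - 1 := h2
      show Iv t ω < a t
      linarith
    have hcl2 : P ({ω | Y t ω = false} ∩ {ω | Iv t ω ≤ a t - 1}) = 0 := by
      apply measure_mono_null ?_ (hlow t)
      rintro ω ⟨_, h2⟩
      have h2' : Iv t ω ≤ a t - 1 := h2
      show Iv t ω < a t
      linarith
    have hch : ∀ A : Set Ω, P (A ∩ {ω | Iv t ω ≤ b t}) = P A := by
      intro A
      apply le_antisymm ?_ (measure_mono Set.inter_subset_left) |>.symm
      have hsub : A ⊆ (A ∩ {ω | Iv t ω ≤ b t}) ∪ {ω | b t < Iv t ω} := by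
        intro ω hω
        rcases le_or_gt (Iv t ω) (b t) with h | h
        · exact Or.inl ⟨hω, h⟩
        · exact Or.inr h
      calc P A ≤ P ((A ∩ {ω | Iv t ω ≤ b t}) ∪ {ω | b t < Iv t ω}) := measure_mono hsub
        _ ≤ P (A ∩ {ω | Iv t ω ≤ b t}) + P {ω | b t < Iv t ω} := measure_union_le _ _
        _ = P (A ∩ {ω | Iv t ω ≤ b t}) := by rw [hhigh t, add_zero]
    have hclaimA1 : ∀ u : ℝ, 0 ≤ u →
        (P ({ω | Y t ω = true} ∩ {ω | L t (Iv t ω) ≤ u})).toReal = min u (p t) :=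
      fun u hu => Stmt3Aux.claimA P hA1m (hIvm t) (hatom t) hcl1 (hch _) (L t)
        (fun c' => rfl) u hu
    have hclaimA2 : ∀ u : ℝ, 0 ≤ u →
        (P ({ω | Y t ω = false} ∩ {ω | Mz t (Iv t ω) ≤ u})).toReal
          = min u ((P {ω | Y t ω = false}).toReal) :=
      fun u hu => Stmt3Aux.claimA P hA2m (hIvm t) (hatom t) hcl2 (hch _) (Mz t)
        (fun c' => rfl) u hu
    -- the degenerate null sets
    have hN1 : P ({ω | Y t ω = true} ∩ {ω | L t (Iv t ω) ≤ 0}) = 0 := by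
      have h := hclaimA1 0 le_rfl
      rw [min_eq_left (hp0 t)] at h
      exact ((ENNReal.toReal_eq_zero_iff _).mp h).resolve_right (measure_ne_top P _)
    have hN2a : P ({ω | Y t ω = false} ∩ {ω | Mz t (Iv t ω) ≤ 0}) = 0 := by
      have h := hclaimA2 0 le_rfl
      rw [min_eq_left ENNReal.toReal_nonneg] at h
      exact ((ENNReal.toReal_eq_zero_iff _).mp h).resolve_right (measure_ne_top P _)
    -- the bad set where the construction could fail
    have hbad : P {ω | Mz t (Iv t ω) + p t ≤ F (Iv t ω)} = 0 := by
      have hsubbad : {i : ℝ | Mz t i + p t ≤ F i} ⊆ {i | G i = H i} ∪ Set.Ici B0 := by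
        intro i hi
        have hi' : Mz t i + p t ≤ F i := hi
        rcases lt_or_ge i B0 with hiB | hiB
        · left
          have hsplit : (P {ω | Y t ω = false}).toReal ≤ Mz t i + R t i := by
            have hsub : {ω | Y t ω = false} ⊆
                {ω | Y t ω = false ∧ Iv t ω ≤ i} ∪ {ω | Y t ω = false ∧ i ≤ Iv t ω} := by
              intro ω hω
              rcases le_total (Iv t ω) i with h | h
              · exact Or.inl ⟨hω, h⟩
              · exact Or.inr ⟨hω, h⟩
            calc (P {ω | Y t ω = false}).toReal
                ≤ (P ({ω | Y t ω = false ∧ Iv t ω ≤ i} ∪ {ω | Y t ω = false ∧ i ≤ Iv t ω})).toReal :=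
                  ENNReal.toReal_mono (measure_ne_top P _) (measure_mono hsub)
              _ ≤ (P {ω | Y t ω = false ∧ Iv t ω ≤ i}
                  + P {ω | Y t ω = false ∧ i ≤ Iv t ω}).toReal :=
                  ENNReal.toReal_mono (by
                    exact ENNReal.add_ne_top.mpr ⟨measure_ne_top P _, measure_ne_top P _⟩)
                    (measure_union_le _ _)
              _ = Mz t i + R t i :=
                  ENNReal.toReal_add (measure_ne_top P _) (measure_ne_top P _)
          have hU : U t i ≤ Mz t i + p t := by
            have := hps t
            show 1 - R t i ≤ Mz t i + p t
            linarith
          have hHle : H i ≤ U t i := Finset.inf'_le (fun s => U s i) (Finset.mem_univ t)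
          have hFH : F i = H i := le_antisymm (hFleH i) (by linarith)
          have hPhiLt : Phi i < 1 := by
            have h1 : (i - A0)/(B0 - A0) < 1 := by
              rw [div_lt_one (by linarith)]
              linarith
            calc Phi i ≤ max 0 ((i - A0)/(B0 - A0)) := min_le_right _ _
              _ < 1 := max_lt one_pos h1
          have hmaxge : H i ≤ max (G i) (H i * Phi i) := by
            have hmin : min (H i) (max (G i) (H i * Phi i)) = H i := hFH
            exact min_eq_left_iff.mp hmin
          rcases le_or_gt (H i) (G i) with h | h
          · exact le_antisymm (hGH i) h
          · have h2 : H i ≤ H i * Phi i :=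
              (le_max_iff.mp hmaxge).resolve_left (not_le.mpr h)
            have hHzero : H i = 0 := by
              by_contra hnz
              have hpos : 0 < H i := lt_of_le_of_ne (hH0 i) (Ne.symm hnz)
              nlinarith
            have hGzero : G i = 0 := le_antisymm (hHzero ▸ hGH i) (hG0 i)
            exact hGzero.trans hHzero.symm
        · right
          exact hiB
      have hcontact' : volume {i : ℝ | G i = H i} = 0 := hcontact
      have hGm : Measurable G := hGmono.measurable
      have hHm : Measurable H := hHmono.measurable
      have hbad1 : P {ω | G (Iv t ω) = H (Iv t ω)} = 0 := by
        have heq : P {ω | G (Iv t ω) = H (Iv t ω)} = (P.map (Iv t)) {i | G i = H i} := by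
          rw [Measure.map_apply (hIvm t) (measurableSet_eq_fun hGm hHm)]
          rfl
        rw [heq, hmap' t, withDensity_apply _ (measurableSet_eq_fun hGm hHm)]
        exact setLIntegral_measure_zero _ _ hcontact'
      have hbad2 : P {ω | B0 ≤ Iv t ω} = 0 := by
        apply measure_mono_null ?_ (hhigh t)
        intro ω hω
        have hω' : B0 ≤ Iv t ω := hω
        have h := Finset.le_sup' (f := b) (Finset.mem_univ t)
        have hB0' : B0 = Finset.univ.sup' hne b + 1 := rfl
        show b t < Iv t ω
        linarith
      apply measure_mono_null ?_ (measure_union_null hbad1 hbad2)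
      intro ω hω
      have hω' : Mz t (Iv t ω) + p t ≤ F (Iv t ω) := hω
      rcases hsubbad hω' with h | h
      · exact Or.inl h
      · exact Or.inr h
    -- the Y = true part
    have hkey1 : ∀ ω, Y t ω = true → 0 < L t (Iv t ω) →
        (v0 t ω ≤ c ↔ L t (Iv t ω) ≤ F c) := by
      intro ω hy hpos
      have hv : v0 t ω = min (Iv t ω) (Fi (L t (Iv t ω))) := if_pos hy
      rw [hv]
      constructor
      · intro h
        rcases min_le_iff.mp h with h | h
        · exact le_trans (hLmono t h) (hLleF t c)
        · exact (hFi_le_iff hpos (hL1 t _) c).mp h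
      · intro h
        exact le_trans (min_le_right _ _) ((hFi_le_iff hpos (hL1 t _) c).mpr h)
    have hvE1 : P ({ω | Y t ω = true} ∩ {ω | v0 t ω ≤ c})
        = P ({ω | Y t ω = true} ∩ {ω | L t (Iv t ω) ≤ F c}) := by
      apply measure_congr
      apply (ae_eq_set).mpr
      constructor
      · apply measure_mono_null ?_ hN1
        rintro ω ⟨⟨hωA, hωv⟩, hnot⟩
        refine ⟨hωA, ?_⟩
        by_contra hgt
        have hgt' : 0 < L t (Iv t ω) := lt_of_not_ge hgt
        exact hnot ⟨hωA, (hkey1 ω hωA hgt').mp hωv⟩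
      · apply measure_mono_null ?_ hN1
        rintro ω ⟨⟨hωA, hωv⟩, hnot⟩
        refine ⟨hωA, ?_⟩
        by_contra hgt
        have hgt' : 0 < L t (Iv t ω) := lt_of_not_ge hgt
        exact hnot ⟨hωA, (hkey1 ω hωA hgt').mpr hωv⟩
    -- the Y = false part
    have hkey2 : ∀ ω, Y t ω = false → 0 < Mz t (Iv t ω) →
        ¬ (Mz t (Iv t ω) + p t ≤ F (Iv t ω)) →
        (v0 t ω ≤ c ↔ Mz t (Iv t ω) ≤ F c - p t) := by
      intro ω hy hpos hnb
      have hu1 : Mz t (Iv t ω) + p t ≤ 1 := hMzp1 t _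
      have hu0 : 0 < Mz t (Iv t ω) + p t := by linarith [hp0 t]
      have hy' : ¬ (Y t ω = true) := by simp [hy]
      have hIlt : Iv t ω < Fi (Mz t (Iv t ω) + p t) := by
        by_contra hge
        push_neg at hge
        exact hnb ((hFi_le_iff hu0 hu1 _).mp hge)
      have hv : v0 t ω = Fi (Mz t (Iv t ω) + p t) := by
        have h0 : v0 t ω = if Iv t ω < Fi (Mz t (Iv t ω) + p t)
            then Fi (Mz t (Iv t ω) + p t) else Iv t ω + 1 := if_neg hy'
        rw [h0, if_pos hIlt]
      rw [hv, hFi_le_iff hu0 hu1 c]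
      constructor <;> intro h <;> linarith
    have hvE2 : P ({ω | Y t ω = false} ∩ {ω | v0 t ω ≤ c})
        = P ({ω | Y t ω = false} ∩ {ω | Mz t (Iv t ω) ≤ F c - p t}) := by
      have hN2 : P (({ω | Y t ω = false} ∩ {ω | Mz t (Iv t ω) ≤ 0})
          ∪ {ω | Mz t (Iv t ω) + p t ≤ F (Iv t ω)}) = 0 :=
        measure_union_null hN2a hbad
      apply measure_congr
      apply (ae_eq_set).mpr
      constructor
      · apply measure_mono_null ?_ hN2
        rintro ω ⟨⟨hωA, hωv⟩, hnot⟩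
        by_cases hpos : 0 < Mz t (Iv t ω)
        · by_cases hb2 : Mz t (Iv t ω) + p t ≤ F (Iv t ω)
          · exact Or.inr hb2
          · exact absurd ⟨hωA, (hkey2 ω hωA hpos hb2).mp hωv⟩ hnot
        · exact Or.inl ⟨hωA, le_of_not_gt hpos⟩
      · apply measure_mono_null ?_ hN2
        rintro ω ⟨⟨hωA, hωv⟩, hnot⟩
        by_cases hpos : 0 < Mz t (Iv t ω)
        · by_cases hb2 : Mz t (Iv t ω) + p t ≤ F (Iv t ω)
          · exact Or.inr hb2
          · exact absurd ⟨hωA, (hkey2 ω hωA hpos hb2).mpr hωv⟩ hnot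
        · exact Or.inl ⟨hωA, le_of_not_gt hpos⟩
    -- compute the two pieces
    have hval1 : (P ({ω | Y t ω = true} ∩ {ω | v0 t ω ≤ c})).toReal = min (F c) (p t) := by
      rw [hvE1]
      exact hclaimA1 (F c) (hF0 c)
    have hval2 : (P ({ω | Y t ω = false} ∩ {ω | v0 t ω ≤ c})).toReal
        = min (max (F c - p t) 0) (1 - p t) := by
      rw [hvE2]
      rcases le_or_gt 0 (F c - p t) with hge | hlt
      · rw [hclaimA2 _ hge, hq2', max_eq_left hge]
      · have hempty : {ω | Y t ω = false} ∩ {ω | Mz t (Iv t ω) ≤ F c - p t} = ∅ := by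
          apply Set.eq_empty_iff_forall_notMem.mpr
          rintro ω ⟨_, h2⟩
          have h2' : Mz t (Iv t ω) ≤ F c - p t := h2
          have := hMz0 t (Iv t ω)
          linarith
        rw [hempty, max_eq_right hlt.le, min_eq_left (by linarith [hp1 t])]
        simp
    -- assemble
    have hsplit : {ω | v0 t ω ≤ c} = ({ω | Y t ω = true} ∩ {ω | v0 t ω ≤ c})
        ∪ ({ω | Y t ω = false} ∩ {ω | v0 t ω ≤ c}) := by
      ext ω
      simp only [Set.mem_setOf_eq, Set.mem_union, Set.mem_inter_iff]
      constructor
      · intro h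
        cases hy : Y t ω with
        | true => exact Or.inl ⟨rfl, h⟩
        | false => exact Or.inr ⟨rfl, h⟩
      · rintro (⟨_, h⟩ | ⟨_, h⟩) <;> exact h
    have hdisj : Disjoint ({ω | Y t ω = true} ∩ {ω | v0 t ω ≤ c})
        ({ω | Y t ω = false} ∩ {ω | v0 t ω ≤ c}) := by
      apply Set.disjoint_left.mpr
      rintro ω ⟨h1, _⟩ ⟨h2, _⟩
      have h1' : Y t ω = true := h1
      have h2' : Y t ω = false := h2
      rw [h1'] at h2'
      exact Bool.noConfusion h2'
    have hmeas2 : MeasurableSet ({ω | Y t ω = false} ∩ {ω | v0 t ω ≤ c}) :=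
      hA2m.inter ((hv0m t) measurableSet_Iic)
    rw [hsplit, measure_union hdisj hmeas2,
      ENNReal.toReal_add (measure_ne_top P _) (measure_ne_top P _), hval1, hval2]
    rcases le_or_gt (F c) (p t) with hle | hgt
    · rw [min_eq_left hle, max_eq_right (by linarith), min_eq_left (by linarith [hp1 t])]
      ring
    · rw [min_eq_right hgt.le, max_eq_left (by linarith), min_eq_left (by linarith [hF1 c])]
      ring
  -- now build the witness on a Type-0 space
  let g : Ω → (Fin T → Fin dx → ℝ) × (Fin T → ℝ) := fun ω => (fun t => X t ω, fun t => v0 t ω)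
  have hgm : Measurable g :=
    Measurable.prodMk (measurable_pi_lambda _ fun t => hXm t)
      (measurable_pi_lambda _ fun t => hv0m t)
  refine ⟨(Fin T → Fin dx → ℝ) × (Fin T → ℝ), inferInstance, P.map g,
    fun t ω' => ω'.1 t, fun t ω' => ω'.2 t, ?_, ?_, ?_, ?_, ?_, ?_⟩
  · exact Measure.isProbabilityMeasure_map hgm.aemeasurable
  · exact fun t => (measurable_pi_apply t).comp measurable_fst
  · exact fun t => (measurable_pi_apply t).comp measurable_snd
  · exact Measure.map_map (measurable_pi_lambda _ fun t => (measurable_pi_apply t).comp measurable_fst) hgm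
  · intro t s
    have h1 : ∀ r : Fin T,
        (P.map g).map (fun ω' : (Fin T → Fin dx → ℝ) × (Fin T → ℝ) => ω'.2 r) = P.map (v0 r) := by
      intro r
      have hm2 : Measurable fun ω' : (Fin T → Fin dx → ℝ) × (Fin T → ℝ) => ω'.2 r :=
        (measurable_pi_apply r).comp measurable_snd
      rw [Measure.map_map hm2 hgm]
      rfl
    show (P.map g).map (fun ω' : (Fin T → Fin dx → ℝ) × (Fin T → ℝ) => ω'.2 t)
      = (P.map g).map (fun ω' : (Fin T → Fin dx → ℝ) × (Fin T → ℝ) => ω'.2 s)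
    rw [h1 t, h1 s]
    haveI : IsProbabilityMeasure (P.map (v0 t)) := Measure.isProbabilityMeasure_map (hv0m t).aemeasurable
    apply Measure.ext_of_Iic
    intro x
    rw [Measure.map_apply (hv0m t) measurableSet_Iic, Measure.map_apply (hv0m s) measurableSet_Iic]
    apply (ENNReal.toReal_eq_toReal_iff' (measure_ne_top P _) (measure_ne_top P _)).mp
    show (P {ω | v0 t ω ≤ x}).toReal = (P {ω | v0 s ω ≤ x}).toReal
    rw [hmarg t x, hmarg s x]
  · intro y B hB
    let E : Set ((Fin T → Fin dx → ℝ) × (Fin T → ℝ)) :=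
      {ω' | (∀ t, (ω'.2 t ≤ z t ⬝ᵥ β + ω'.1 t ⬝ᵥ γ ↔ y t = true)) ∧ ω'.1 ∈ B}
    have hDm : ∀ t, MeasurableSet
        {ω' : (Fin T → Fin dx → ℝ) × (Fin T → ℝ) | ω'.2 t ≤ z t ⬝ᵥ β + ω'.1 t ⬝ᵥ γ} := by
      intro t
      apply measurableSet_le
      · exact (measurable_pi_apply t).comp measurable_snd
      · have h2 : Measurable fun ω' : (Fin T → Fin dx → ℝ) × (Fin T → ℝ) => ω'.1 t ⬝ᵥ γ := by
          simp only [dotProduct]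
          exact Finset.measurable_sum _ fun i _ =>
            ((measurable_pi_apply i).comp ((measurable_pi_apply t).comp measurable_fst)).mul_const _
        exact measurable_const.add h2
    have hEm : MeasurableSet E := by
      have h1 : MeasurableSet {ω' : (Fin T → Fin dx → ℝ) × (Fin T → ℝ) |
          ∀ t, (ω'.2 t ≤ z t ⬝ᵥ β + ω'.1 t ⬝ᵥ γ ↔ y t = true)} := by
        rw [Set.setOf_forall]
        apply MeasurableSet.iInter
        intro t
        by_cases hyt : y t = true
        · simp only [hyt, iff_true]
          exact hDm t
        · have hyf : y t = false := by revert hyt; cases y t <;> simp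
          simp only [hyf, Bool.false_eq_true, iff_false]
          have h3 := (hDm t).compl
          exact h3
      have h2 : MeasurableSet {ω' : (Fin T → Fin dx → ℝ) × (Fin T → ℝ) | ω'.1 ∈ B} :=
        measurable_fst hB
      exact h1.inter h2
    have hgpre : g ⁻¹' E = {ω | (∀ t', Y t' ω = y t') ∧ (fun t' => X t' ω) ∈ B} := by
      ext ω
      simp only [Set.mem_preimage, Set.mem_setOf_eq, E, g]
      apply and_congr_left'
      apply forall_congr'
      intro t'
      rw [show (v0 t' ω ≤ z t' ⬝ᵥ β + X t' ω ⬝ᵥ γ) ↔ (Y t' ω = true) from hpoint t' ω]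
      cases hY : Y t' ω <;> cases hy : y t' <;> simp
    show ((P.map g) E).toReal = ∫ x in B, q y x ∂(P.map fun ω t => X t ω)
    rw [Measure.map_apply hgm hEm, hgpre]
    exact hq_rcd y B hB
end

section
/- Construction of per-period marginals (relaxed discrete problem): suppose each X_t takes only finitely many values and θ = (β, γ) satisfies max_{t≤T} L_t(c; θ) ≤ min_{s≤T} U_s(c; θ) for every c ∈ ℝ. Then for each t = 1, …, T there exists a family of cumulative distribution functions c ↦ F*_t(c│x), one for each x = (x_1, …, x_T) in the support of X, such that: (i) stationarity given z: the aggregated function Σ_x P(X = x)·F*_t(c│x) is the same for every t and every c ∈ ℝ; and (ii) per-period conditional choice probability matching: F*_t(z_t·β + x_t·γ │ x) = p_t(x) for every t and every x in the support of X, where p_t(x) := P(Y_t = 1 │ X = x). -/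
open MeasureTheory Matrix Filter

section helpers

lemma seg_mono {a b : ℝ} (hab : a ≤ b) {v v' : ℝ} (hv : v ≤ v') :
    min v b - min v a ≤ min v' b - min v' a := by
  simp only [min_def]; split_ifs <;> linarith

lemma seg_nonneg {a b v : ℝ} (hab : a ≤ b) : 0 ≤ min v b - min v a := by
  simp only [min_def]; split_ifs <;> linarith

lemma telescope_sum {α K : Type*} [LinearOrder K] [DecidableEq α]
    (f : ℝ → ℝ) (g : α → ℝ) (s : Finset α) (k : α → K) (hk : Set.InjOn k s) :
    (∑ x ∈ s, (f (∑ x' ∈ s.filter (fun x' => k x' ≤ k x), g x')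
      - f (∑ x' ∈ s.filter (fun x' => k x' < k x), g x')))
      = f (∑ x ∈ s, g x) - f 0 := by
  induction s using Finset.strongInduction with
  | _ s ih =>
    rcases s.eq_empty_or_nonempty with rfl | hne
    · simp
    · obtain ⟨m, hm, hmax⟩ := s.exists_max_image k hne
      have h1 : s.filter (fun x' => k x' ≤ k m) = s := by
        apply Finset.filter_true_of_mem; intro x hx; exact hmax x hx
      have h2 : s.filter (fun x' => k x' < k m) = s.erase m := by
        ext x; simp only [Finset.mem_filter, Finset.mem_erase]
        constructor
        · rintro ⟨hx, hlt⟩; exact ⟨fun h => absurd (h ▸ hlt) (lt_irrefl _), hx⟩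
        · rintro ⟨hne', hx⟩
          exact ⟨hx, lt_of_le_of_ne (hmax x hx) (fun h => hne' (hk hx hm h))⟩
      have key : ∀ x ∈ s.erase m,
          (s.filter (fun x' => k x' ≤ k x) = (s.erase m).filter (fun x' => k x' ≤ k x)) ∧
          (s.filter (fun x' => k x' < k x) = (s.erase m).filter (fun x' => k x' < k x)) := by
        intro x hx
        obtain ⟨hxne, hxs⟩ := Finset.mem_erase.mp hx
        have hmx : ¬ (k m ≤ k x) := by
          intro hle
          exact hxne (hk hxs hm (le_antisymm (hmax x hxs) hle))
        constructor <;>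
        · ext y; simp only [Finset.mem_filter, Finset.mem_erase]
          constructor
          · rintro ⟨hy, hy2⟩
            refine ⟨⟨fun h => ?_, hy⟩, hy2⟩
            subst h; first | exact absurd hy2 hmx | exact absurd hy2.le hmx
          · rintro ⟨⟨_, hy⟩, hy2⟩; exact ⟨hy, hy2⟩
      rw [← Finset.add_sum_erase _ _ hm, h1, h2]
      have hsum : ∑ x ∈ s.erase m,
          (f (∑ x' ∈ s.filter (fun x' => k x' ≤ k x), g x')
            - f (∑ x' ∈ s.filter (fun x' => k x' < k x), g x'))
          = f (∑ x ∈ s.erase m, g x) - f 0 := by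
        rw [Finset.sum_congr rfl (fun x hx => by rw [(key x hx).1, (key x hx).2])]
        exact ih (s.erase m) (Finset.erase_ssubset hm)
          (hk.mono (by intro y hy; exact Finset.mem_of_mem_erase hy))
      rw [hsum]; ring

lemma partition_measure {Ω α : Type*} [MeasurableSpace Ω] [MeasurableSpace α]
    [MeasurableSingletonClass α]
    (P : Measure Ω) (g : Ω → α) (hg : Measurable g)
    (s : Finset α) (hs : ∀ ω, g ω ∈ s)
    (A : Set Ω) (hA : MeasurableSet A) (q : α → Prop) [DecidablePred q] :
    P (A ∩ {ω | q (g ω)}) = ∑ x ∈ s.filter q, P (A ∩ {ω | g ω = x}) := by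
  rw [← measure_biUnion_finset]
  · congr 1; ext ω
    simp only [Set.mem_iUnion, Finset.mem_filter, Set.mem_inter_iff, Set.mem_setOf_eq]
    constructor
    · rintro ⟨hA', hq⟩; exact ⟨g ω, ⟨hs ω, hq⟩, hA', rfl⟩
    · rintro ⟨x, ⟨_, hq⟩, hA', hgx⟩; exact ⟨hA', hgx ▸ hq⟩
  · intro x hx y hy hxy
    apply Set.disjoint_left.mpr
    rintro ω ⟨_, h1⟩ ⟨_, h2⟩
    exact hxy (by simp only [Set.mem_setOf_eq] at h1 h2; rw [← h1, ← h2])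
  · intro x _
    exact hA.inter (hg (measurableSet_singleton x))

end helpers

section construction

variable {α : Type*}

/-- lower end of the "left interval". -/
noncomputable def lSd (T0 : Finset α) (key : α → ℝ ×ₗ ℕ) (a : α → ℝ) (x : α) : ℝ :=
  ∑ x' ∈ T0.filter (fun x' => key x' < key x), a x'

noncomputable def lEd (T0 : Finset α) (key : α → ℝ ×ₗ ℕ) (a : α → ℝ) (x : α) : ℝ :=
  ∑ x' ∈ T0.filter (fun x' => key x' ≤ key x), a x'

noncomputable def rSd (T0 : Finset α) (key : α → ℝ ×ₗ ℕ) (b : α → ℝ) (x : α) : ℝ :=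
  1 - ∑ x' ∈ T0.filter (fun x' => key x ≤ key x'), b x'

noncomputable def rEd (T0 : Finset α) (key : α → ℝ ×ₗ ℕ) (b : α → ℝ) (x : α) : ℝ :=
  1 - ∑ x' ∈ T0.filter (fun x' => key x < key x'), b x'

noncomputable def Fd (T0 : Finset α) (key : α → ℝ ×ₗ ℕ) (a b : α → ℝ) (w : α → ℝ)
    (x : α) (v : ℝ) : ℝ :=
  (min v (lEd T0 key a x) - min v (lSd T0 key a x)
    + min v (rEd T0 key b x) - min v (rSd T0 key b x)) / w x

noncomputable def Gd {T : ℕ} (hT : (Finset.univ : Finset (Fin T)).Nonempty)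
    (T0 : Finset α) (cidx : Fin T → α → ℝ) (a : Fin T → α → ℝ) (C : ℝ) (c : ℝ) : ℝ :=
  max (Finset.univ.sup' hT (fun t => ∑ x ∈ T0.filter (fun x => cidx t x ≤ c), a t x))
    (if C ≤ c then 1 else 0)

theorem construct {T : ℕ} [DecidableEq α]
    (hT : (Finset.univ : Finset (Fin T)).Nonempty)
    (T0 : Finset α) (hT0 : T0.Nonempty)
    (cidx : Fin T → α → ℝ) (aR bR : Fin T → α → ℝ) (wR : α → ℝ)
    (ha : ∀ t x, 0 ≤ aR t x) (hb : ∀ t x, 0 ≤ bR t x)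
    (hab : ∀ t x, aR t x + bR t x = wR x)
    (hw1 : ∑ x ∈ T0, wR x = 1)
    (hineq : ∀ (c : ℝ) (t s : Fin T),
      ∑ x ∈ T0.filter (fun x => cidx t x ≤ c), aR t x
        ≤ 1 - ∑ x ∈ T0.filter (fun x => c ≤ cidx s x), bR s x) :
    ∃ F : Fin T → α → ℝ → ℝ,
      (∀ t x, x ∈ T0 → 0 < wR x → Monotone (F t x) ∧
        (∀ c, ContinuousWithinAt (F t x) (Set.Ici c) c) ∧
        Tendsto (F t x) atBot (nhds 0) ∧ Tendsto (F t x) atTop (nhds 1) ∧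
        ∀ c, F t x c ∈ Set.Icc (0:ℝ) 1) ∧
      (∀ (t s : Fin T) (c : ℝ), ∑ x ∈ T0, wR x * F t x c = ∑ x ∈ T0, wR x * F s x c) ∧
      (∀ t x, x ∈ T0 → 0 < wR x → F t x (cidx t x) = aR t x / wR x) := by
  classical
  -- tiebreak
  obtain ⟨e, he⟩ : ∃ e : α → ℕ, Set.InjOn e T0 := by
    refine ⟨fun x => if h : x ∈ T0 then (T0.equivFin ⟨x, h⟩ : ℕ) else 0, ?_⟩
    intro x hx y hy hxy
    have hx' : x ∈ T0 := hx
    have hy' : y ∈ T0 := hy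
    simp only at hxy
    rw [dif_pos hx', dif_pos hy'] at hxy
    have := T0.equivFin.injective (Fin.val_injective hxy)
    exact Subtype.mk_eq_mk.mp this
  set key : Fin T → α → ℝ ×ₗ ℕ := fun t x => toLex (cidx t x, e x) with hkey
  have keyinj : ∀ t : Fin T, Set.InjOn (key t) T0 := by
    intro t x hx y hy hxy
    have h2 : (cidx t x, e x) = (cidx t y, e y) := toLex.injective hxy
    exact he hx hy (congrArg Prod.snd h2)
  have key_le_c : ∀ (t : Fin T) (x y : α), key t x ≤ key t y → cidx t x ≤ cidx t y := by
    intro t x y h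
    rcases Prod.Lex.le_iff.mp h with h | h
    · exact le_of_lt h
    · exact le_of_eq h.1
  -- bounds
  have hw0 : ∀ x, 0 ≤ wR x := fun x => (hab hT.choose x) ▸ add_nonneg (ha _ x) (hb _ x)
  have haw : ∀ t x, aR t x ≤ wR x := fun t x => by have := hab t x; have := hb t x; linarith
  have hbw : ∀ t x, bR t x ≤ wR x := fun t x => by have := hab t x; have := ha t x; linarith
  have hsum_ab : ∀ t : Fin T, (∑ x ∈ T0, aR t x) + (∑ x ∈ T0, bR t x) = 1 := by
    intro t; rw [← Finset.sum_add_distrib]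
    rw [Finset.sum_congr rfl (fun x _ => hab t x)]; exact hw1
  have hsuma_le : ∀ t : Fin T, (∑ x ∈ T0, aR t x) ≤ 1 := by
    intro t; have := hsum_ab t
    have : 0 ≤ ∑ x ∈ T0, bR t x := Finset.sum_nonneg (fun x _ => hb t x)
    linarith [hsum_ab t]
  have hl_le_one : ∀ (t : Fin T) (c : ℝ),
      (∑ x ∈ T0.filter (fun x => cidx t x ≤ c), aR t x) ≤ 1 := by
    intro t c
    calc (∑ x ∈ T0.filter (fun x => cidx t x ≤ c), aR t x)
        ≤ ∑ x ∈ T0, aR t x := Finset.sum_le_sum_of_subset_of_nonneg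
          (Finset.filter_subset _ _) (fun x hx _ => ha t x)
      _ ≤ 1 := hsuma_le t
  -- the constant C
  set D0 : Finset ℝ := (Finset.univ ×ˢ T0).image (fun p => cidx p.1 p.2) with hD0
  have hD0ne : D0.Nonempty := (hT.product hT0).image _
  set C : ℝ := D0.max' hD0ne + 1 with hC
  have hCbig : ∀ (t : Fin T) (x : α), x ∈ T0 → cidx t x < C := by
    intro t x hx
    have : cidx t x ∈ D0 := Finset.mem_image.mpr
      ⟨(t, x), Finset.mem_product.mpr ⟨Finset.mem_univ t, hx⟩, rfl⟩
    have := D0.le_max' _ this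
    rw [hC]; linarith
  set G : ℝ → ℝ := Gd hT T0 cidx aR C with hG
  -- G facts
  have hGLB : ∀ (t : Fin T) (c : ℝ),
      (∑ x ∈ T0.filter (fun x => cidx t x ≤ c), aR t x) ≤ G c := by
    intro t c
    rw [hG]; unfold Gd
    exact le_trans
      (Finset.le_sup' (fun t => ∑ x ∈ T0.filter (fun x => cidx t x ≤ c), aR t x)
        (Finset.mem_univ t)) (le_max_left _ _)
  have hG0 : ∀ c, 0 ≤ G c := by
    intro c
    rw [hG]; unfold Gd
    refine le_trans ?_ (le_max_right _ _)
    split <;> norm_num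
  have hG1 : ∀ c, G c ≤ 1 := by
    intro c
    rw [hG]; unfold Gd
    apply max_le
    · exact Finset.sup'_le _ _ (fun t _ => hl_le_one t c)
    · split <;> norm_num
  have hGmono : Monotone G := by
    intro c c' hcc
    rw [hG]; unfold Gd
    apply max_le_max
    · apply Finset.sup'_le
      intro t _
      refine le_trans ?_
        (Finset.le_sup' (fun t => ∑ x ∈ T0.filter (fun x => cidx t x ≤ c'), aR t x)
          (Finset.mem_univ t))
      apply Finset.sum_le_sum_of_subset_of_nonneg
      · exact Finset.monotone_filter_right T0 (fun x _ hx => le_trans hx hcc)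
      · intro x _ _; exact ha t x
    · rcases le_or_gt C c with h1 | h1
      · rw [if_pos h1, if_pos (h1.trans hcc)]
      · rcases le_or_gt C c' with h2 | h2
        · rw [if_pos h2]; split <;> norm_num
        · rw [if_neg (not_le.mpr h1), if_neg (not_le.mpr h2)]
  have hGU : ∀ (t : Fin T) (c : ℝ),
      G c ≤ 1 - ∑ x ∈ T0.filter (fun x => c ≤ cidx t x), bR t x := by
    intro t c
    rw [hG]; unfold Gd
    apply max_le
    · exact Finset.sup'_le _ _ (fun s _ => hineq c s t)
    · split_ifs with h
      · have hempty : T0.filter (fun x => c ≤ cidx t x) = ∅ := by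
          apply Finset.filter_false_of_mem
          intro x hx
          exact not_le.mpr (lt_of_lt_of_le (hCbig t x hx) h)
        rw [hempty, Finset.sum_empty]; norm_num
      · have h1 : ∑ x ∈ T0.filter (fun x => c ≤ cidx t x), bR t x ≤ ∑ x ∈ T0, bR t x :=
          Finset.sum_le_sum_of_subset_of_nonneg (Finset.filter_subset _ _)
            (fun x _ _ => hb t x)
        have h2 : 0 ≤ ∑ x ∈ T0, aR t x := Finset.sum_nonneg (fun x _ => ha t x)
        linarith [hsum_ab t]
  -- eventual constancy to the right
  have hGright : ∀ c : ℝ, ∃ ε > 0, ∀ c', c ≤ c' → c' < c + ε → G c' = G c := by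
    intro c
    set Dfin : Finset ℝ := insert C D0 with hDfin
    set s' : Finset ℝ := Dfin.filter (fun d => c < d) with hs'
    refine ⟨if h : s'.Nonempty then s'.min' h - c else 1, ?_, ?_⟩
    · split_ifs with h
      · have := (Finset.mem_filter.mp (s'.min'_mem h)).2
        linarith
      · norm_num
    · intro c' h1 h2
      have hsame : ∀ d ∈ Dfin, (d ≤ c' ↔ d ≤ c) := by
        intro d hd
        constructor
        · intro hdc'
          by_contra hdc
          push_neg at hdc
          have hds : d ∈ s' := Finset.mem_filter.mpr ⟨hd, hdc⟩
          have hne : s'.Nonempty := ⟨d, hds⟩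
          rw [dif_pos hne] at h2
          have := s'.min'_le _ hds
          linarith
        · intro hdc; exact le_trans hdc h1
      rw [hG]
      unfold Gd
      congr 1
      · apply Finset.sup'_congr _ rfl
        intro t _
        apply Finset.sum_congr _ (fun _ _ => rfl)
        apply Finset.filter_congr
        intro x hx
        have : cidx t x ∈ Dfin := Finset.mem_insert_of_mem (Finset.mem_image.mpr
          ⟨(t, x), Finset.mem_product.mpr ⟨Finset.mem_univ t, hx⟩, rfl⟩)
        exact hsame _ this
      · have := hsame C (Finset.mem_insert_self _ _)
        simp only [this]
  have hGbot0 : ∀ᶠ c in atBot, G c = 0 := by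
    have hne : (insert C D0).Nonempty := ⟨C, Finset.mem_insert_self _ _⟩
    refine eventually_atBot.mpr ⟨(insert C D0).min' hne - 1, ?_⟩
    intro c hc
    have hlt : ∀ d ∈ insert C D0, c < d := by
      intro d hd
      have := (insert C D0).min'_le d hd
      linarith
    rw [hG]; unfold Gd
    have h1 : ∀ t : Fin T, T0.filter (fun x => cidx t x ≤ c) = ∅ := by
      intro t
      apply Finset.filter_false_of_mem
      intro x hx
      have : cidx t x ∈ insert C D0 := Finset.mem_insert_of_mem (Finset.mem_image.mpr
        ⟨(t, x), Finset.mem_product.mpr ⟨Finset.mem_univ t, hx⟩, rfl⟩)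
      exact not_le.mpr (hlt _ this)
    have h2 : ¬ (C ≤ c) := not_le.mpr (hlt C (Finset.mem_insert_self _ _))
    rw [if_neg h2]
    simp only [h1, Finset.sum_empty]
    rw [Finset.sup'_const, max_self]
  have hGtop1 : ∀ c, C ≤ c → G c = 1 := by
    intro c h
    rw [hG]; unfold Gd
    rw [if_pos h]
    exact max_eq_right (Finset.sup'_le _ _ (fun t _ => hl_le_one t c))
  -- interval facts
  have hlS0 : ∀ (t : Fin T) (x : α), 0 ≤ lSd T0 (key t) (aR t) x :=
    fun t x => Finset.sum_nonneg (fun y _ => ha t y)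
  have hlSlE : ∀ (t : Fin T) (x : α), lSd T0 (key t) (aR t) x ≤ lEd T0 (key t) (aR t) x :=
    fun t x => Finset.sum_le_sum_of_subset_of_nonneg
      (Finset.monotone_filter_right T0 (fun y _ hy => hy.le)) (fun y _ _ => ha t y)
  have hlE1 : ∀ (t : Fin T) (x : α), lEd T0 (key t) (aR t) x ≤ 1 := by
    intro t x
    calc lEd T0 (key t) (aR t) x ≤ ∑ y ∈ T0, aR t y :=
          Finset.sum_le_sum_of_subset_of_nonneg (Finset.filter_subset _ _)
            (fun y _ _ => ha t y)
      _ ≤ 1 := hsuma_le t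
  have hrSrE : ∀ (t : Fin T) (x : α), rSd T0 (key t) (bR t) x ≤ rEd T0 (key t) (bR t) x :=
    fun t x => sub_le_sub_left
      (Finset.sum_le_sum_of_subset_of_nonneg
        (Finset.monotone_filter_right T0 (fun y _ hy => hy.le)) (fun y _ _ => hb t y)) 1
  have hrE1 : ∀ (t : Fin T) (x : α), rEd T0 (key t) (bR t) x ≤ 1 :=
    fun t x => sub_le_self 1 (Finset.sum_nonneg (fun y _ => hb t y))
  have hrS0 : ∀ (t : Fin T) (x : α), 0 ≤ rSd T0 (key t) (bR t) x := by
    intro t x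
    have h1 : ∑ y ∈ T0.filter (fun x' => key t x ≤ key t x'), bR t y ≤ ∑ y ∈ T0, bR t y :=
      Finset.sum_le_sum_of_subset_of_nonneg (Finset.filter_subset _ _) (fun y _ _ => hb t y)
    have h2 : 0 ≤ ∑ y ∈ T0, aR t y := Finset.sum_nonneg (fun y _ => ha t y)
    have := hsum_ab t
    unfold rSd
    linarith
  have hstep : ∀ (t : Fin T) (x : α), x ∈ T0 →
      lEd T0 (key t) (aR t) x = lSd T0 (key t) (aR t) x + aR t x ∧
      rEd T0 (key t) (bR t) x = rSd T0 (key t) (bR t) x + bR t x := by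
    intro t x hx
    have hfl : T0.filter (fun x' => key t x' ≤ key t x)
        = insert x (T0.filter (fun x' => key t x' < key t x)) := by
      ext y
      simp only [Finset.mem_filter, Finset.mem_insert]
      constructor
      · rintro ⟨hy, hle⟩
        rcases lt_or_eq_of_le hle with h | h
        · exact Or.inr ⟨hy, h⟩
        · exact Or.inl (keyinj t hy hx h)
      · rintro (rfl | ⟨hy, hlt⟩)
        · exact ⟨hx, le_refl _⟩
        · exact ⟨hy, hlt.le⟩
    have hfr : T0.filter (fun x' => key t x ≤ key t x')
        = insert x (T0.filter (fun x' => key t x < key t x')) := by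
      ext y
      simp only [Finset.mem_filter, Finset.mem_insert]
      constructor
      · rintro ⟨hy, hle⟩
        rcases lt_or_eq_of_le hle with h | h
        · exact Or.inr ⟨hy, h⟩
        · exact Or.inl ((keyinj t hx hy h).symm)
      · rintro (rfl | ⟨hy, hlt⟩)
        · exact ⟨hx, le_refl _⟩
        · exact ⟨hy, hlt.le⟩
    have hnm1 : x ∉ T0.filter (fun x' => key t x' < key t x) :=
      fun h => absurd (Finset.mem_filter.mp h).2 (lt_irrefl _)
    have hnm2 : x ∉ T0.filter (fun x' => key t x < key t x') :=
      fun h => absurd (Finset.mem_filter.mp h).2 (lt_irrefl _)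
    constructor
    · unfold lEd lSd
      rw [hfl, Finset.sum_insert hnm1]
      ring
    · unfold rEd rSd
      rw [hfr, Finset.sum_insert hnm2]
      ring
  set F : Fin T → α → ℝ → ℝ :=
    fun t x c => Fd T0 (key t) (aR t) (bR t) wR x (G c) with hF
  -- the aggregation identity
  have hagg : ∀ (t : Fin T) (c : ℝ), ∑ x ∈ T0, wR x * F t x c = G c := by
    intro t c
    have hterm : ∀ x ∈ T0, wR x * F t x c =
        (min (G c) (lEd T0 (key t) (aR t) x) - min (G c) (lSd T0 (key t) (aR t) x))
        + (min (G c) (rEd T0 (key t) (bR t) x) - min (G c) (rSd T0 (key t) (bR t) x)) := by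
      intro x hx
      simp only [hF, Fd]
      rcases eq_or_lt_of_le (hw0 x) with h0 | h0
      · have haz : aR t x = 0 := le_antisymm (by rw [h0]; exact haw t x) (ha t x)
        have hbz : bR t x = 0 := le_antisymm (by rw [h0]; exact hbw t x) (hb t x)
        have h1 := (hstep t x hx).1
        have h2 := (hstep t x hx).2
        rw [haz, add_zero] at h1
        rw [hbz, add_zero] at h2
        rw [h1, h2, ← h0]
        simp
      · rw [mul_div_cancel₀ _ (ne_of_gt h0)]
        ring
    rw [Finset.sum_congr rfl hterm, Finset.sum_add_distrib]
    have hTL := telescope_sum (fun v => min (G c) v) (aR t) T0 (key t) (keyinj t)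
    have hTLl : ∑ x ∈ T0, (min (G c) (lEd T0 (key t) (aR t) x)
        - min (G c) (lSd T0 (key t) (aR t) x))
        = min (G c) (∑ y ∈ T0, aR t y) - min (G c) 0 := by
      simpa only [lEd, lSd] using hTL
    have hTR := telescope_sum (fun v => min (G c) (1 - v)) (bR t) T0
      (fun x => OrderDual.toDual (key t x))
      (fun x hx y hy h => keyinj t hx hy (OrderDual.toDual.injective h))
    simp only [OrderDual.toDual_le_toDual, OrderDual.toDual_lt_toDual] at hTR
    have hTRr : ∑ x ∈ T0, (min (G c) (rEd T0 (key t) (bR t) x)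
        - min (G c) (rSd T0 (key t) (bR t) x))
        = min (G c) 1 - min (G c) (1 - ∑ y ∈ T0, bR t y) := by
      have h := congrArg Neg.neg hTR
      rw [← Finset.sum_neg_distrib] at h
      simp only [neg_sub, sub_zero] at h
      simpa only [rEd, rSd] using h
    rw [hTLl, hTRr]
    rw [min_eq_right (hG0 c), min_eq_left (hG1 c)]
    have hba : (1 : ℝ) - ∑ y ∈ T0, bR t y = ∑ y ∈ T0, aR t y := by
      linarith [hsum_ab t]
    rw [hba]
    ring
  refine ⟨F, ?_, ?_, ?_⟩
  · -- CDF properties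
    intro t x hx hwx
    refine ⟨?_, ?_, ?_, ?_, ?_⟩
    · intro c c' hcc
      simp only [hF, Fd]
      have h1 := seg_mono (hlSlE t x) (hGmono hcc)
      have h2 := seg_mono (hrSrE t x) (hGmono hcc)
      exact (div_le_div_iff_of_pos_right hwx).mpr (by linarith)
    · intro c
      obtain ⟨ε, hε, hconst⟩ := hGright c
      have hev : ∀ᶠ c' in nhdsWithin c (Set.Ici c), F t x c' = F t x c := by
        have hmem : Set.Ico c (c + ε) ∈ nhdsWithin c (Set.Ici c) :=
          Ico_mem_nhdsGE_of_mem ⟨le_refl c, by linarith⟩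
        filter_upwards [hmem] with c' hc'
        simp only [hF]
        rw [hconst c' hc'.1 hc'.2]
      exact Tendsto.congr' (by filter_upwards [hev] with c' h using h.symm) tendsto_const_nhds
    · have hzero : Fd T0 (key t) (aR t) (bR t) wR x 0 = 0 := by
        simp only [Fd]
        rw [min_eq_left (hlS0 t x), min_eq_left ((hlS0 t x).trans (hlSlE t x)),
          min_eq_left (hrS0 t x), min_eq_left ((hrS0 t x).trans (hrSrE t x))]
        simp
      refine Tendsto.congr' ?_ tendsto_const_nhds
      filter_upwards [hGbot0] with c hc
      simp only [hF]
      rw [hc, hzero]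
    · have hone : Fd T0 (key t) (aR t) (bR t) wR x 1 = 1 := by
        simp only [Fd]
        rw [min_eq_right (hlE1 t x), min_eq_right ((hlSlE t x).trans (hlE1 t x)),
          min_eq_right (hrE1 t x), min_eq_right ((hrSrE t x).trans (hrE1 t x))]
        have h1 := (hstep t x hx).1
        have h2 := (hstep t x hx).2
        have h3 := hab t x
        have : lEd T0 (key t) (aR t) x - lSd T0 (key t) (aR t) x
            + rEd T0 (key t) (bR t) x - rSd T0 (key t) (bR t) x = wR x := by linarith
        rw [this, div_self (ne_of_gt hwx)]
      refine Tendsto.congr' ?_ tendsto_const_nhds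
      filter_upwards [eventually_atTop.mpr ⟨C, fun c hc => hGtop1 c hc⟩] with c hc
      simp only [hF]
      rw [hc, hone]
    · intro c
      constructor
      · apply div_nonneg _ (hw0 x)
        have h1 := seg_nonneg (a := lSd T0 (key t) (aR t) x)
          (b := lEd T0 (key t) (aR t) x) (v := G c) (hlSlE t x)
        have h2 := seg_nonneg (a := rSd T0 (key t) (bR t) x)
          (b := rEd T0 (key t) (bR t) x) (v := G c) (hrSrE t x)
        linarith
      · simp only [hF, Fd]
        rw [div_le_one hwx]
        have h1 := seg_mono (hlSlE t x) (hG1 c)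
        have h2 := seg_mono (hrSrE t x) (hG1 c)
        rw [min_eq_right (hlE1 t x), min_eq_right ((hlSlE t x).trans (hlE1 t x))] at h1
        rw [min_eq_right (hrE1 t x), min_eq_right ((hrSrE t x).trans (hrE1 t x))] at h2
        have h3 := (hstep t x hx).1
        have h4 := (hstep t x hx).2
        have h5 := hab t x
        linarith
  · -- aggregation
    intro t s c
    rw [hagg t c, hagg s c]
  · -- matching
    intro t x hx hwx
    simp only [hF, Fd]
    have h1 : lEd T0 (key t) (aR t) x ≤ G (cidx t x) := by
      refine le_trans ?_ (hGLB t (cidx t x))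
      apply Finset.sum_le_sum_of_subset_of_nonneg
      · intro y hy
        rw [Finset.mem_filter] at hy ⊢
        exact ⟨hy.1, key_le_c t y x hy.2⟩
      · intro y _ _; exact ha t y
    have h2 : G (cidx t x) ≤ rSd T0 (key t) (bR t) x := by
      refine le_trans (hGU t (cidx t x)) ?_
      apply sub_le_sub_left
      apply Finset.sum_le_sum_of_subset_of_nonneg
      · intro y hy
        rw [Finset.mem_filter] at hy ⊢
        exact ⟨hy.1, key_le_c t x y hy.2⟩
      · intro y _ _; exact hb t y
    rw [min_eq_right h1, min_eq_right ((hlSlE t x).trans h1),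
      min_eq_left (h2.trans (hrSrE t x)), min_eq_left h2]
    have h3 := (hstep t x hx).1
    have : lEd T0 (key t) (aR t) x - lSd T0 (key t) (aR t) x
        + G (cidx t x) - G (cidx t x) = aR t x := by linarith
    rw [this]

end construction



/-- Relaxed discrete problem (construction of per-period marginals).
If each `X_t` takes only finitely many values and `θ = (β, γ)` satisfies all the
conditional moment inequalities, then for each `t` there is a family of CDFs
`c ↦ F t x c`, one for each `x` in the support of `X = (X_1, …, X_T)`, such that
(i) the aggregated function `Σ_x P(X = x)·F t x c` is the same for every `t`
(stationarity given `z`), and (ii) `F t x (z_t·β + x_t·γ) = p_t(x) := P(Y_t = 1│X = x)`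
for every `t` and every `x` in the support of `X`. -/
theorem stmt_4
    {Ω : Type*} [MeasurableSpace Ω] (P : Measure Ω) [IsProbabilityMeasure P]
    {T dz dx : ℕ}
    (z : Fin T → (Fin dz → ℝ))
    (Y : Fin T → Ω → Bool) (X : Fin T → Ω → (Fin dx → ℝ))
    (hYm : ∀ t, Measurable (Y t)) (hXm : ∀ t, Measurable (X t))
    (hfin : (Set.range fun ω (t : Fin T) => X t ω).Finite)
    (β : Fin dz → ℝ) (γ : Fin dx → ℝ)
    (hineq : ∀ (c : ℝ) (t s : Fin T),
      (P {ω | Y t ω = true ∧ z t ⬝ᵥ β + X t ω ⬝ᵥ γ ≤ c}).toReal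
        ≤ 1 - (P {ω | Y s ω = false ∧ c ≤ z s ⬝ᵥ β + X s ω ⬝ᵥ γ}).toReal) :
    ∃ F : Fin T → (Fin T → (Fin dx → ℝ)) → ℝ → ℝ,
      -- each F t x is a cumulative distribution function (for x in the support of X)
      (∀ (t : Fin T) (x : Fin T → (Fin dx → ℝ)), 0 < P {ω | (fun t => X t ω) = x} →
        Monotone (F t x) ∧
        (∀ c : ℝ, ContinuousWithinAt (F t x) (Set.Ici c) c) ∧
        Tendsto (F t x) atBot (nhds 0) ∧
        Tendsto (F t x) atTop (nhds 1) ∧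
        (∀ c : ℝ, F t x c ∈ Set.Icc (0 : ℝ) 1)) ∧
      -- (i) stationarity given z of the aggregated CDFs
      (∀ (t s : Fin T) (c : ℝ),
        ∑ x ∈ hfin.toFinset, (P {ω | (fun t => X t ω) = x}).toReal * F t x c
          = ∑ x ∈ hfin.toFinset, (P {ω | (fun t => X t ω) = x}).toReal * F s x c) ∧
      -- (ii) per-period conditional choice probability matching
      (∀ (t : Fin T) (x : Fin T → (Fin dx → ℝ)), 0 < P {ω | (fun t => X t ω) = x} →
        F t x (z t ⬝ᵥ β + x t ⬝ᵥ γ)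
          = (P {ω | Y t ω = true ∧ (fun t => X t ω) = x}).toReal
            / (P {ω | (fun t => X t ω) = x}).toReal) := by
  classical
  by_cases hT : Nonempty (Fin T)
  case neg =>
    exact ⟨fun _ _ _ => 0, fun t => absurd ⟨t⟩ hT, fun t => absurd ⟨t⟩ hT,
      fun t => absurd ⟨t⟩ hT⟩
  case pos =>
  have hTne : (Finset.univ : Finset (Fin T)).Nonempty := Finset.univ_nonempty
  have hΩ : Nonempty Ω := by
    by_contra h
    rw [not_nonempty_iff] at h
    have h1 : P Set.univ = 1 := measure_univ
    rw [Set.univ_eq_empty_iff.mpr h, measure_empty] at h1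
    exact zero_ne_one h1
  have hgm : Measurable (fun ω (t : Fin T) => X t ω) := measurable_pi_lambda _ hXm
  have hgs : ∀ ω, (fun t => X t ω) ∈ hfin.toFinset := fun ω => hfin.mem_toFinset.mpr ⟨ω, rfl⟩
  have hT0 : hfin.toFinset.Nonempty := ⟨(fun t => X t (Classical.arbitrary Ω)), hgs _⟩
  have hYmeas : ∀ (t : Fin T) (b : Bool), MeasurableSet {ω | Y t ω = b} :=
    fun t b => hYm t (measurableSet_singleton b)
  have hEx : ∀ x : Fin T → Fin dx → ℝ, MeasurableSet {ω | (fun t => X t ω) = x} :=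
    fun x => hgm (measurableSet_singleton x)
  -- a + b = w
  have hab : ∀ (t : Fin T) (x : Fin T → Fin dx → ℝ),
      (P {ω | Y t ω = true ∧ (fun t' => X t' ω) = x}).toReal
        + (P {ω | Y t ω = false ∧ (fun t' => X t' ω) = x}).toReal
      = (P {ω | (fun t' => X t' ω) = x}).toReal := by
    intro t x
    have hdisj : Disjoint {ω | Y t ω = true ∧ (fun t' => X t' ω) = x}
        {ω | Y t ω = false ∧ (fun t' => X t' ω) = x} := by
      apply Set.disjoint_left.mpr
      rintro ω ⟨h1, _⟩ ⟨h2, _⟩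
      rw [h1] at h2
      exact Bool.noConfusion h2
    have hunion : {ω | Y t ω = true ∧ (fun t' => X t' ω) = x}
        ∪ {ω | Y t ω = false ∧ (fun t' => X t' ω) = x} = {ω | (fun t' => X t' ω) = x} := by
      ext ω
      simp only [Set.mem_union, Set.mem_setOf_eq]
      constructor
      · rintro (⟨_, h⟩ | ⟨_, h⟩) <;> exact h
      · intro h
        cases hYb : Y t ω
        · exact Or.inr ⟨rfl, h⟩
        · exact Or.inl ⟨rfl, h⟩
    rw [← ENNReal.toReal_add (measure_ne_top _ _) (measure_ne_top _ _)]
    congr 1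
    have hm2 : MeasurableSet {ω | Y t ω = false ∧ (fun t' => X t' ω) = x} :=
      (hYmeas t false).inter (hEx x)
    rw [← measure_union hdisj hm2, hunion]
  -- sum of weights is 1
  have hw1 : ∑ x ∈ hfin.toFinset, (P {ω | (fun t' => X t' ω) = x}).toReal = 1 := by
    have h := partition_measure P (fun ω (t : Fin T) => X t ω) hgm hfin.toFinset hgs
      Set.univ MeasurableSet.univ (fun _ => True)
    simp only [Set.setOf_true, Set.inter_self, Set.univ_inter, Finset.filter_true] at h
    rw [← ENNReal.toReal_sum (fun _ _ => measure_ne_top _ _), ← h]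
    simp
  -- the inequalities, in summed form
  have hineq' : ∀ (c : ℝ) (t s : Fin T),
      ∑ x ∈ hfin.toFinset.filter (fun x => z t ⬝ᵥ β + x t ⬝ᵥ γ ≤ c),
        (P {ω | Y t ω = true ∧ (fun t' => X t' ω) = x}).toReal
      ≤ 1 - ∑ x ∈ hfin.toFinset.filter (fun x => c ≤ z s ⬝ᵥ β + x s ⬝ᵥ γ),
        (P {ω | Y s ω = false ∧ (fun t' => X t' ω) = x}).toReal := by
    intro c t s
    have h1 := partition_measure P (fun ω (t : Fin T) => X t ω) hgm hfin.toFinset hgs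
      {ω | Y t ω = true} (hYmeas t true) (fun x => z t ⬝ᵥ β + x t ⬝ᵥ γ ≤ c)
    have h2 := partition_measure P (fun ω (t : Fin T) => X t ω) hgm hfin.toFinset hgs
      {ω | Y s ω = false} (hYmeas s false) (fun x => c ≤ z s ⬝ᵥ β + x s ⬝ᵥ γ)
    have e1 : (P {ω | Y t ω = true ∧ z t ⬝ᵥ β + X t ω ⬝ᵥ γ ≤ c}).toReal
        = ∑ x ∈ hfin.toFinset.filter (fun x => z t ⬝ᵥ β + x t ⬝ᵥ γ ≤ c),
          (P {ω | Y t ω = true ∧ (fun t' => X t' ω) = x}).toReal := by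
      rw [show {ω | Y t ω = true ∧ z t ⬝ᵥ β + X t ω ⬝ᵥ γ ≤ c}
          = {ω | Y t ω = true} ∩ {ω | (fun x => z t ⬝ᵥ β + x t ⬝ᵥ γ ≤ c)
              ((fun t' => X t' ω))} from rfl, h1,
        ENNReal.toReal_sum (fun _ _ => measure_ne_top _ _)]
      rfl
    have e2 : (P {ω | Y s ω = false ∧ c ≤ z s ⬝ᵥ β + X s ω ⬝ᵥ γ}).toReal
        = ∑ x ∈ hfin.toFinset.filter (fun x => c ≤ z s ⬝ᵥ β + x s ⬝ᵥ γ),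
          (P {ω | Y s ω = false ∧ (fun t' => X t' ω) = x}).toReal := by
      rw [show {ω | Y s ω = false ∧ c ≤ z s ⬝ᵥ β + X s ω ⬝ᵥ γ}
          = {ω | Y s ω = false} ∩ {ω | (fun x => c ≤ z s ⬝ᵥ β + x s ⬝ᵥ γ)
              ((fun t' => X t' ω))} from rfl, h2,
        ENNReal.toReal_sum (fun _ _ => measure_ne_top _ _)]
      rfl
    rw [← e1, ← e2]
    exact hineq c t s
  obtain ⟨F, h1, h2, h3⟩ := construct hTne hfin.toFinset hT0
    (fun t x => z t ⬝ᵥ β + x t ⬝ᵥ γ)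
    (fun t x => (P {ω | Y t ω = true ∧ (fun t' => X t' ω) = x}).toReal)
    (fun t x => (P {ω | Y t ω = false ∧ (fun t' => X t' ω) = x}).toReal)
    (fun x => (P {ω | (fun t' => X t' ω) = x}).toReal)
    (fun t x => ENNReal.toReal_nonneg) (fun t x => ENNReal.toReal_nonneg)
    hab hw1 hineq'
  refine ⟨F, ?_, h2, ?_⟩
  · intro t x hPx
    obtain ⟨ω, hω⟩ := nonempty_of_measure_ne_zero (ne_of_gt hPx)
    have hx : x ∈ hfin.toFinset := hfin.mem_toFinset.mpr ⟨ω, hω⟩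
    have hwx : (0:ℝ) < (P {ω | (fun t' => X t' ω) = x}).toReal :=
      ENNReal.toReal_pos (ne_of_gt hPx) (measure_ne_top _ _)
    exact h1 t x hx hwx
  · intro t x hPx
    obtain ⟨ω, hω⟩ := nonempty_of_measure_ne_zero (ne_of_gt hPx)
    have hx : x ∈ hfin.toFinset := hfin.mem_toFinset.mpr ⟨ω, hω⟩
    have hwx : (0:ℝ) < (P {ω | (fun t' => X t' ω) = x}).toReal :=
      ENNReal.toReal_pos (ne_of_gt hPx) (measure_ne_top _ _)
    exact h3 t x hx hwx
end

section
/- Marginal-to-joint construction: let C ⊂ ℝ be a nonempty finite set, T ≥ 1, and for each t ∈ {1, …, T} let f_t : C → [0,1] be a probability mass function (Σ_{c∈C} f_t(c) = 1) and c*_t ∈ ℝ a cutoff. Let p : {0,1}^T → [0,1] be a probability mass function (Σ_{y} p(y) = 1) whose period-t marginals are consistent with the cutoffs, i.e. Σ_{y : y_t = 1} p(y) = Σ_{c ∈ C, c ≤ c*_t} f_t(c) for every t. Then there exists a joint probability mass function f* : C^T → [0,1] (Σ_{c⃗ ∈ C^T} f*(c⃗) = 1) such that: (i) for every t and every c ∈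 C, Σ_{c⃗ ∈ C^T : c⃗_t = c} f*(c⃗) = f_t(c) (the t-th marginal of f* is f_t); and (ii) for every y ∈ {0,1}^T, Σ over {c⃗ ∈ C^T : for all t, (c⃗_t ≤ c*_t ⟺ y_t = 1)} of f*(c⃗) equals p(y) (the joint cutoff-crossing probabilities match the joint choice probabilities). -/
open scoped Classical

lemma aux_decide_eq_iff {P : Prop} [Decidable P] {s : Bool} :
    (decide P = s) ↔ (P ↔ s = true) := by
  cases s <;> simp

/-- Marginal-to-joint construction. Let `C ⊂ ℝ` be a nonempty finite set,
`T ≥ 1`, and for each `t` let `f t : C → [0,1]` be a pmf and `c*_t` a cutoff. Let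
`p : {0,1}^T → [0,1]` be a pmf whose period-`t` marginals are consistent with the
cutoffs: `Σ_{y : y_t = 1} p(y) = Σ_{c ∈ C, c ≤ c*_t} f t c`. Then there is a joint pmf
`f*` on `C^T` whose `t`-th marginal is `f t` and whose joint cutoff-crossing
probabilities match `p`. -/
theorem stmt_5
    {T : ℕ} (hT : 1 ≤ T)
    (C : Finset ℝ) (hC : C.Nonempty)
    (f : Fin T → ℝ → ℝ)
    (hf_nonneg : ∀ (t : Fin T), ∀ c ∈ C, 0 ≤ f t c ∧ f t c ≤ 1)
    (hf_sum : ∀ t : Fin T, ∑ c ∈ C, f t c = 1)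
    (cstar : Fin T → ℝ)
    (p : (Fin T → Bool) → ℝ)
    (hp_nonneg : ∀ y, 0 ≤ p y ∧ p y ≤ 1)
    (hp_sum : ∑ y : Fin T → Bool, p y = 1)
    (hconsist : ∀ t : Fin T,
      ∑ y ∈ Finset.univ.filter (fun y : Fin T → Bool => y t = true), p y
        = ∑ c ∈ C.filter (fun c => c ≤ cstar t), f t c) :
    ∃ fstar : (Fin T → ℝ) → ℝ,
      (∀ cv ∈ Fintype.piFinset (fun _ : Fin T => C), 0 ≤ fstar cv ∧ fstar cv ≤ 1) ∧
      (∑ cv ∈ Fintype.piFinset (fun _ : Fin T => C), fstar cv = 1) ∧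
      -- (i) the t-th marginal of f* is f t
      (∀ (t : Fin T), ∀ c ∈ C,
        ∑ cv ∈ (Fintype.piFinset (fun _ : Fin T => C)).filter (fun cv => cv t = c),
          fstar cv = f t c) ∧
      -- (ii) joint cutoff-crossing probabilities match the joint choice probabilities
      (∀ y : Fin T → Bool,
        ∑ cv ∈ (Fintype.piFinset (fun _ : Fin T => C)).filter
            (fun cv => ∀ t, (cv t ≤ cstar t ↔ y t = true)),
          fstar cv = p y) := by
  classical
  set b : Fin T → ℝ → Bool := fun t c => decide (c ≤ cstar t) with hb
  set q : Fin T → Bool → ℝ := fun t s => ∑ c ∈ C.filter (fun c => b t c = s), f t c with hq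
  set r : Fin T → ℝ → ℝ :=
    fun t c => if q t (b t c) = 0 then 0 else f t c / q t (b t c) with hr
  -- basic facts
  have hq_nonneg : ∀ t s, 0 ≤ q t s := by
    intro t s
    exact Finset.sum_nonneg fun c hc => (hf_nonneg t c (Finset.mem_filter.mp hc).1).1
  have hq_add : ∀ t, q t true + q t false = 1 := by
    intro t
    have h := Finset.sum_filter_add_sum_filter_not C (fun c => b t c = true) (f t)
    rw [hf_sum t] at h
    rw [hq]
    simp only [Bool.not_eq_true] at h
    simpa using h
  have hp_fiber : ∀ (t : Fin T) (s : Bool),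
      ∑ y ∈ Finset.univ.filter (fun y : Fin T → Bool => y t = s), p y = q t s := by
    intro t s
    have htrue : ∑ y ∈ Finset.univ.filter (fun y : Fin T → Bool => y t = true), p y
        = q t true := by
      rw [hconsist t, hq]
      congr 1
      apply Finset.filter_congr
      intro c _
      simp [hb]
    cases s
    · have h := Finset.sum_filter_add_sum_filter_not Finset.univ
        (fun y : Fin T → Bool => y t = true) p
      rw [hp_sum, htrue] at h
      simp only [Bool.not_eq_true] at h
      have := hq_add t
      linarith
    · exact htrue
  have hp_zero : ∀ (y : Fin T → Bool) (t : Fin T), q t (y t) = 0 → p y = 0 := by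
    intro y t hqz
    have hmem : y ∈ Finset.univ.filter (fun y' : Fin T → Bool => y' t = y t) := by
      simp
    have hle : p y ≤ ∑ y' ∈ Finset.univ.filter (fun y' : Fin T → Bool => y' t = y t), p y' :=
      Finset.single_le_sum (fun y' _ => (hp_nonneg y').1) hmem
    rw [hp_fiber t (y t), hqz] at hle
    exact le_antisymm hle (hp_nonneg y).1
  have hr_nonneg : ∀ (t : Fin T), ∀ c ∈ C, 0 ≤ r t c := by
    intro t c hc
    rw [hr]
    dsimp only
    split
    · exact le_refl 0
    · exact div_nonneg (hf_nonneg t c hc).1 (hq_nonneg t (b t c))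
  have hr_sum : ∀ (t : Fin T) (s : Bool),
      ∑ c ∈ C.filter (fun c => b t c = s), r t c = if q t s = 0 then 0 else 1 := by
    intro t s
    have hcongr : ∀ c ∈ C.filter (fun c => b t c = s),
        r t c = if q t s = 0 then 0 else f t c / q t s := by
      intro c hc
      rw [hr]
      dsimp only
      rw [(Finset.mem_filter.mp hc).2]
    rw [Finset.sum_congr rfl hcongr]
    by_cases hz : q t s = 0
    · simp [hz]
    · simp only [hz, if_neg hz, if_false]
      rw [← Finset.sum_div,
        show (∑ c ∈ C.filter (fun c => b t c = s), f t c) = q t s from rfl, div_self hz]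
  -- r q identity
  have hrq : ∀ (t : Fin T), ∀ c ∈ C, q t (b t c) * r t c = f t c := by
    intro t c hc
    rw [hr]
    dsimp only
    by_cases hz : q t (b t c) = 0
    · rw [if_pos hz, hz, zero_mul]
      have hmem : c ∈ C.filter (fun c' => b t c' = b t c) := by simp [hc]
      have hle : f t c ≤ ∑ c' ∈ C.filter (fun c' => b t c' = b t c), f t c' :=
        Finset.single_le_sum (fun c' hc' => (hf_nonneg t c' (Finset.mem_filter.mp hc').1).1) hmem
      rw [show (∑ c' ∈ C.filter (fun c' => b t c' = b t c), f t c') = q t (b t c) from rfl,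
        hz] at hle
      exact (le_antisymm hle (hf_nonneg t c hc).1).symm
    · rw [if_neg hz]
      field_simp
  -- the candidate joint pmf
  set fst : (Fin T → ℝ) → ℝ :=
    fun cv => p (fun t => b t (cv t)) * ∏ t, r t (cv t) with hfst
  -- (ii)
  have key2 : ∀ y : Fin T → Bool,
      ∑ cv ∈ (Fintype.piFinset (fun _ : Fin T => C)).filter
          (fun cv => ∀ t, (cv t ≤ cstar t ↔ y t = true)), fst cv = p y := by
    intro y
    have hset : (Fintype.piFinset fun _ : Fin T => C).filter
        (fun cv => ∀ t, (cv t ≤ cstar t ↔ y t = true))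
        = Fintype.piFinset (fun t => C.filter fun c => b t c = y t) := by
      ext cv
      simp only [Finset.mem_filter, Fintype.mem_piFinset, hb, aux_decide_eq_iff]
      exact ⟨fun ⟨h1, h2⟩ t => ⟨h1 t, h2 t⟩, fun h => ⟨fun t => (h t).1, fun t => (h t).2⟩⟩
    rw [hset]
    have hcongr : ∀ cv ∈ Fintype.piFinset (fun t => C.filter fun c => b t c = y t),
        fst cv = p y * ∏ t, r t (cv t) := by
      intro cv hcv
      have hYy : (fun t => b t (cv t)) = y := by
        funext t
        exact (Finset.mem_filter.mp (Fintype.mem_piFinset.mp hcv t)).2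
      rw [hfst]
      dsimp only
      rw [hYy]
    rw [Finset.sum_congr rfl hcongr, ← Finset.mul_sum, ← Finset.prod_univ_sum]
    by_cases hz : ∀ t, q t (y t) ≠ 0
    · have hone : ∀ t : Fin T, (∑ c ∈ C.filter fun c => b t c = y t, r t c) = 1 := by
        intro t
        rw [hr_sum t (y t), if_neg (hz t)]
      rw [Finset.prod_congr rfl (fun t _ => hone t)]
      simp
    · push_neg at hz
      obtain ⟨t, ht⟩ := hz
      rw [hp_zero y t ht, zero_mul]
  -- total mass 1
  have sum1 : ∑ cv ∈ Fintype.piFinset (fun _ : Fin T => C), fst cv = 1 := by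
    rw [← Finset.sum_fiberwise (Fintype.piFinset fun _ : Fin T => C)
        (fun cv => (fun t => b t (cv t))) fst, ← hp_sum]
    apply Finset.sum_congr rfl
    intro y _
    rw [← key2 y]
    congr 1
    apply Finset.filter_congr
    intro cv _
    simp only [funext_iff, hb, aux_decide_eq_iff]
  -- marginals
  have key1 : ∀ (t0 : Fin T), ∀ c ∈ C,
      ∑ cv ∈ (Fintype.piFinset (fun _ : Fin T => C)).filter (fun cv => cv t0 = c),
        fst cv = f t0 c := by
    intro t0 c hc
    rw [← Finset.sum_fiberwise
        ((Fintype.piFinset fun _ : Fin T => C).filter (fun cv => cv t0 = c))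
        (fun cv => (fun t => b t (cv t))) fst]
    have hterm : ∀ y : Fin T → Bool,
        ∑ cv ∈ ((Fintype.piFinset fun _ : Fin T => C).filter
            (fun cv => cv t0 = c)).filter (fun cv => (fun t => b t (cv t)) = y), fst cv
        = (if y t0 = b t0 c then p y else 0) * r t0 c := by
      intro y
      by_cases hyt : y t0 = b t0 c
      · have hcongr : ∀ cv ∈ ((Fintype.piFinset fun _ : Fin T => C).filter
            (fun cv => cv t0 = c)).filter (fun cv => (fun t => b t (cv t)) = y),
            fst cv = p y * ∏ t, r t (cv t) := by
          intro cv hcv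
          rw [hfst]
          dsimp only
          rw [(Finset.mem_filter.mp hcv).2]
        have hset : ((Fintype.piFinset fun _ : Fin T => C).filter
            (fun cv => cv t0 = c)).filter (fun cv => (fun t => b t (cv t)) = y)
            = Fintype.piFinset
              (fun t => if t = t0 then {c} else C.filter fun x => b t x = y t) := by
          ext cv
          simp only [Finset.mem_filter, Fintype.mem_piFinset, funext_iff]
          constructor
          · rintro ⟨⟨h1, h2⟩, h3⟩ t
            by_cases hteq : t = t0
            · subst hteq
              simp [h2]
            · simp only [if_neg hteq, Finset.mem_filter]
              exact ⟨h1 t, h3 t⟩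
          · intro h
            have hcv0 : cv t0 = c := by
              have := h t0
              simpa using this
            refine ⟨⟨fun t => ?_, hcv0⟩, fun t => ?_⟩
            · by_cases hteq : t = t0
              · subst hteq
                rw [hcv0]; exact hc
              · have := h t
                rw [if_neg hteq] at this
                exact (Finset.mem_filter.mp this).1
            · by_cases hteq : t = t0
              · subst hteq
                rw [hcv0, ← hyt]
              · have := h t
                rw [if_neg hteq] at this
                exact (Finset.mem_filter.mp this).2
        rw [Finset.sum_congr rfl hcongr, ← Finset.mul_sum, hset,
          ← Finset.prod_univ_sum, if_pos hyt]
        by_cases hpz : p y = 0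
        · rw [hpz, zero_mul, zero_mul]
        · have hqnz : ∀ t, q t (y t) ≠ 0 := by
            intro t hqt
            exact hpz (hp_zero y t hqt)
          have hprod : ∀ t : Fin T,
              (∑ x ∈ (if t = t0 then {c} else C.filter fun x => b t x = y t), r t x)
              = if t = t0 then r t c else 1 := by
            intro t
            by_cases hteq : t = t0
            · rw [if_pos hteq, if_pos hteq, Finset.sum_singleton]
            · rw [if_neg hteq, if_neg hteq, hr_sum t (y t), if_neg (hqnz t)]
          rw [Finset.prod_congr rfl (fun t _ => hprod t),
            Finset.prod_ite_eq' Finset.univ t0 (fun t => r t c),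
            if_pos (Finset.mem_univ t0)]
      · have hempty : ((Fintype.piFinset fun _ : Fin T => C).filter
            (fun cv => cv t0 = c)).filter (fun cv => (fun t => b t (cv t)) = y) = ∅ := by
          ext cv
          simp only [Finset.mem_filter, Finset.notMem_empty, iff_false, not_and,
            funext_iff]
          rintro ⟨h1, h2⟩ h3
          exact hyt ((h3 t0).symm.trans (by rw [h2]))
        rw [hempty, if_neg hyt, zero_mul, Finset.sum_empty]
    rw [Finset.sum_congr rfl (fun y _ => hterm y), ← Finset.sum_mul,
      ← Finset.sum_filter, hp_fiber t0 (b t0 c), hrq t0 c hc]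
  -- nonnegativity on the support
  have hnn : ∀ cv ∈ Fintype.piFinset (fun _ : Fin T => C), 0 ≤ fst cv := by
    intro cv hcv
    rw [hfst]
    exact mul_nonneg (hp_nonneg _).1
      (Finset.prod_nonneg fun t _ => hr_nonneg t (cv t) (Fintype.mem_piFinset.mp hcv t))
  refine ⟨fst, fun cv hcv => ⟨hnn cv hcv, ?_⟩, sum1, key1, key2⟩
  calc fst cv ≤ ∑ cv ∈ Fintype.piFinset (fun _ : Fin T => C), fst cv :=
        Finset.single_le_sum hnn hcv
    _ = 1 := sum1
end

section
/- In the general nonseparable model Y_t = G(W_t·θ₀, α, ε_t) with G weakly increasing in its first argument, if the joint law of (α, ε_t) is the same for all t (partial stationarity conditional on z and α), then for every c ∈ ℝ, every y ∈ ℝ, and all t, s ∈ {1, …, T}: P(Y_t ≤ y and W_t·θ₀ ≥ c) ≤ 1 − P(Y_s > y and W_s·θ₀ ≤ c). Hence θ₀ belongs to the identified set Θ_{I,gen} defined by these inequalities. -/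
open MeasureTheory Matrix

/-- In the general nonseparable model `Y_t = G(W_t·θ₀, α, ε_t)` with `G`
weakly increasing in its first argument, if the joint law of `(α, ε_t)` is the same for
all `t` (partial stationarity conditional on `z` and `α`), then for every `c ∈ ℝ`,
every `y ∈ ℝ`, and all `t, s`:
`P(Y_t ≤ y ∧ W_t·θ₀ ≥ c) ≤ 1 − P(Y_s > y ∧ W_s·θ₀ ≤ c)`. -/
theorem stmt_6
    {Ω : Type*} [MeasurableSpace Ω] (P : Measure Ω) [IsProbabilityMeasure P]
    {T dw : ℕ} {A E : Type*} [MeasurableSpace A] [MeasurableSpace E]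
    (α : Ω → A) (ε : Fin T → Ω → E) (W : Fin T → Ω → (Fin dw → ℝ))
    (hα : Measurable α) (hε : ∀ t, Measurable (ε t)) (hW : ∀ t, Measurable (W t))
    (G : ℝ → A → E → ℝ)
    (hGmeas : Measurable fun p : ℝ × A × E => G p.1 p.2.1 p.2.2)
    (hGmono : ∀ (a : A) (e : E), Monotone fun δ : ℝ => G δ a e)
    (θ₀ : Fin dw → ℝ)
    (Y : Fin T → Ω → ℝ)
    (hY : ∀ t ω, Y t ω = G (W t ω ⬝ᵥ θ₀) (α ω) (ε t ω))
    (hstat : ∀ t s : Fin T,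
      P.map (fun ω => (α ω, ε t ω)) = P.map (fun ω => (α ω, ε s ω))) :
    ∀ (c y : ℝ) (t s : Fin T),
      (P {ω | Y t ω ≤ y ∧ c ≤ W t ω ⬝ᵥ θ₀}).toReal
        ≤ 1 - (P {ω | y < Y s ω ∧ W s ω ⬝ᵥ θ₀ ≤ c}).toReal := by
  intro c y t s
  -- the function p ↦ G c p.1 p.2 on A × E
  have hf : Measurable (fun p : A × E => G c p.1 p.2) := by
    have : Measurable (fun p : A × E => ((c, p.1, p.2) : ℝ × A × E)) :=
      measurable_const.prodMk (measurable_fst.prodMk measurable_snd)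
    exact hGmeas.comp this
  set B : Set (A × E) := {p : A × E | G c p.1 p.2 ≤ y} with hB
  have hBm : MeasurableSet B := hf measurableSet_Iic
  have hpair : ∀ u : Fin T, Measurable (fun ω => (α ω, ε u ω)) :=
    fun u => hα.prodMk (hε u)
  -- S u = preimage
  have hSeq : ∀ u : Fin T,
      P ((fun ω => (α ω, ε u ω)) ⁻¹' B) = (P.map (fun ω => (α ω, ε u ω))) B := by
    intro u
    rw [Measure.map_apply (hpair u) hBm]
  have hstat' : P ((fun ω => (α ω, ε t ω)) ⁻¹' B)
      = P ((fun ω => (α ω, ε s ω)) ⁻¹' B) := by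
    rw [hSeq t, hSeq s, hstat t s]
  set St := (fun ω => (α ω, ε t ω)) ⁻¹' B with hSt
  set Ss := (fun ω => (α ω, ε s ω)) ⁻¹' B with hSs
  have hStm : MeasurableSet St := (hpair t) hBm
  have hSsm : MeasurableSet Ss := (hpair s) hBm
  -- event A ⊆ St
  have h1 : {ω | Y t ω ≤ y ∧ c ≤ W t ω ⬝ᵥ θ₀} ⊆ St := by
    intro ω hω
    have : G c (α ω) (ε t ω) ≤ G (W t ω ⬝ᵥ θ₀) (α ω) (ε t ω) :=
      hGmono (α ω) (ε t ω) hω.2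
    exact le_trans this (by rw [← hY t ω]; exact hω.1)
  -- event B' ⊆ Ssᶜ
  have h2 : {ω | y < Y s ω ∧ W s ω ⬝ᵥ θ₀ ≤ c} ⊆ Ssᶜ := by
    intro ω hω
    have hle : G (W s ω ⬝ᵥ θ₀) (α ω) (ε s ω) ≤ G c (α ω) (ε s ω) :=
      hGmono (α ω) (ε s ω) hω.2
    have : y < G c (α ω) (ε s ω) := lt_of_lt_of_le (by rw [← hY s ω]; exact hω.1) hle
    exact not_le.mpr this
  have hA : P {ω | Y t ω ≤ y ∧ c ≤ W t ω ⬝ᵥ θ₀} ≤ P Ss :=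
    le_trans (measure_mono h1) (le_of_eq hstat')
  have hBle : P {ω | y < Y s ω ∧ W s ω ⬝ᵥ θ₀ ≤ c} ≤ P Ssᶜ := measure_mono h2
  have hcompl : (P Ssᶜ).toReal = 1 - (P Ss).toReal := by
    have := prob_compl_eq_one_sub hSsm (μ := P)
    rw [this, ENNReal.toReal_sub_of_le (prob_le_one) (by simp)]
    simp
  have hfin : ∀ S : Set Ω, P S ≠ ⊤ := fun S => measure_ne_top P S
  have hAr : (P {ω | Y t ω ≤ y ∧ c ≤ W t ω ⬝ᵥ θ₀}).toReal ≤ (P Ss).toReal :=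
    ENNReal.toReal_mono (hfin _) hA
  have hBr : (P {ω | y < Y s ω ∧ W s ω ⬝ᵥ θ₀ ≤ c}).toReal ≤ (P Ssᶜ).toReal :=
    ENNReal.toReal_mono (hfin _) hBle
  have := hBr.trans_eq hcompl
  linarith
end

section
/- Reduction to finitely many restrictions in the general model: define, for real-valued outcomes Y_t and indices I_t(θ) = z_t·β + X_t·γ, the condition Ineq(c, y; θ): max_{t≤T} P(Y_t ≤ y and I_t(θ) ≥ c) ≤ 1 − max_{s≤T} P(Y_s > y and I_s(θ) ≤ c). Then: (i) if each X_t takes values only in the finite set {x̄_1, …, x̄_K} ⊂ ℝ^{d_x}, and Ineq(c, y; θ) holds for every y ∈ ℝ and every c in the finite set {z_t·β + x̄_k·γ : t ≤ T, k ≤ K}, then Ineq(c, y; θ) holds for every c ∈ ℝ and every y ∈ ℝ; (ii) if each Y_t takes values only in the finite ordered set {ȳ_1 ≤ ȳ_2 ≤ … ≤ ȳ_K} ⊂ ℝ, and Ineq(c, y; θ) holds for every c ∈ ℝ and every y ∈ {ȳ_1, …, ȳ_{K−1}}, then Ineq(c, y; θ) holds for every c ∈ ℝ and every y ∈ ℝ.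 -/
open MeasureTheory in
lemma aux_triv {Ω : Type*} [MeasurableSpace Ω] (P : Measure Ω) [IsProbabilityMeasure P]
    {A : Set Ω} (B : Set Ω) (hA : A = ∅) :
    (P A).toReal ≤ 1 - (P B).toReal := by
  rw [hA, measure_empty]
  simp only [ENNReal.toReal_zero, sub_nonneg]
  exact ENNReal.toReal_le_of_le_ofReal zero_le_one (by simpa using prob_le_one)


open MeasureTheory Matrix

/-- The conditional moment inequality `Ineq(c, y; θ)` of the general model:
`max_t P(Y_t ≤ y ∧ I_t ≥ c) ≤ 1 − max_s P(Y_s > y ∧ I_s ≤ c)`, stated pairwise. -/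
def GenIneq {Ω : Type*} [MeasurableSpace Ω] (P : MeasureTheory.Measure Ω)
    {T : ℕ} (Y : Fin T → Ω → ℝ) (I : Fin T → Ω → ℝ) (c y : ℝ) : Prop :=
  ∀ t s : Fin T,
    (P {ω | Y t ω ≤ y ∧ c ≤ I t ω}).toReal
      ≤ 1 - (P {ω | y < Y s ω ∧ I s ω ≤ c}).toReal

/-- Reduction to finitely many restrictions in the general model.
(i) If each `X_t` takes values only in `{x̄_1, …, x̄_K}` and `Ineq(c, y; θ)` holds for
every `y ∈ ℝ` and every `c ∈ {z_t·β + x̄_k·γ}`, then it holds for every `c, y ∈ ℝ`.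
(ii) If each `Y_t` takes values only in the finite ordered set `{ȳ_1 ≤ … ≤ ȳ_K}` and
`Ineq(c, y; θ)` holds for every `c ∈ ℝ` and every `y ∈ {ȳ_1, …, ȳ_{K−1}}`, then it
holds for every `c, y ∈ ℝ`. -/
theorem stmt_7
    {Ω : Type*} [MeasurableSpace Ω] (P : Measure Ω) [IsProbabilityMeasure P]
    {T dz dx : ℕ}
    (z : Fin T → (Fin dz → ℝ))
    (Y : Fin T → Ω → ℝ) (X : Fin T → Ω → (Fin dx → ℝ))
    (hYm : ∀ t, Measurable (Y t)) (hXm : ∀ t, Measurable (X t))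
    (β : Fin dz → ℝ) (γ : Fin dx → ℝ) :
    -- (i) discrete endogenous covariates
    ((∀ (K : ℕ) (xbar : Fin K → (Fin dx → ℝ)),
        (∀ (t : Fin T) (ω : Ω), ∃ k, X t ω = xbar k) →
        (∀ (c y : ℝ), (∃ (t : Fin T) (k : Fin K), c = z t ⬝ᵥ β + xbar k ⬝ᵥ γ) →
          GenIneq P Y (fun t ω => z t ⬝ᵥ β + X t ω ⬝ᵥ γ) c y) →
        ∀ c y : ℝ, GenIneq P Y (fun t ω => z t ⬝ᵥ β + X t ω ⬝ᵥ γ) c y)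
      ∧
    -- (ii) discrete ordered outcomes
      (∀ (K : ℕ) (ybar : Fin K → ℝ), Monotone ybar →
        (∀ (t : Fin T) (ω : Ω), ∃ k, Y t ω = ybar k) →
        (∀ (c : ℝ) (k : Fin K), (k : ℕ) + 1 < K →
          GenIneq P Y (fun t ω => z t ⬝ᵥ β + X t ω ⬝ᵥ γ) c (ybar k)) →
        ∀ c y : ℝ, GenIneq P Y (fun t ω => z t ⬝ᵥ β + X t ω ⬝ᵥ γ) c y)) := by
  constructor
  · -- (i)
    intro K xbar hX hIneq c y t s
    classical
    set F : Finset ℝ :=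
      (Finset.univ : Finset (Fin T × Fin K)).image
        (fun p => z p.1 ⬝ᵥ β + xbar p.2 ⬝ᵥ γ) with hF
    have hval : ∀ (t : Fin T) (ω : Ω), (z t ⬝ᵥ β + X t ω ⬝ᵥ γ) ∈ F := by
      intro t ω
      obtain ⟨k, hk⟩ := hX t ω
      rw [hk]
      exact Finset.mem_image.mpr ⟨(t, k), Finset.mem_univ _, rfl⟩
    set G : Finset ℝ := F.filter (fun v => c ≤ v) with hG
    by_cases hGne : G.Nonempty
    · set c' := G.min' hGne with hc'
      have hc'mem : c' ∈ G := G.min'_mem hGne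
      have hcc' : c ≤ c' := (Finset.mem_filter.mp hc'mem).2
      have hc'F : c' ∈ F := (Finset.mem_filter.mp hc'mem).1
      obtain ⟨p, -, hp⟩ := Finset.mem_image.mp hc'F
      have hiff : ∀ v ∈ F, (c ≤ v ↔ c' ≤ v) := by
        intro v hv
        constructor
        · intro h
          exact G.min'_le v (Finset.mem_filter.mpr ⟨hv, h⟩)
        · intro h
          exact le_trans hcc' h
      have hset1 : {ω | Y t ω ≤ y ∧ c ≤ z t ⬝ᵥ β + X t ω ⬝ᵥ γ}
          = {ω | Y t ω ≤ y ∧ c' ≤ z t ⬝ᵥ β + X t ω ⬝ᵥ γ} := by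
        ext ω
        simp only [Set.mem_setOf_eq]
        exact and_congr_right fun _ => hiff _ (hval t ω)
      have hsub : {ω | y < Y s ω ∧ z s ⬝ᵥ β + X s ω ⬝ᵥ γ ≤ c}
          ⊆ {ω | y < Y s ω ∧ z s ⬝ᵥ β + X s ω ⬝ᵥ γ ≤ c'} := by
        intro ω hω
        exact ⟨hω.1, le_trans hω.2 hcc'⟩
      have hmain := hIneq c' y ⟨p.1, p.2, hp.symm⟩ t s
      have hmono : (P {ω | y < Y s ω ∧ z s ⬝ᵥ β + X s ω ⬝ᵥ γ ≤ c}).toReal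
          ≤ (P {ω | y < Y s ω ∧ z s ⬝ᵥ β + X s ω ⬝ᵥ γ ≤ c'}).toReal :=
        ENNReal.toReal_mono (measure_ne_top P _) (measure_mono hsub)
      calc (P {ω | Y t ω ≤ y ∧ c ≤ z t ⬝ᵥ β + X t ω ⬝ᵥ γ}).toReal
          = (P {ω | Y t ω ≤ y ∧ c' ≤ z t ⬝ᵥ β + X t ω ⬝ᵥ γ}).toReal := by rw [hset1]
        _ ≤ 1 - (P {ω | y < Y s ω ∧ z s ⬝ᵥ β + X s ω ⬝ᵥ γ ≤ c'}).toReal := hmain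
        _ ≤ 1 - (P {ω | y < Y s ω ∧ z s ⬝ᵥ β + X s ω ⬝ᵥ γ ≤ c}).toReal := by linarith
    · apply aux_triv
      ext ω
      simp only [Set.mem_setOf_eq, Set.mem_empty_iff_false, iff_false]
      rintro ⟨-, hc⟩
      exact hGne ⟨_, Finset.mem_filter.mpr ⟨hval t ω, hc⟩⟩
  · -- (ii)
    intro K ybar hmono hY hIneq c y t s
    classical
    set G : Finset (Fin K) := Finset.univ.filter (fun k => ybar k ≤ y) with hG
    by_cases hGne : G.Nonempty
    · set k := G.max' hGne with hk
      have hkmem : k ∈ G := G.max'_mem hGne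
      have hky : ybar k ≤ y := (Finset.mem_filter.mp hkmem).2
      have hmax : ∀ j : Fin K, ybar j ≤ y → j ≤ k := fun j hj =>
        G.le_max' j (Finset.mem_filter.mpr ⟨Finset.mem_univ _, hj⟩)
      by_cases hall : ∀ j : Fin K, ybar j ≤ y
      · -- all values ≤ y : right-hand set empty
        have hempty : {ω | y < Y s ω ∧ z s ⬝ᵥ β + X s ω ⬝ᵥ γ ≤ c} = ∅ := by
          ext ω
          simp only [Set.mem_setOf_eq, Set.mem_empty_iff_false, iff_false]
          rintro ⟨hy, -⟩
          obtain ⟨j, hj⟩ := hY s ω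
          rw [hj] at hy
          exact absurd (hall j) (not_le.mpr hy)
        rw [hempty, measure_empty]
        simp only [ENNReal.toReal_zero, sub_zero]
        exact ENNReal.toReal_le_of_le_ofReal zero_le_one (by simpa using prob_le_one)
      · push_neg at hall
        obtain ⟨j₀, hj₀⟩ := hall
        have hkK : (k : ℕ) + 1 < K := by
          by_contra h
          push_neg at h
          have hjk : j₀ ≤ k := by
            have h1 := j₀.isLt
            exact Fin.le_def.mpr (by omega)
          exact absurd (le_trans (hmono hjk) hky) (not_le.mpr hj₀)
        have hiff1 : ∀ v : Fin K, (ybar v ≤ y ↔ ybar v ≤ ybar k) := by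
          intro v
          constructor
          · intro h
            exact hmono (hmax v h)
          · intro h
            exact le_trans h hky
        have hset1 : {ω | Y t ω ≤ y ∧ c ≤ z t ⬝ᵥ β + X t ω ⬝ᵥ γ}
            = {ω | Y t ω ≤ ybar k ∧ c ≤ z t ⬝ᵥ β + X t ω ⬝ᵥ γ} := by
          ext ω
          obtain ⟨j, hj⟩ := hY t ω
          simp only [Set.mem_setOf_eq, hj]
          exact and_congr_left fun _ => hiff1 j
        have hset2 : {ω | y < Y s ω ∧ z s ⬝ᵥ β + X s ω ⬝ᵥ γ ≤ c}
            = {ω | ybar k < Y s ω ∧ z s ⬝ᵥ β + X s ω ⬝ᵥ γ ≤ c} := by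
          ext ω
          obtain ⟨j, hj⟩ := hY s ω
          simp only [Set.mem_setOf_eq, hj]
          constructor
          · rintro ⟨h1, h2⟩
            exact ⟨lt_of_le_of_lt hky h1, h2⟩
          · rintro ⟨h1, h2⟩
            refine ⟨?_, h2⟩
            by_contra h
            push_neg at h
            exact absurd (hmono (hmax j h)) (not_le.mpr h1)
        rw [hset1, hset2]
        exact hIneq c k hkK t s
    · apply aux_triv
      ext ω
      simp only [Set.mem_setOf_eq, Set.mem_empty_iff_false, iff_false]
      rintro ⟨hy, -⟩
      obtain ⟨j, hj⟩ := hY t ω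
      rw [hj] at hy
      exact hGne ⟨j, Finset.mem_filter.mpr ⟨Finset.mem_univ _, hy⟩⟩
end

section
/- In the panel ordered response model, under partial stationarity of the composite errors, the true parameter θ₀ satisfies, for every c ∈ ℝ and all t, s ∈ {1, …, T}: Σ_{j=1}^{J} P( Y_t = y_j and b_{j+1} ≤ W_t·θ₀ + c ) ≤ 1 − Σ_{j=1}^{J} P( Y_s = y_j and b_j ≥ W_s·θ₀ + c ), where the inequalities b_{j+1} ≤ W_t·θ₀ + c and b_j ≥ W_s·θ₀ + c are interpreted in the extended reals (so the j = J term on the left and the j = 1 term on the right vanish). Hence θ₀ belongs to the identified set Θ_{I,order} defined by these inequalities. -/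
open MeasureTheory Matrix

/-- Any real number lies in exactly one of the intervals `(b j.castSucc, b j.succ]`. -/
lemma exists_interval_stmt8 {J : ℕ} (b : Fin (J + 1) → EReal) (hb : Monotone b)
    (hb_bot : b 0 = ⊥) (hb_top : b (Fin.last J) = ⊤) (x : ℝ) :
    ∃ j : Fin J, b j.castSucc < (x : EReal) ∧ (x : EReal) ≤ b j.succ := by
  have hJpos : 0 < J := by
    by_contra h
    have hJ0 : J = 0 := by omega
    subst hJ0
    have : (0 : Fin 1) = Fin.last 0 := rfl
    rw [this, hb_top] at hb_bot
    exact absurd hb_bot (by simp)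
  classical
  set S : Finset (Fin (J + 1)) := Finset.univ.filter (fun i => b i < (x : EReal)) with hS
  have h0S : (0 : Fin (J + 1)) ∈ S := by
    simp [hS, hb_bot]
  have hne : S.Nonempty := ⟨0, h0S⟩
  set i := S.max' hne with hi
  have hiS : i ∈ S := S.max'_mem hne
  have hib : b i < (x : EReal) := by
    simpa [hS] using hiS
  have hilast : i ≠ Fin.last J := by
    intro h
    rw [h, hb_top] at hib
    exact absurd hib (by simp)
  have hival : i.val < J := by
    have := i.isLt
    have : i.val ≠ J := fun h => hilast (Fin.ext h)
    omega
  refine ⟨⟨i.val, hival⟩, ?_, ?_⟩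
  · have : (⟨i.val, hival⟩ : Fin J).castSucc = i := by
      apply Fin.ext; rfl
    rw [this]; exact hib
  · by_contra hlt
    push_neg at hlt
    have hmem : (⟨i.val, hival⟩ : Fin J).succ ∈ S := by
      simp only [S, Finset.mem_filter, Finset.mem_univ, true_and]
      exact hlt
    have := S.le_max' _ hmem
    rw [← hi] at this
    have : ((⟨i.val, hival⟩ : Fin J).succ : Fin (J + 1)).val ≤ i.val := this
    simp [Fin.val_succ] at this

/-- Key bound: a family of sets each contained in (interval j) ∩ C has total
measure at most that of C. -/
lemma key_stmt8 {Ω : Type*} [MeasurableSpace Ω] (P : Measure Ω) [IsProbabilityMeasure P]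
    {J : ℕ} (b : Fin (J + 1) → EReal) (hb : Monotone b)
    (e : Ω → EReal) (he : Measurable e)
    (C : Set Ω) (hC : MeasurableSet C)
    (A : Fin J → Set Ω)
    (hA : ∀ j, A j ⊆ ({ω | b j.castSucc < e ω ∧ e ω ≤ b j.succ} ∩ C)) :
    ∑ j : Fin J, (P (A j)).toReal ≤ (P C).toReal := by
  classical
  set B : Fin J → Set Ω := fun j => ({ω | b j.castSucc < e ω ∧ e ω ≤ b j.succ} ∩ C) with hB
  have hBm : ∀ j, MeasurableSet (B j) := fun j =>
    ((measurableSet_lt measurable_const he).inter (measurableSet_le he measurable_const)).inter hC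
  have hkey : ∀ i j : Fin J, i < j → Disjoint (B i) (B j) := by
    intro i j h
    refine Set.disjoint_left.mpr fun ω hωi hωj => ?_
    have h1 : e ω ≤ b i.succ := hωi.1.2
    have h2 : b j.castSucc < e ω := hωj.1.1
    have hle : i.succ ≤ j.castSucc := by
      simp only [Fin.le_def, Fin.val_succ, Fin.coe_castSucc]
      have := Fin.lt_def.mp h
      omega
    exact absurd (h1.trans (hb hle)) (not_le.mpr h2)
  have hdisj : ((Finset.univ : Finset (Fin J)) : Set (Fin J)).PairwiseDisjoint B := by
    intro i _ j _ hij
    rcases hij.lt_or_gt with h | h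
    · exact hkey i j h
    · exact (hkey j i h).symm
  have hsum : ∑ j : Fin J, P (B j) = P (⋃ j, B j) := by
    rw [← measure_biUnion_finset hdisj (fun j _ => hBm j)]
    congr 1
    simp
  calc ∑ j : Fin J, (P (A j)).toReal
      ≤ ∑ j : Fin J, (P (B j)).toReal :=
        Finset.sum_le_sum fun j _ =>
          ENNReal.toReal_mono (measure_ne_top P _) (measure_mono (hA j))
    _ = (∑ j : Fin J, P (B j)).toReal :=
        (ENNReal.toReal_sum (fun j _ => measure_ne_top P _)).symm
    _ = (P (⋃ j, B j)).toReal := by rw [hsum]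
    _ ≤ (P C).toReal :=
        ENNReal.toReal_mono (measure_ne_top P _)
          (measure_mono (Set.iUnion_subset fun j => Set.inter_subset_right))

/-- In the panel ordered response model with latent outcome
`Y*_t = W_t·θ₀ + v_t`, ordered values `y_1 < … < y_J`, and extended-real thresholds
`b_1 = −∞ ≤ b_2 ≤ … ≤ b_J ≤ b_{J+1} = +∞` (with `b_j` real for `2 ≤ j ≤ J`), under
partial stationarity of the composite errors `v_t`, the true parameter `θ₀` satisfies
for every `c ∈ ℝ` and all `t, s`:
`Σ_j P(Y_t = y_j ∧ b_{j+1} ≤ W_t·θ₀ + c) ≤ 1 − Σ_j P(Y_s = y_j ∧ b_j ≥ W_s·θ₀ + c)`,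
where the threshold inequalities are taken in the extended reals.
(Here `b : Fin (J+1) → EReal` lists `b_1, …, b_{J+1}`, so that outcome `j : Fin J`
corresponds to the interval `(b j.castSucc, b j.succ]`.) -/
theorem stmt_8
    {Ω : Type*} [MeasurableSpace Ω] (P : Measure Ω) [IsProbabilityMeasure P]
    {T dw J : ℕ} (hJ : 2 ≤ J)
    (yv : Fin J → ℝ) (hyv : StrictMono yv)
    (b : Fin (J + 1) → EReal) (hb : Monotone b)
    (hb_bot : b 0 = ⊥) (hb_top : b (Fin.last J) = ⊤)
    (hb_mid : ∀ j : Fin (J + 1), j ≠ 0 → j ≠ Fin.last J → ∃ r : ℝ, b j = (r : EReal))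
    (W : Fin T → Ω → (Fin dw → ℝ)) (v : Fin T → Ω → ℝ)
    (hW : ∀ t, Measurable (W t)) (hv : ∀ t, Measurable (v t))
    (θ₀ : Fin dw → ℝ)
    (Y : Fin T → Ω → ℝ)
    (hY : ∀ (t : Fin T) (ω : Ω) (j : Fin J),
      (b j.castSucc < ((W t ω ⬝ᵥ θ₀ + v t ω : ℝ) : EReal) ∧
        ((W t ω ⬝ᵥ θ₀ + v t ω : ℝ) : EReal) ≤ b j.succ) → Y t ω = yv j)
    (hstat : ∀ t s : Fin T, P.map (v t) = P.map (v s)) :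
    ∀ (c : ℝ) (t s : Fin T),
      (∑ j : Fin J,
          (P {ω | Y t ω = yv j ∧ b j.succ ≤ ((W t ω ⬝ᵥ θ₀ + c : ℝ) : EReal)}).toReal)
        ≤ 1 - ∑ j : Fin J,
            (P {ω | Y s ω = yv j ∧ ((W s ω ⬝ᵥ θ₀ + c : ℝ) : EReal) ≤ b j.castSucc}).toReal := by
  intro c t s
  -- latent index: for each ω, the outcome j(ω) with latent in interval j
  have hlatent : ∀ (r : Fin T) (ω : Ω) (j : Fin J), Y r ω = yv j →
      b j.castSucc < ((W r ω ⬝ᵥ θ₀ + v r ω : ℝ) : EReal) ∧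
        ((W r ω ⬝ᵥ θ₀ + v r ω : ℝ) : EReal) ≤ b j.succ := by
    intro r ω j hYj
    obtain ⟨j', hj'⟩ := exists_interval_stmt8 b hb hb_bot hb_top (W r ω ⬝ᵥ θ₀ + v r ω)
    have : Y r ω = yv j' := hY r ω j' hj'
    have : j = j' := hyv.injective (by rw [← hYj, this])
    rwa [this]
  -- measurability of the latent EReal-valued function
  have hmeas : ∀ r : Fin T, Measurable (fun ω => ((W r ω ⬝ᵥ θ₀ + v r ω : ℝ) : EReal)) := by
    intro r
    apply Measurable.comp measurable_coe_real_ereal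
    apply Measurable.add ?_ (hv r)
    simp only [dotProduct]
    exact Finset.measurable_sum _ fun i _ => ((measurable_pi_apply i).comp (hW r)).mul_const _
  -- LEFT: sum ≤ P {v t ≤ c}
  have hleft : ∑ j : Fin J,
      (P {ω | Y t ω = yv j ∧ b j.succ ≤ ((W t ω ⬝ᵥ θ₀ + c : ℝ) : EReal)}).toReal
      ≤ (P {ω | v t ω ≤ c}).toReal := by
    apply key_stmt8 P b hb _ (hmeas t) _ (measurableSet_le (hv t) measurable_const)
    intro j ω hω
    obtain ⟨hYj, hbc⟩ := hω
    have hint := hlatent t ω j hYj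
    refine ⟨hint, ?_⟩
    have : ((W t ω ⬝ᵥ θ₀ + v t ω : ℝ) : EReal) ≤ ((W t ω ⬝ᵥ θ₀ + c : ℝ) : EReal) :=
      hint.2.trans hbc
    have := EReal.coe_le_coe_iff.mp this
    simp only [Set.mem_setOf_eq]
    linarith
  -- RIGHT: sum ≤ P {c < v s}
  have hright : ∑ j : Fin J,
      (P {ω | Y s ω = yv j ∧ ((W s ω ⬝ᵥ θ₀ + c : ℝ) : EReal) ≤ b j.castSucc}).toReal
      ≤ (P {ω | c < v s ω}).toReal := by
    apply key_stmt8 P b hb _ (hmeas s) _ (measurableSet_lt measurable_const (hv s))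
    intro j ω hω
    obtain ⟨hYj, hbc⟩ := hω
    have hint := hlatent s ω j hYj
    refine ⟨hint, ?_⟩
    have : ((W s ω ⬝ᵥ θ₀ + c : ℝ) : EReal) < ((W s ω ⬝ᵥ θ₀ + v s ω : ℝ) : EReal) :=
      lt_of_le_of_lt hbc hint.1
    have := EReal.coe_lt_coe_iff.mp this
    simp only [Set.mem_setOf_eq]
    linarith
  -- stationarity
  have hstat' : P {ω | v t ω ≤ c} = P {ω | v s ω ≤ c} := by
    have h1 : P {ω | v t ω ≤ c} = P.map (v t) (Set.Iic c) := by
      rw [Measure.map_apply (hv t) measurableSet_Iic]; rfl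
    have h2 : P {ω | v s ω ≤ c} = P.map (v s) (Set.Iic c) := by
      rw [Measure.map_apply (hv s) measurableSet_Iic]; rfl
    rw [h1, h2, hstat t s]
  -- complement
  have hcompl : (P {ω | v s ω ≤ c}).toReal + (P {ω | c < v s ω}).toReal = 1 := by
    have hms : MeasurableSet {ω | v s ω ≤ c} := measurableSet_le (hv s) measurable_const
    have hc : {ω | v s ω ≤ c}ᶜ = {ω | c < v s ω} := by
      ext ω; simp [not_le]
    have := measure_add_measure_compl (μ := P) hms
    rw [hc] at this
    have := congrArg ENNReal.toReal this
    rwa [ENNReal.toReal_add (measure_ne_top P _) (measure_ne_top P _), measure_univ,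
      ENNReal.toReal_one] at this
  have : (P {ω | v t ω ≤ c}).toReal = (P {ω | v s ω ≤ c}).toReal := by rw [hstat']
  linarith
end

section
/- In the panel multinomial choice model under partial stationarity of the composite error vectors, the true parameter θ₀ satisfies: for every nonempty proper subset K ⊂ 𝒥, every family of reals (c_{jk})_{j∈K, k∈𝒥∖K}, and all t, s ∈ {1, …, T}: P( Y^K_t = 1 and (W_{jt} − W_{kt})·θ₀ ≤ c_{jk} for all j ∈ K and k ∈ 𝒥∖K ) ≤ 1 − P( Y^K_s = 0 and (W_{js} − W_{ks})·θ₀ ≥ c_{jk} for all j ∈ K and k ∈ 𝒥∖K ). Hence θ₀ belongs to the identified set Θ_{I,mul} defined by these inequalities. -/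
open MeasureTheory Matrix

/-- In the panel multinomial choice model with latent utilities
`u_{jt} = W_{jt}·θ₀ + v_{jt}` over alternatives `𝒥 = {0, …, J}`, under partial
stationarity of the composite error vectors `(v_{jt})_{j∈𝒥}`, the true parameter `θ₀`
satisfies: for every nonempty proper subset `K ⊂ 𝒥`, every family of reals
`(c_{jk})`, and all periods `t, s`:
`P(Y^K_t = 1 ∧ (W_{jt}−W_{kt})·θ₀ ≤ c_{jk} ∀ j∈K, k∉K)
  ≤ 1 − P(Y^K_s = 0 ∧ (W_{js}−W_{ks})·θ₀ ≥ c_{jk} ∀ j∈K, k∉K)`,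
where `Y^K_t = 1{∃ j ∈ K, ∀ k ∉ K, u_{jt} ≥ u_{kt}}`. -/
theorem stmt_10
    {Ω : Type*} [MeasurableSpace Ω] (P : Measure Ω) [IsProbabilityMeasure P]
    {T dw J : ℕ}
    (W : Fin (J + 1) → Fin T → Ω → (Fin dw → ℝ)) (v : Fin (J + 1) → Fin T → Ω → ℝ)
    (hW : ∀ j t, Measurable (W j t)) (hv : ∀ j t, Measurable (v j t))
    (θ₀ : Fin dw → ℝ)
    (hstat : ∀ t s : Fin T,
      P.map (fun ω (j : Fin (J + 1)) => v j t ω)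
        = P.map (fun ω (j : Fin (J + 1)) => v j s ω)) :
    ∀ K : Finset (Fin (J + 1)), K.Nonempty → K ≠ Finset.univ →
    ∀ (c : Fin (J + 1) → Fin (J + 1) → ℝ) (t s : Fin T),
      (P {ω | (∃ j ∈ K, ∀ k ∉ K,
            W k t ω ⬝ᵥ θ₀ + v k t ω ≤ W j t ω ⬝ᵥ θ₀ + v j t ω) ∧
          ∀ j ∈ K, ∀ k ∉ K, (W j t ω - W k t ω) ⬝ᵥ θ₀ ≤ c j k}).toReal
        ≤ 1 - (P {ω | ¬(∃ j ∈ K, ∀ k ∉ K,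
              W k s ω ⬝ᵥ θ₀ + v k s ω ≤ W j s ω ⬝ᵥ θ₀ + v j s ω) ∧
            ∀ j ∈ K, ∀ k ∉ K, c j k ≤ (W j s ω - W k s ω) ⬝ᵥ θ₀}).toReal := by
  intro K hKne hKuniv c t s
  -- the "error" event in function space
  set S : Set (Fin (J + 1) → ℝ) :=
    {f | ∃ j ∈ K, ∀ k ∉ K, f k ≤ f j + c j k} with hS
  have hSmeas : MeasurableSet S := by
    have : S = ⋃ j ∈ K, ⋂ k, ⋂ (_ : k ∉ K), {f : Fin (J + 1) → ℝ | f k ≤ f j + c j k} := by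
      ext f; simp [S]
    rw [this]
    refine MeasurableSet.biUnion K.countable_toSet fun j _ => ?_
    refine MeasurableSet.iInter fun k => MeasurableSet.iInter fun _ => ?_
    exact measurableSet_le (measurable_pi_apply k) ((measurable_pi_apply j).add_const _)
  have hmap : ∀ r : Fin T, Measurable (fun ω (j : Fin (J + 1)) => v j r ω) :=
    fun r => measurable_pi_lambda _ fun j => hv j r
  set Et : Set Ω := {ω | ∃ j ∈ K, ∀ k ∉ K, v k t ω ≤ v j t ω + c j k} with hEt
  set Es : Set Ω := {ω | ∃ j ∈ K, ∀ k ∉ K, v k s ω ≤ v j s ω + c j k} with hEs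
  have hEtpre : Et = (fun ω (j : Fin (J + 1)) => v j t ω) ⁻¹' S := rfl
  have hEspre : Es = (fun ω (j : Fin (J + 1)) => v j s ω) ⁻¹' S := rfl
  have hEq : P Et = P Es := by
    rw [hEtpre, hEspre, ← Measure.map_apply (hmap t) hSmeas,
      ← Measure.map_apply (hmap s) hSmeas, hstat t s]
  have hEsMeas : MeasurableSet Es := by
    rw [hEspre]; exact (hmap s) hSmeas
  -- A ⊆ Et
  have hA : {ω | (∃ j ∈ K, ∀ k ∉ K,
        W k t ω ⬝ᵥ θ₀ + v k t ω ≤ W j t ω ⬝ᵥ θ₀ + v j t ω) ∧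
      ∀ j ∈ K, ∀ k ∉ K, (W j t ω - W k t ω) ⬝ᵥ θ₀ ≤ c j k} ⊆ Et := by
    rintro ω ⟨⟨j, hj, hu⟩, hc⟩
    refine ⟨j, hj, fun k hk => ?_⟩
    have h1 := hu k hk
    have h2 := hc j hj k hk
    rw [sub_dotProduct] at h2
    linarith
  -- B ⊆ Esᶜ
  have hB : {ω | ¬(∃ j ∈ K, ∀ k ∉ K,
        W k s ω ⬝ᵥ θ₀ + v k s ω ≤ W j s ω ⬝ᵥ θ₀ + v j s ω) ∧
      ∀ j ∈ K, ∀ k ∉ K, c j k ≤ (W j s ω - W k s ω) ⬝ᵥ θ₀} ⊆ Esᶜ := by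
    rintro ω ⟨hno, hc⟩ ⟨j, hj, hv'⟩
    refine hno ⟨j, hj, fun k hk => ?_⟩
    have h1 := hv' k hk
    have h2 := hc j hj k hk
    rw [sub_dotProduct] at h2
    linarith
  have h1 : (P {ω | (∃ j ∈ K, ∀ k ∉ K,
        W k t ω ⬝ᵥ θ₀ + v k t ω ≤ W j t ω ⬝ᵥ θ₀ + v j t ω) ∧
      ∀ j ∈ K, ∀ k ∉ K, (W j t ω - W k t ω) ⬝ᵥ θ₀ ≤ c j k}).toReal ≤ (P Es).toReal := by
    rw [← hEq]
    exact ENNReal.toReal_mono (measure_ne_top _ _) (measure_mono hA)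
  have h2 : (P {ω | ¬(∃ j ∈ K, ∀ k ∉ K,
        W k s ω ⬝ᵥ θ₀ + v k s ω ≤ W j s ω ⬝ᵥ θ₀ + v j s ω) ∧
      ∀ j ∈ K, ∀ k ∉ K, c j k ≤ (W j s ω - W k s ω) ⬝ᵥ θ₀}).toReal ≤ (P Esᶜ).toReal :=
    ENNReal.toReal_mono (measure_ne_top _ _) (measure_mono hB)
  have hcompl : (P Esᶜ).toReal = 1 - (P Es).toReal := by
    rw [measure_compl hEsMeas (measure_ne_top _ _), measure_univ,
      ENNReal.toReal_sub_of_le prob_le_one ENNReal.one_ne_top, ENNReal.toReal_one]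
  linarith [hcompl ▸ h2, h1]
end

section
/- Specialization to the static multinomial restriction of Pakes and Porter: in the multinomial choice model with deterministic covariate values w_{jt} ∈ ℝ^{d_w} (i.e. conditioning on all covariates, full stationarity of the composite error vectors), for every nonempty proper subset K ⊂ 𝒥 and any two periods s, t: if (w_{js} − w_{ks})·θ₀ ≤ (w_{jt} − w_{kt})·θ₀ for all j ∈ K and k ∈ 𝒥∖K, then P(Y^K_s = 1) ≤ P(Y^K_t = 1). -/
open MeasureTheory Matrix

/-- Specialization to the static multinomial restriction of Pakes and
Porter. With deterministic covariate values `w_{jt}` (conditioning on all covariates)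
and full stationarity of the composite error vectors `(v_{jt})_{j∈𝒥}`, for every
nonempty proper subset `K ⊂ 𝒥` and any two periods `s, t`: if
`(w_{js} − w_{ks})·θ₀ ≤ (w_{jt} − w_{kt})·θ₀` for all `j ∈ K` and `k ∉ K`, then
`P(Y^K_s = 1) ≤ P(Y^K_t = 1)`. -/
theorem stmt_11
    {Ω : Type*} [MeasurableSpace Ω] (P : Measure Ω) [IsProbabilityMeasure P]
    {T dw J : ℕ}
    (w : Fin (J + 1) → Fin T → (Fin dw → ℝ)) (v : Fin (J + 1) → Fin T → Ω → ℝ)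
    (hv : ∀ j t, Measurable (v j t))
    (θ₀ : Fin dw → ℝ)
    (hstat : ∀ t s : Fin T,
      P.map (fun ω (j : Fin (J + 1)) => v j t ω)
        = P.map (fun ω (j : Fin (J + 1)) => v j s ω)) :
    ∀ K : Finset (Fin (J + 1)), K.Nonempty → K ≠ Finset.univ →
    ∀ s t : Fin T,
      (∀ j ∈ K, ∀ k ∉ K, (w j s - w k s) ⬝ᵥ θ₀ ≤ (w j t - w k t) ⬝ᵥ θ₀) →
      P {ω | ∃ j ∈ K, ∀ k ∉ K, w k s ⬝ᵥ θ₀ + v k s ω ≤ w j s ⬝ᵥ θ₀ + v j s ω}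
        ≤ P {ω | ∃ j ∈ K, ∀ k ∉ K, w k t ⬝ᵥ θ₀ + v k t ω ≤ w j t ⬝ᵥ θ₀ + v j t ω} := by
  intro K hKne hKuniv s t hmono
  set A : Set (Fin (J+1) → ℝ) :=
    {x | ∃ j ∈ K, ∀ k ∉ K, w k t ⬝ᵥ θ₀ + x k ≤ w j t ⬝ᵥ θ₀ + x j} with hA
  have hAmeas : MeasurableSet A := by
    have : A = ⋃ j ∈ K, ⋂ k ∈ Kᶜ,
        {x : Fin (J+1) → ℝ | w k t ⬝ᵥ θ₀ + x k ≤ w j t ⬝ᵥ θ₀ + x j} := by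
      ext x; simp [hA, Set.mem_iUnion, Set.mem_iInter]
    rw [this]
    exact MeasurableSet.biUnion K.countable_toSet fun j _ =>
      MeasurableSet.biInter (Kᶜ : Finset _).countable_toSet fun k _ =>
        measurableSet_le (by fun_prop) (by fun_prop)
  have hVs : Measurable (fun ω (j : Fin (J+1)) => v j s ω) :=
    measurable_pi_lambda _ fun j => hv j s
  have hVt : Measurable (fun ω (j : Fin (J+1)) => v j t ω) :=
    measurable_pi_lambda _ fun j => hv j t
  have hsub : P {ω | ∃ j ∈ K, ∀ k ∉ K,
        w k s ⬝ᵥ θ₀ + v k s ω ≤ w j s ⬝ᵥ θ₀ + v j s ω}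
      ≤ P ((fun ω (j : Fin (J+1)) => v j s ω) ⁻¹' A) := by
    apply measure_mono
    intro ω hω
    obtain ⟨j, hj, hjk⟩ := hω
    refine ⟨j, hj, fun k hk => ?_⟩
    have h1 := hjk k hk
    have h2 := hmono j hj k hk
    simp only [sub_dotProduct] at h2
    dsimp only
    linarith
  refine hsub.trans ?_
  have : P ((fun ω (j : Fin (J+1)) => v j s ω) ⁻¹' A)
      = P ((fun ω (j : Fin (J+1)) => v j t ω) ⁻¹' A) := by
    rw [← Measure.map_apply hVs hAmeas, ← Measure.map_apply hVt hAmeas, hstat s t]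
  rw [this]
  exact le_of_eq rfl
end

section
/- In the panel censored outcome model Y_t = max(W_t·θ₀ + u_t, 0), if the composite errors u_1, …, u_T all have the same distribution (partial stationarity conditional on z), then for every c ∈ ℝ and all t, s ∈ {1, …, T}: P( Y_t ≤ W_t·θ₀ − c ) ≤ P( 0 < Y_s ≤ W_s·θ₀ − c ) + P( Y_s = 0 ). Consequently max_{t≤T} P(Y_t ≤ W_t·θ₀ − c) ≤ min_{s≤T} { P(0 < Y_s ≤ W_s·θ₀ − c) + P(Y_s = 0) } for every c, and θ₀ belongs to the identified set for the censored model. -/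
open MeasureTheory Matrix

/-- In the panel censored outcome model `Y_t = max(W_t·θ₀ + u_t, 0)`,
if the composite errors `u_1, …, u_T` all have the same distribution (partial
stationarity conditional on `z`), then for every `c ∈ ℝ` and all `t, s`:
`P(Y_t ≤ W_t·θ₀ − c) ≤ P(0 < Y_s ≤ W_s·θ₀ − c) + P(Y_s = 0)`. -/
theorem stmt_12
    {Ω : Type*} [MeasurableSpace Ω] (P : Measure Ω) [IsProbabilityMeasure P]
    {T dw : ℕ}
    (W : Fin T → Ω → (Fin dw → ℝ)) (u : Fin T → Ω → ℝ)
    (hW : ∀ t, Measurable (W t)) (hu : ∀ t, Measurable (u t))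
    (θ₀ : Fin dw → ℝ)
    (Y : Fin T → Ω → ℝ)
    (hY : ∀ t ω, Y t ω = max (W t ω ⬝ᵥ θ₀ + u t ω) 0)
    (hstat : ∀ t s : Fin T, P.map (u t) = P.map (u s)) :
    ∀ (c : ℝ) (t s : Fin T),
      (P {ω | Y t ω ≤ W t ω ⬝ᵥ θ₀ - c}).toReal
        ≤ (P {ω | 0 < Y s ω ∧ Y s ω ≤ W s ω ⬝ᵥ θ₀ - c}).toReal
          + (P {ω | Y s ω = 0}).toReal := by
  intro c t s
  -- abbreviations
  have h1 : {ω | Y t ω ≤ W t ω ⬝ᵥ θ₀ - c} ⊆ {ω | u t ω ≤ -c} := by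
    intro ω hω
    simp only [Set.mem_setOf_eq, hY t ω] at hω ⊢
    have h0 : W t ω ⬝ᵥ θ₀ + u t ω ≤ W t ω ⬝ᵥ θ₀ - c := le_trans (le_max_left _ _) hω
    linarith
  have h2 : {ω | u s ω ≤ -c} ⊆
      {ω | 0 < Y s ω ∧ Y s ω ≤ W s ω ⬝ᵥ θ₀ - c} ∪ {ω | Y s ω = 0} := by
    intro ω hω
    simp only [Set.mem_setOf_eq] at hω
    by_cases hc : W s ω ⬝ᵥ θ₀ + u s ω ≤ 0
    · right
      simp only [Set.mem_setOf_eq, hY s ω]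
      exact max_eq_right hc
    · left
      push_neg at hc
      have hYeq : Y s ω = W s ω ⬝ᵥ θ₀ + u s ω := by
        rw [hY s ω]; exact max_eq_left hc.le
      constructor
      · rw [hYeq]; exact hc
      · rw [hYeq]; linarith
  have hmap : P {ω | u t ω ≤ -c} = P {ω | u s ω ≤ -c} := by
    have ht : P {ω | u t ω ≤ -c} = (P.map (u t)) (Set.Iic (-c)) := by
      rw [Measure.map_apply (hu t) measurableSet_Iic]; rfl
    have hs : P {ω | u s ω ≤ -c} = (P.map (u s)) (Set.Iic (-c)) := by
      rw [Measure.map_apply (hu s) measurableSet_Iic]; rfl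
    rw [ht, hs, hstat t s]
  have key : P {ω | Y t ω ≤ W t ω ⬝ᵥ θ₀ - c}
      ≤ P {ω | 0 < Y s ω ∧ Y s ω ≤ W s ω ⬝ᵥ θ₀ - c} + P {ω | Y s ω = 0} := by
    calc P {ω | Y t ω ≤ W t ω ⬝ᵥ θ₀ - c} ≤ P {ω | u t ω ≤ -c} := measure_mono h1
      _ = P {ω | u s ω ≤ -c} := hmap
      _ ≤ P ({ω | 0 < Y s ω ∧ Y s ω ≤ W s ω ⬝ᵥ θ₀ - c} ∪ {ω | Y s ω = 0}) :=
          measure_mono h2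
      _ ≤ _ := measure_union_le _ _
  have hfin : ∀ S : Set Ω, P S ≠ ⊤ := fun S => measure_ne_top P S
  rw [← ENNReal.toReal_add (hfin _) (hfin _)]
  exact ENNReal.toReal_mono (ENNReal.add_ne_top.mpr ⟨hfin _, hfin _⟩) key
end
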